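/- arXiv:1211.4958 — 13 statements merged into one kernel-verified Lean document; each statement's English description precedes it below -/
import Mathlib

section
/- Let n ∈ ℕ and let S^n = {x ∈ EuclideanSpace ℝ (Fin (n+1)) : ‖x‖ = 1} carry the spherical distance d(x,y) = arccos ⟪x,y⟫. Let C ⊆ S^n be nonempty, closed, and spherically convex (for all u, v ∈ C with d(u,v) < π, every z ∈ S^n with d(u,z) + d(z,v) = d(u,v) belongs to C). Let x, y ∈ S^n with infimum distances to C satisfying d(x,C) < π/2 and d(y,C) < π/2, let p, q ∈ C satisfy d(x,p) ≤ d(x,c) and d(y,q) ≤ d(y,c) for all c ∈ C, and let x′, y′ ∈ S^n satisfy d(x,p) = d(p,x′), d(x,x′) = d(x,p) + d(p,x′), d(y,q) = d(q,y′), and d(y,y′) = d(y,q) + d(q,y′) (so x′ and y′ are reflections of x and y with respect to C). Then d(x′,y′) ≤ d(x,y). -/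
open Real

/-- The spherical (angular) distance on the unit sphere of a Euclidean space:
`d(x,y) = arccos ⟪x,y⟫`. -/
noncomputable def sphericalDist {n : ℕ} (u v : EuclideanSpace ℝ (Fin (n + 1))) : ℝ :=
  Real.arccos (inner ℝ u v)

section SphereReflAux

local notation "⟪" a ", " b "⟫" => (inner ℝ a b : ℝ)

private lemma arccos_anti' {s t : ℝ} (h : s ≤ t) : arccos t ≤ arccos s := by
  rw [arccos_eq_pi_div_two_sub_arcsin, arccos_eq_pi_div_two_sub_arcsin]
  have := Real.monotone_arcsin h
  linarith

private lemma arccos_strict_anti' {s t : ℝ} (hs : -1 ≤ s) (ht : t ≤ 1) (h : s < t) :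
    arccos t < arccos s := by
  rw [arccos_eq_pi_div_two_sub_arcsin, arccos_eq_pi_div_two_sub_arcsin]
  have := Real.strictMonoOn_arcsin ⟨hs, h.le.trans ht⟩ ⟨hs.trans h.le, ht⟩ h
  linarith

/-- Pure real-analysis step: if `a cos t + u sin t ≤ a` for all small positive `t`,
then `u ≤ 0`. -/
private lemma aux_limit' {a u φ : ℝ} (hφ0 : 0 < φ) (hφπ : φ < π)
    (h : ∀ t ∈ Set.Ioc (0:ℝ) φ, a * cos t + u * sin t ≤ a) : u ≤ 0 := by
  have htan : ∀ t ∈ Set.Ioc (0:ℝ) φ, u ≤ a * tan (t / 2) := by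
    intro t ht
    obtain ⟨ht0, htφ⟩ := ht
    have h1 := h t ⟨ht0, htφ⟩
    have hs : 0 < sin (t / 2) := sin_pos_of_pos_of_lt_pi (by linarith) (by linarith)
    have hco : 0 < cos (t / 2) :=
      cos_pos_of_mem_Ioo ⟨by linarith [pi_pos], by linarith⟩
    have hct : cos t = 1 - 2 * sin (t / 2) ^ 2 := by
      have h2 := cos_two_mul (t / 2)
      have h3 := sin_sq_add_cos_sq (t / 2)
      have h4 : 2 * (t / 2) = t := by ring
      rw [h4] at h2
      nlinarith
    have hst : sin t = 2 * sin (t / 2) * cos (t / 2) := by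
      have h2 := sin_two_mul (t / 2)
      have h4 : 2 * (t / 2) = t := by ring
      rw [h4] at h2
      linarith
    rw [hct, hst] at h1
    rw [tan_eq_sin_div_cos, mul_div_assoc', le_div_iff₀ hco]
    have h5 : (2 * sin (t / 2)) * (u * cos (t / 2)) ≤ (2 * sin (t / 2)) * (a * sin (t / 2)) := by
      nlinarith
    exact le_of_mul_le_mul_left h5 (by positivity)
  have htend : Filter.Tendsto (fun t : ℝ => a * tan (t / 2)) (nhdsWithin 0 (Set.Ioi 0))
      (nhds 0) := by
    have hcont : ContinuousAt (fun t : ℝ => a * tan (t / 2)) 0 := by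
      apply ContinuousAt.mul continuousAt_const
      have h2 : ContinuousAt (fun t : ℝ => t / 2) 0 := continuousAt_id.div_const 2
      have h1 : ContinuousAt tan ((fun t : ℝ => t / 2) 0) := by
        exact continuousAt_tan.mpr (by norm_num)
      exact ContinuousAt.comp (g := tan) (f := fun t : ℝ => t / 2) (x := (0:ℝ)) h1 h2
    have := hcont.tendsto
    simp only [zero_div, tan_zero, mul_zero] at this
    exact this.mono_left nhdsWithin_le_nhds
  refine ge_of_tendsto htend ?_
  filter_upwards [Ioc_mem_nhdsGT_of_mem (Set.mem_Ico.mpr ⟨le_refl (0:ℝ), hφ0⟩)] with t ht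
  exact htan t ht

variable {n : ℕ}

private lemma inner_abs_le_one' (u v : EuclideanSpace ℝ (Fin (n + 1)))
    (hu : ‖u‖ = 1) (hv : ‖v‖ = 1) : |⟪u, v⟫| ≤ 1 := by
  have := abs_real_inner_le_norm u v
  rw [hu, hv] at this; simpa using this

private lemma inner_self_one' (u : EuclideanSpace ℝ (Fin (n + 1))) (hu : ‖u‖ = 1) :
    ⟪u, u⟫ = 1 := by
  rw [real_inner_self_eq_norm_sq, hu]; norm_num

private lemma norm_eq_one_of_inner' (z : EuclideanSpace ℝ (Fin (n + 1))) (h : ⟪z, z⟫ = 1) :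
    ‖z‖ = 1 := by
  have h2 : ‖z‖ ^ 2 = 1 := by rw [← real_inner_self_eq_norm_sq]; exact h
  nlinarith [norm_nonneg z]

set_option maxHeartbeats 1000000 in
/-- The key variational ("obtuse angle") inequality for the nearest point. -/
private lemma key_obtuse' (C : Set (EuclideanSpace ℝ (Fin (n + 1))))
    (hC_sub : ∀ c ∈ C, ‖c‖ = 1)
    (hC_conv : ∀ u ∈ C, ∀ v ∈ C, sphericalDist u v < π →
      ∀ z : EuclideanSpace ℝ (Fin (n + 1)), ‖z‖ = 1 →
        sphericalDist u z + sphericalDist z v = sphericalDist u v → z ∈ C)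
    (x p : EuclideanSpace ℝ (Fin (n + 1))) (hx : ‖x‖ = 1) (hpC : p ∈ C)
    (hp_proj : ∀ c ∈ C, sphericalDist x p ≤ sphericalDist x c)
    (c : EuclideanSpace ℝ (Fin (n + 1))) (hc : c ∈ C) :
    ⟪x, c⟫ ≤ ⟪x, p⟫ * ⟪p, c⟫ := by
  have hp1 : ‖p‖ = 1 := hC_sub p hpC
  have hc1 : ‖c‖ = 1 := hC_sub c hc
  set a : ℝ := ⟪x, p⟫ with ha_def
  set k : ℝ := ⟪p, c⟫ with hk_def
  clear_value a k
  have hk : |k| ≤ 1 := by rw [hk_def]; exact inner_abs_le_one' p c hp1 hc1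
  have ha : |a| ≤ 1 := by rw [ha_def]; exact inner_abs_le_one' x p hx hp1
  have hcc : ⟪c, c⟫ = 1 := inner_self_one' c hc1
  have hpp : ⟪p, p⟫ = 1 := inner_self_one' p hp1
  have hcp' : ⟪c, p⟫ = k := by rw [hk_def]; exact real_inner_comm p c
  rcases eq_or_lt_of_le (abs_le.mp hk).2 with hk1 | hk1
  · -- k = 1 : c = p
    have hcp : c = p := by
      have h0 : ⟪c - p, c - p⟫ = 0 := by
        simp only [inner_sub_left, inner_sub_right]
        rw [hcc, hpp, hcp', ← hk_def, hk1]; ring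
      exact sub_eq_zero.mp (inner_self_eq_zero.mp h0)
    rw [hcp, hk1, ha_def]
    ring_nf
    exact le_refl _
  rcases eq_or_lt_of_le (neg_le_of_abs_le hk) with hkm1 | hkm1
  · -- k = -1 : c = -p
    have hcp : c = -p := by
      have h0 : ⟪c + p, c + p⟫ = 0 := by
        simp only [inner_add_left, inner_add_right]
        rw [hcc, hpp, hcp', ← hk_def, ← hkm1]; ring
      exact eq_neg_of_add_eq_zero_left (inner_self_eq_zero.mp h0)
    rw [hcp, inner_neg_right, ← hkm1, ha_def]
    ring_nf
    exact le_refl _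
  · -- main case : -1 < k < 1
    set φ : ℝ := arccos k with hφ_def
    clear_value φ
    have hφ0 : 0 < φ := by rw [hφ_def]; exact arccos_pos.mpr hk1
    have hφπ : φ < π := by
      rw [hφ_def]
      rcases lt_or_eq_of_le (arccos_le_pi k) with h | h
      · exact h
      · exact absurd (arccos_eq_pi.mp h) (by linarith)
    have hkcos : cos φ = k := by
      rw [hφ_def]
      exact cos_arccos (by linarith [neg_le_of_abs_le hk]) (abs_le.mp hk).2
    have hsin : 0 < sin φ := sin_pos_of_pos_of_lt_pi hφ0 hφπ
    have hsin2 : sin φ ^ 2 = 1 - k ^ 2 := by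
      have := sin_sq_add_cos_sq φ
      rw [hkcos] at this; linarith
    set w : EuclideanSpace ℝ (Fin (n + 1)) := (sin φ)⁻¹ • (c - k • p) with hw_def
    clear_value w
    have hpw : ⟪p, w⟫ = 0 := by
      rw [hw_def, real_inner_smul_right, inner_sub_right, real_inner_smul_right, ← hk_def, hpp]
      ring
    have hwp : ⟪w, p⟫ = 0 := by rw [real_inner_comm]; exact hpw
    have hcw : ⟪c, w⟫ = sin φ := by
      rw [hw_def, real_inner_smul_right, inner_sub_right, real_inner_smul_right, hcc, hcp']
      field_simp
      nlinarith [hsin2]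
    have hwc : ⟪w, c⟫ = sin φ := by rw [real_inner_comm]; exact hcw
    have hww : ⟪w, w⟫ = 1 := by
      nth_rewrite 1 [hw_def]
      rw [real_inner_smul_left, inner_sub_left, real_inner_smul_left, hcw, hpw]
      have h6 : sin φ ≠ 0 := ne_of_gt hsin
      field_simp
      ring
    set u : ℝ := ⟪x, w⟫ with hu_def
    clear_value u
    have hstep : ∀ t ∈ Set.Ioc (0:ℝ) φ, a * cos t + u * sin t ≤ a := by
      intro t ht
      obtain ⟨ht0, htφ⟩ := ht
      set z : EuclideanSpace ℝ (Fin (n + 1)) := cos t • p + sin t • w with hz_def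
      clear_value z
      have hzz : ⟪z, z⟫ = 1 := by
        rw [hz_def]
        simp only [inner_add_left, inner_add_right, real_inner_smul_left, real_inner_smul_right]
        rw [hpp, hww, hpw, hwp]
        nlinarith [sin_sq_add_cos_sq t]
      have hz1 : ‖z‖ = 1 := norm_eq_one_of_inner' z hzz
      have hpz : ⟪p, z⟫ = cos t := by
        rw [hz_def, inner_add_right, real_inner_smul_right, real_inner_smul_right, hpp, hpw]
        ring
      have hzc : ⟪z, c⟫ = cos (φ - t) := by
        rw [hz_def, inner_add_left, real_inner_smul_left, real_inner_smul_left,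
          ← hk_def, hwc, cos_sub, hkcos]
        ring
      have hdpz : sphericalDist p z = t := by
        rw [sphericalDist, hpz]; exact arccos_cos ht0.le (by linarith)
      have hdzc : sphericalDist z c = φ - t := by
        rw [sphericalDist, hzc]; exact arccos_cos (by linarith) (by linarith)
      have hdpc : sphericalDist p c = φ := by rw [sphericalDist, ← hk_def, hφ_def]
      have hzC : z ∈ C := by
        refine hC_conv p hpC c hc (by rw [hdpc]; exact hφπ) z hz1 ?_
        rw [hdpz, hdzc, hdpc]; ring
      have hineq := hp_proj z hzC
      rw [sphericalDist, sphericalDist, ← ha_def] at hineq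
      have hxz : ⟪x, z⟫ = a * cos t + u * sin t := by
        rw [hz_def, inner_add_right, real_inner_smul_right, real_inner_smul_right,
          ← ha_def, ← hu_def]
        ring
      rw [hxz] at hineq
      by_contra hcon
      push_neg at hcon
      have hub : a * cos t + u * sin t ≤ 1 := by
        have h7 := inner_abs_le_one' x z hx hz1
        rw [hxz] at h7
        exact (abs_le.mp h7).2
      have := arccos_strict_anti' (by linarith [neg_le_of_abs_le ha]) hub hcon
      linarith
    have hu0 : u ≤ 0 := aux_limit' hφ0 hφπ hstep
    have hux : u = (sin φ)⁻¹ * (⟪x, c⟫ - k * a) := by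
      rw [hu_def, hw_def, real_inner_smul_right, inner_sub_right, real_inner_smul_right,
        ← ha_def]
    rw [hux] at hu0
    have hinv : 0 < (sin φ)⁻¹ := inv_pos.mpr hsin
    nlinarith [hu0, hinv]

/-- The reflected point is determined: `x' = 2⟪x,p⟫ • p - x`. -/
private lemma reflection_eq' (x p x' : EuclideanSpace ℝ (Fin (n + 1)))
    (hx : ‖x‖ = 1) (hp : ‖p‖ = 1) (hx' : ‖x'‖ = 1)
    (h1 : sphericalDist x p = sphericalDist p x')
    (h2 : sphericalDist x x' = sphericalDist x p + sphericalDist p x') :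
    x' = (2 * ⟪x, p⟫) • p - x := by
  set a : ℝ := ⟪x, p⟫ with ha_def
  clear_value a
  have ha : |a| ≤ 1 := by rw [ha_def]; exact inner_abs_le_one' x p hx hp
  have hpx'_abs : |(⟪p, x'⟫ : ℝ)| ≤ 1 := inner_abs_le_one' p x' hp hx'
  have hxx'_abs : |(⟪x, x'⟫ : ℝ)| ≤ 1 := inner_abs_le_one' x x' hx hx'
  have hpx' : ⟪p, x'⟫ = a := by
    have := congrArg cos h1
    rw [sphericalDist, sphericalDist, ← ha_def,
      cos_arccos (neg_le_of_abs_le ha) (abs_le.mp ha).2,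
      cos_arccos (neg_le_of_abs_le hpx'_abs) (abs_le.mp hpx'_abs).2] at this
    exact this.symm
  have hxx' : ⟪x, x'⟫ = 2 * a ^ 2 - 1 := by
    have h3 : sphericalDist x x' = 2 * arccos a := by
      rw [h2, ← h1, sphericalDist, ← ha_def]; ring
    have := congrArg cos h3
    rw [sphericalDist, cos_arccos (neg_le_of_abs_le hxx'_abs) (abs_le.mp hxx'_abs).2,
      cos_two_mul, cos_arccos (neg_le_of_abs_le ha) (abs_le.mp ha).2] at this
    exact this
  have hpp : ⟪p, p⟫ = 1 := inner_self_one' p hp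
  have hxx : ⟪x, x⟫ = 1 := inner_self_one' x hx
  have hx'x' : ⟪x', x'⟫ = 1 := inner_self_one' x' hx'
  have hx'p : ⟪x', p⟫ = a := by rw [real_inner_comm]; exact hpx'
  have hx'x : ⟪x', x⟫ = 2 * a ^ 2 - 1 := by rw [real_inner_comm]; exact hxx'
  have hpx : ⟪p, x⟫ = a := by rw [real_inner_comm]; exact ha_def.symm
  have h0 : ⟪x' - ((2 * a) • p - x), x' - ((2 * a) • p - x)⟫ = 0 := by
    simp only [inner_sub_left, inner_sub_right, inner_add_left, inner_add_right,
      real_inner_smul_left, real_inner_smul_right]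
    rw [hx'x', hx'p, hx'x, hpx', hpp, hpx, hxx', ← ha_def, hxx]
    ring
  exact sub_eq_zero.mp (inner_self_eq_zero.mp h0)

end SphereReflAux

set_option maxHeartbeats 1000000 in
/-- The reflection mapping with respect to a nonempty closed spherically convex subset of the
unit sphere `S^n` is nonexpansive on points whose distance to the set is less than `π/2`. -/
theorem reflection_nonexpansive_sphere {n : ℕ}
    (C : Set (EuclideanSpace ℝ (Fin (n + 1))))
    (hC_sub : ∀ c ∈ C, ‖c‖ = 1) (hC_ne : C.Nonempty) (hC_cl : IsClosed C)
    (hC_conv : ∀ u ∈ C, ∀ v ∈ C, sphericalDist u v < π →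
      ∀ z : EuclideanSpace ℝ (Fin (n + 1)), ‖z‖ = 1 →
        sphericalDist u z + sphericalDist z v = sphericalDist u v → z ∈ C)
    (x y x' y' p q : EuclideanSpace ℝ (Fin (n + 1)))
    (hx : ‖x‖ = 1) (hy : ‖y‖ = 1) (hx' : ‖x'‖ = 1) (hy' : ‖y'‖ = 1)
    (hpC : p ∈ C) (hqC : q ∈ C)
    (hxC : sInf ((fun c => sphericalDist x c) '' C) < π / 2)
    (hyC : sInf ((fun c => sphericalDist y c) '' C) < π / 2)
    (hp_proj : ∀ c ∈ C, sphericalDist x p ≤ sphericalDist x c)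
    (hq_proj : ∀ c ∈ C, sphericalDist y q ≤ sphericalDist y c)
    (hx'1 : sphericalDist x p = sphericalDist p x')
    (hx'2 : sphericalDist x x' = sphericalDist x p + sphericalDist p x')
    (hy'1 : sphericalDist y q = sphericalDist q y')
    (hy'2 : sphericalDist y y' = sphericalDist y q + sphericalDist q y') :
    sphericalDist x' y' ≤ sphericalDist x y := by
  have hp1 : ‖p‖ = 1 := hC_sub p hpC
  have hq1 : ‖q‖ = 1 := hC_sub q hqC
  have hdxp : sphericalDist x p ≤ sInf ((fun c => sphericalDist x c) '' C) := by
    apply le_csInf ⟨sphericalDist x p, Set.mem_image_of_mem _ hpC⟩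
    rintro _ ⟨c, hcC, rfl⟩
    exact hp_proj c hcC
  have hdyq : sphericalDist y q ≤ sInf ((fun c => sphericalDist y c) '' C) := by
    apply le_csInf ⟨sphericalDist y q, Set.mem_image_of_mem _ hqC⟩
    rintro _ ⟨c, hcC, rfl⟩
    exact hq_proj c hcC
  have hap : 0 < (inner ℝ x p : ℝ) := by
    have h1 : arccos (inner ℝ x p) < π / 2 := lt_of_le_of_lt hdxp hxC
    exact arccos_lt_pi_div_two.mp h1
  have hbq : 0 < (inner ℝ y q : ℝ) := by
    have h1 : arccos (inner ℝ y q) < π / 2 := lt_of_le_of_lt hdyq hyC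
    exact arccos_lt_pi_div_two.mp h1
  have hx'eq : x' = (2 * (inner ℝ x p : ℝ)) • p - x := reflection_eq' x p x' hx hp1 hx' hx'1 hx'2
  have hy'eq : y' = (2 * (inner ℝ y q : ℝ)) • q - y := reflection_eq' y q y' hy hq1 hy' hy'1 hy'2
  have ob1 : (inner ℝ x q : ℝ) ≤ (inner ℝ x p : ℝ) * (inner ℝ p q : ℝ) :=
    key_obtuse' C hC_sub hC_conv x p hx hpC hp_proj q hqC
  have ob2 : (inner ℝ y p : ℝ) ≤ (inner ℝ y q : ℝ) * (inner ℝ q p : ℝ) :=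
    key_obtuse' C hC_sub hC_conv y q hy hqC hq_proj p hpC
  have hqp : (inner ℝ q p : ℝ) = (inner ℝ p q : ℝ) := real_inner_comm p q
  have hpy : (inner ℝ p y : ℝ) = (inner ℝ y p : ℝ) := real_inner_comm y p
  rw [hqp] at ob2
  have hkey : (inner ℝ x y : ℝ) ≤ (inner ℝ x' y' : ℝ) := by
    have hexp : (inner ℝ x' y' : ℝ) =
        4 * (inner ℝ x p : ℝ) * (inner ℝ y q : ℝ) * (inner ℝ p q : ℝ)
          - 2 * (inner ℝ x p : ℝ) * (inner ℝ p y : ℝ)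
          - 2 * (inner ℝ y q : ℝ) * (inner ℝ x q : ℝ) + (inner ℝ x y : ℝ) := by
      rw [hx'eq, hy'eq]
      simp only [inner_sub_left, inner_sub_right, real_inner_smul_left, real_inner_smul_right]
      ring
    rw [hexp, hpy]
    nlinarith [mul_le_mul_of_nonneg_left ob1 (le_of_lt hbq),
      mul_le_mul_of_nonneg_left ob2 (le_of_lt hap)]
  rw [sphericalDist, sphericalDist]
  exact arccos_anti' hkey
end

section
/- Let a, y, y′, b be points of the hyperbolic plane ℍ with dist y b = dist b y′ = (1/2)·dist y y′ (b is the midpoint of y and y′). Then cosh(dist a y) + cosh(dist a y′) = 2·cosh(dist a b)·cosh(dist b y). -/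
private lemma cosh_dist_coords (z w : UpperHalfPlane) :
    Real.cosh (dist z w) =
      (((z : ℂ).re - (w : ℂ).re) ^ 2 + (z : ℂ).im ^ 2 + (w : ℂ).im ^ 2) /
        (2 * (z : ℂ).im * (w : ℂ).im) := by
  have hz : 0 < (z : ℂ).im := z.im_pos
  have hw : 0 < (w : ℂ).im := w.im_pos
  rw [UpperHalfPlane.cosh_dist, Complex.dist_eq_re_im,
    Real.sq_sqrt (by positivity)]
  field_simp
  simp only [UpperHalfPlane.coe_im]
  ring

private lemma midpoint_alg (p q x0 s0 x1 s1 x2 s2 t : ℝ)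
    (hq : 0 < q) (h0 : 0 < s0) (h1 : 0 < s1) (h2 : 0 < s2)
    (hE1 : t = ((x0 - x1) ^ 2 + s0 ^ 2 + s1 ^ 2) / (2 * s0 * s1))
    (hE2 : t = ((x0 - x2) ^ 2 + s0 ^ 2 + s2 ^ 2) / (2 * s0 * s2))
    (hE3 : 2 * t ^ 2 - 1 = ((x1 - x2) ^ 2 + s1 ^ 2 + s2 ^ 2) / (2 * s1 * s2)) :
    ((p - x1) ^ 2 + q ^ 2 + s1 ^ 2) / (2 * q * s1)
      + ((p - x2) ^ 2 + q ^ 2 + s2 ^ 2) / (2 * q * s2)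
      = 2 * (((p - x0) ^ 2 + q ^ 2 + s0 ^ 2) / (2 * q * s0)) * t := by
  have hE1' : (x0 - x1) ^ 2 + s0 ^ 2 + s1 ^ 2 = t * (2 * s0 * s1) :=
    (div_eq_iff (by positivity)).mp hE1.symm
  have hE2' : (x0 - x2) ^ 2 + s0 ^ 2 + s2 ^ 2 = t * (2 * s0 * s2) :=
    (div_eq_iff (by positivity)).mp hE2.symm
  have hE3' : (x1 - x2) ^ 2 + s1 ^ 2 + s2 ^ 2 = (2 * t ^ 2 - 1) * (2 * s1 * s2) :=
    (div_eq_iff (by positivity)).mp hE3.symm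
  have hkey : ((x1 - x0) * s2 + (x2 - x0) * s1) ^ 2
      + (2 * t * (s1 * s2) - s0 * (s1 + s2)) ^ 2 = 0 := by
    linear_combination (s2 * (s1 + s2)) * hE1' + (s1 * (s1 + s2)) * hE2' - (s1 * s2) * hE3'
  have hB : (x1 - x0) * s2 + (x2 - x0) * s1 = 0 := by
    have h : ((x1 - x0) * s2 + (x2 - x0) * s1) ^ 2 = 0 :=
      le_antisymm (by nlinarith [sq_nonneg (2 * t * (s1 * s2) - s0 * (s1 + s2))])
        (sq_nonneg _)
    exact pow_eq_zero_iff two_ne_zero |>.mp h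
  have hA : 2 * t * (s1 * s2) - s0 * (s1 + s2) = 0 := by
    have h : (2 * t * (s1 * s2) - s0 * (s1 + s2)) ^ 2 = 0 :=
      le_antisymm (by nlinarith [sq_nonneg ((x1 - x0) * s2 + (x2 - x0) * s1)])
        (sq_nonneg _)
    exact pow_eq_zero_iff two_ne_zero |>.mp h
  have hmain : s0 * s2 * ((p - x1) ^ 2 + q ^ 2 + s1 ^ 2)
      + s0 * s1 * ((p - x2) ^ 2 + q ^ 2 + s2 ^ 2)
      = 2 * t * (s1 * s2) * ((p - x0) ^ 2 + q ^ 2 + s0 ^ 2) := by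
    linear_combination (-(p ^ 2 + q ^ 2 - 2 * p * x0 + x0 ^ 2 - s0 ^ 2)) * hA
      + (-2 * p * s0 + 2 * x0 * s0) * hB + (s0 * s2) * hE1' + (s0 * s1) * hE2'
  have hr : 2 * (((p - x0) ^ 2 + q ^ 2 + s0 ^ 2) / (2 * q * s0)) * t
      = (2 * t * ((p - x0) ^ 2 + q ^ 2 + s0 ^ 2)) / (2 * q * s0) := by ring
  rw [hr, div_add_div _ _ (by positivity) (by positivity),
    div_eq_div_iff (by positivity) (by positivity)]
  linear_combination (4 * q ^ 2) * hmain

/-- In the hyperbolic plane, if `b` is the midpoint of `y` and `y'`, then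
`cosh (dist a y) + cosh (dist a y') = 2 * cosh (dist a b) * cosh (dist b y)`. -/
theorem hyperbolic_midpoint_cosh_identity
    (a y y' b : UpperHalfPlane)
    (hb1 : dist y b = dist b y') (hb2 : dist b y' = (1 / 2) * dist y y') :
    Real.cosh (dist a y) + Real.cosh (dist a y') =
      2 * Real.cosh (dist a b) * Real.cosh (dist b y) := by
  have hd : dist y y' = 2 * dist b y := by
    rw [dist_comm b y]; linarith [hb1, hb2]
  have hcy' : Real.cosh (dist b y') = Real.cosh (dist b y) := by
    rw [← hb1, dist_comm]
  have hcyy' : Real.cosh (dist y y') = 2 * Real.cosh (dist b y) ^ 2 - 1 := by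
    rw [hd, Real.cosh_two_mul, Real.sinh_sq]; ring
  rw [cosh_dist_coords a y, cosh_dist_coords a y', cosh_dist_coords a b]
  exact midpoint_alg _ _ _ _ _ _ _ _ _ a.im_pos b.im_pos y.im_pos y'.im_pos
    (cosh_dist_coords b y) (hcy'.symm.trans (cosh_dist_coords b y'))
    (hcyy'.symm.trans (cosh_dist_coords y y'))
end

section
/- Let y, y′, p, x be points of the hyperbolic plane ℍ such that dist y p + dist p y′ = dist y y′ (p lies on the geodesic segment from y to y′), and set s = dist y p and t = dist p y′. Then sinh t · cosh(dist x y) + sinh s · cosh(dist x y′) = sinh(s + t) · cosh(dist x p). -/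
open Real

/-- First Minkowski coordinate of the hyperboloid embedding of ℍ. -/
noncomputable def hypE0 (z : UpperHalfPlane) : ℝ := (z.re ^ 2 + z.im ^ 2 + 1) / (2 * z.im)
/-- Second Minkowski coordinate. -/
noncomputable def hypE1 (z : UpperHalfPlane) : ℝ := z.re / z.im
/-- Third Minkowski coordinate. -/
noncomputable def hypE2 (z : UpperHalfPlane) : ℝ := (z.re ^ 2 + z.im ^ 2 - 1) / (2 * z.im)

lemma hyp_cosh_dist_eq (z w : UpperHalfPlane) :
    Real.cosh (dist z w) =
      hypE0 z * hypE0 w - hypE1 z * hypE1 w - hypE2 z * hypE2 w := by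
  have hz := z.im_pos
  have hw := w.im_pos
  rw [UpperHalfPlane.cosh_dist, Complex.dist_eq_re_im, Real.sq_sqrt (by positivity)]
  simp only [hypE0, hypE1, hypE2, UpperHalfPlane.coe_re, UpperHalfPlane.coe_im]
  field_simp
  ring

lemma hyp_self_norm (z : UpperHalfPlane) :
    hypE0 z * hypE0 z - hypE1 z * hypE1 z - hypE2 z * hypE2 z = 1 := by
  have h := hyp_cosh_dist_eq z z
  simpa using h.symm

/-- In the hyperbolic plane, if `p` lies on the geodesic segment from `y` to `y'`,
with `s = dist y p` and `t = dist p y'`, then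
`sinh t * cosh (dist x y) + sinh s * cosh (dist x y') = sinh (s + t) * cosh (dist x p)`. -/
theorem hyperbolic_segment_cosh_identity
    (y y' p x : UpperHalfPlane)
    (hp : dist y p + dist p y' = dist y y') :
    Real.sinh (dist p y') * Real.cosh (dist x y) +
      Real.sinh (dist y p) * Real.cosh (dist x y') =
        Real.sinh (dist y p + dist p y') * Real.cosh (dist x p) := by
  set s := dist y p with hs
  set t := dist p y' with ht
  -- Minkowski inner products between the four points
  have h1 : hypE0 y * hypE0 p - hypE1 y * hypE1 p - hypE2 y * hypE2 p = Real.cosh s :=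
    (hyp_cosh_dist_eq y p).symm
  have h2 : hypE0 p * hypE0 y' - hypE1 p * hypE1 y' - hypE2 p * hypE2 y' = Real.cosh t :=
    (hyp_cosh_dist_eq p y').symm
  have h3 : hypE0 y * hypE0 y' - hypE1 y * hypE1 y' - hypE2 y * hypE2 y'
      = Real.cosh (s + t) := by
    rw [hp]; exact (hyp_cosh_dist_eq y y').symm
  have ny := hyp_self_norm y
  have ny' := hyp_self_norm y'
  have np := hyp_self_norm p
  set v0 : ℝ := Real.sinh t * hypE0 y + Real.sinh s * hypE0 y'
      - Real.sinh (s + t) * hypE0 p with hv0def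
  set v1 : ℝ := Real.sinh t * hypE1 y + Real.sinh s * hypE1 y'
      - Real.sinh (s + t) * hypE1 p with hv1def
  set v2 : ℝ := Real.sinh t * hypE2 y + Real.sinh s * hypE2 y'
      - Real.sinh (s + t) * hypE2 p with hv2def
  have hcs : Real.cosh s ^ 2 - Real.sinh s ^ 2 = 1 := Real.cosh_sq_sub_sinh_sq s
  have hct : Real.cosh t ^ 2 - Real.sinh t ^ 2 = 1 := Real.cosh_sq_sub_sinh_sq t
  -- the vector v is Minkowski-null
  have hvv : v0 ^ 2 - v1 ^ 2 - v2 ^ 2 = 0 := by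
    have hexp : v0 ^ 2 - v1 ^ 2 - v2 ^ 2 =
        Real.sinh t ^ 2 * (hypE0 y * hypE0 y - hypE1 y * hypE1 y - hypE2 y * hypE2 y)
        + Real.sinh s ^ 2 * (hypE0 y' * hypE0 y' - hypE1 y' * hypE1 y' - hypE2 y' * hypE2 y')
        + Real.sinh (s + t) ^ 2 * (hypE0 p * hypE0 p - hypE1 p * hypE1 p - hypE2 p * hypE2 p)
        + 2 * Real.sinh t * Real.sinh s *
            (hypE0 y * hypE0 y' - hypE1 y * hypE1 y' - hypE2 y * hypE2 y')
        - 2 * Real.sinh t * Real.sinh (s + t) *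
            (hypE0 y * hypE0 p - hypE1 y * hypE1 p - hypE2 y * hypE2 p)
        - 2 * Real.sinh s * Real.sinh (s + t) *
            (hypE0 p * hypE0 y' - hypE1 p * hypE1 y' - hypE2 p * hypE2 y') := by
      rw [hv0def, hv1def, hv2def]; ring
    rw [hexp, h1, h2, h3, ny, ny', np, Real.sinh_add, Real.cosh_add]
    linear_combination (-(Real.sinh t ^ 2)) * hcs - Real.sinh s ^ 2 * hct
  -- the vector v is Minkowski-orthogonal to the timelike vector E(p)
  have hvp : v0 * hypE0 p - v1 * hypE1 p - v2 * hypE2 p = 0 := by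
    have hexp : v0 * hypE0 p - v1 * hypE1 p - v2 * hypE2 p =
        Real.sinh t * (hypE0 y * hypE0 p - hypE1 y * hypE1 p - hypE2 y * hypE2 p)
        + Real.sinh s * (hypE0 p * hypE0 y' - hypE1 p * hypE1 y' - hypE2 p * hypE2 y')
        - Real.sinh (s + t) *
            (hypE0 p * hypE0 p - hypE1 p * hypE1 p - hypE2 p * hypE2 p) := by
      rw [hv0def, hv1def, hv2def]; ring
    rw [hexp, h1, h2, np, Real.sinh_add]
    ring
  -- a null vector orthogonal to a timelike unit vector is zero
  have key : v0 ^ 2 + (v1 * hypE2 p - v2 * hypE1 p) ^ 2 = 0 := by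
    linear_combination (-(v0 ^ 2)) * np
      + (v0 * hypE0 p + v1 * hypE1 p + v2 * hypE2 p) * hvp
      - (hypE1 p ^ 2 + hypE2 p ^ 2) * hvv
  have hv0sq : v0 ^ 2 = 0 := by
    linarith [sq_nonneg v0, sq_nonneg (v1 * hypE2 p - v2 * hypE1 p), key]
  have hv0 : v0 = 0 := pow_eq_zero_iff two_ne_zero |>.mp hv0sq
  have hv1sq : v1 ^ 2 = 0 := by linarith [hvv, hv0sq, sq_nonneg v1, sq_nonneg v2]
  have hv2sq : v2 ^ 2 = 0 := by linarith [hvv, hv0sq, sq_nonneg v1, sq_nonneg v2]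
  have hv1 : v1 = 0 := pow_eq_zero_iff two_ne_zero |>.mp hv1sq
  have hv2 : v2 = 0 := pow_eq_zero_iff two_ne_zero |>.mp hv2sq
  -- conclude by pairing with E(x)
  rw [hyp_cosh_dist_eq x y, hyp_cosh_dist_eq x y', hyp_cosh_dist_eq x p]
  have e0 : Real.sinh t * hypE0 y + Real.sinh s * hypE0 y'
      = Real.sinh (s + t) * hypE0 p := by
    have := hv0; rw [hv0def] at this; linarith
  have e1 : Real.sinh t * hypE1 y + Real.sinh s * hypE1 y'
      = Real.sinh (s + t) * hypE1 p := by
    have := hv1; rw [hv1def] at this; linarith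
  have e2 : Real.sinh t * hypE2 y + Real.sinh s * hypE2 y'
      = Real.sinh (s + t) * hypE2 p := by
    have := hv2; rw [hv2def] at this; linarith
  linear_combination hypE0 x * e0 - hypE1 x * e1 - hypE2 x * e2
end

section
/- Let x, x′, p, q be points of the hyperbolic plane ℍ such that p is the midpoint of x and x′ (dist x p = dist p x′ = (1/2)·dist x x′), and suppose cosh(dist q x) ≥ cosh(dist p x) · cosh(dist p q) (by the hyperbolic law of cosines, this says the angle at p between the segments [p,x] and [p,q] is at least π/2). Then dist q x′ ≤ dist q x. -/
open Real
set_option maxHeartbeats 1000000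

lemma mink_cosh (z w : UpperHalfPlane) :
    ((z.re^2+z.im^2+1)/(2*z.im)) * ((w.re^2+w.im^2+1)/(2*w.im))
    - (z.re/z.im)*(w.re/w.im)
    - ((z.re^2+z.im^2-1)/(2*z.im)) * ((w.re^2+w.im^2-1)/(2*w.im))
    = Real.cosh (dist z w) := by
  rw [UpperHalfPlane.cosh_dist, Complex.dist_eq, Complex.sq_norm, Complex.normSq_apply]
  have hz := z.im_pos.ne'
  have hw := w.im_pos.ne'
  simp only [Complex.sub_re, Complex.sub_im, UpperHalfPlane.coe_re, UpperHalfPlane.coe_im]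
  field_simp
  ring

/-- In the hyperbolic plane, if `p` is the midpoint of `x` and `x'`, and the angle at `p`
between the segments `[p,x]` and `[p,q]` is at least `π/2` (expressed via the hyperbolic
law of cosines as `cosh (dist q x) ≥ cosh (dist p x) * cosh (dist p q)`), then
`dist q x' ≤ dist q x`. -/
theorem hyperbolic_reflection_decreases_dist
    (x x' p q : UpperHalfPlane)
    (hp1 : dist x p = dist p x') (hp2 : dist p x' = (1 / 2) * dist x x')
    (hangle : Real.cosh (dist q x) ≥ Real.cosh (dist p x) * Real.cosh (dist p q)) :
    dist q x' ≤ dist q x := by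
  set u := Real.cosh (dist x p) with hu
  -- hyperboloid coordinates
  set X0 := (x.re^2+x.im^2+1)/(2*x.im) with hX0
  set X1 := x.re/x.im with hX1
  set X2 := (x.re^2+x.im^2-1)/(2*x.im) with hX2
  set A0 := (x'.re^2+x'.im^2+1)/(2*x'.im) with hA0
  set A1 := x'.re/x'.im with hA1
  set A2 := (x'.re^2+x'.im^2-1)/(2*x'.im) with hA2
  set P0 := (p.re^2+p.im^2+1)/(2*p.im) with hP0
  set P1 := p.re/p.im with hP1
  set P2 := (p.re^2+p.im^2-1)/(2*p.im) with hP2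
  set Q0 := (q.re^2+q.im^2+1)/(2*q.im) with hQ0
  set Q1 := q.re/q.im with hQ1
  set Q2 := (q.re^2+q.im^2-1)/(2*q.im) with hQ2
  have exx : X0*X0 - X1*X1 - X2*X2 = 1 := by
    have := mink_cosh x x; rwa [dist_self, Real.cosh_zero] at this
  have eaa : A0*A0 - A1*A1 - A2*A2 = 1 := by
    have := mink_cosh x' x'; rwa [dist_self, Real.cosh_zero] at this
  have epp : P0*P0 - P1*P1 - P2*P2 = 1 := by
    have := mink_cosh p p; rwa [dist_self, Real.cosh_zero] at this
  have exp' : X0*P0 - X1*P1 - X2*P2 = u := mink_cosh x p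
  have eap : A0*P0 - A1*P1 - A2*P2 = u := by
    have := mink_cosh x' p; rwa [dist_comm, ← hp1] at this
  have exa : X0*A0 - X1*A1 - X2*A2 = 2*u^2 - 1 := by
    have hd : dist x x' = 2 * dist x p := by
      rw [hp1, hp2]; ring
    have := mink_cosh x x'
    rw [hd, Real.cosh_two_mul, ← hu] at this
    rw [this]; rw [Real.cosh_sq]; ring
  have eqx : Q0*X0 - Q1*X1 - Q2*X2 = Real.cosh (dist q x) := mink_cosh q x
  have eqa : Q0*A0 - Q1*A1 - Q2*A2 = Real.cosh (dist q x') := mink_cosh q x'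
  have eqp : Q0*P0 - Q1*P1 - Q2*P2 = Real.cosh (dist q p) := mink_cosh q p
  have hang' : u * Real.cosh (dist q p) ≤ Real.cosh (dist q x) := by
    rw [hu, dist_comm x p, dist_comm q p]; exact hangle
  clear_value X0 X1 X2 A0 A1 A2 P0 P1 P2 Q0 Q1 Q2 u
  clear hX0 hX1 hX2 hA0 hA1 hA2 hP0 hP1 hP2 hQ0 hQ1 hQ2 hu hangle hp1 hp2
  -- V = X + A - 2u P is null and orthogonal to X
  set V0 := X0 + A0 - 2*u*P0 with hV0d
  set V1 := X1 + A1 - 2*u*P1 with hV1d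
  set V2 := X2 + A2 - 2*u*P2 with hV2d
  clear_value V0 V1 V2
  have hVV : V0*V0 - V1*V1 - V2*V2 = 0 := by
    rw [hV0d, hV1d, hV2d]
    linear_combination exx + eaa + 4*u^2*epp + 2*exa - 4*u*exp' - 4*u*eap
  have hVX : V0*X0 - V1*X1 - V2*X2 = 0 := by
    rw [hV0d, hV1d, hV2d]
    linear_combination exx + exa - 2*u*exp'
  have key : V0^2 + (V1*X2 - V2*X1)^2 = 0 := by
    linear_combination (V0*X0 + V1*X1 + V2*X2)*hVX - (X1^2+X2^2)*hVV - V0^2*exx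
  have hv0 : V0 = 0 := by
    have h2 : V0^2 = 0 :=
      le_antisymm (by linarith [sq_nonneg (V1*X2 - V2*X1)]) (sq_nonneg V0)
    exact pow_eq_zero_iff two_ne_zero |>.mp h2
  have hv1 : V1 = 0 := by
    have h2 : V1*V1 = 0 :=
      le_antisymm (by nlinarith [mul_self_nonneg V2, hVV, hv0]) (mul_self_nonneg V1)
    exact mul_self_eq_zero.mp h2
  have hv2 : V2 = 0 := by
    have h2 : V2*V2 = 0 :=
      le_antisymm (by nlinarith [mul_self_nonneg V1, hVV, hv0]) (mul_self_nonneg V2)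
    exact mul_self_eq_zero.mp h2
  have hv0' : X0 + A0 - 2*u*P0 = 0 := by rw [← hV0d]; exact hv0
  have hv1' : X1 + A1 - 2*u*P1 = 0 := by rw [← hV1d]; exact hv1
  have hv2' : X2 + A2 - 2*u*P2 = 0 := by rw [← hV2d]; exact hv2
  have median : Real.cosh (dist q x) + Real.cosh (dist q x')
      = 2 * u * Real.cosh (dist q p) := by
    linear_combination (-1)*eqx - eqa + 2*u*eqp + Q0*hv0' - Q1*hv1' - Q2*hv2'
  have hcosh : Real.cosh (dist q x') ≤ Real.cosh (dist q x) := by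
    linarith [median, hang']
  have := (Real.cosh_le_cosh).mp hcosh
  rwa [abs_of_nonneg dist_nonneg, abs_of_nonneg dist_nonneg] at this
end

section
/- Let x, x′, y, y′, c_x, c_y be points of the hyperbolic plane ℍ such that c_x is the midpoint of x and x′ (dist x c_x = dist c_x x′ = (1/2)·dist x x′) and c_y is the midpoint of y and y′. If dist x′ c_y ≤ dist x c_y and dist y′ c_x ≤ dist y c_x, then dist x′ y′ ≤ dist x y. -/
set_option maxHeartbeats 800000

open Real UpperHalfPlane

noncomputable def hypA (z : ℍ) : ℝ := (z.re ^ 2 + z.im ^ 2 + 1) / (2 * z.im)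
noncomputable def hypB (z : ℍ) : ℝ := z.re / z.im
noncomputable def hypC (z : ℍ) : ℝ := (z.re ^ 2 + z.im ^ 2 - 1) / (2 * z.im)

lemma hyp_cosh (z w : ℍ) :
    Real.cosh (dist z w) = hypA z * hypA w - hypB z * hypB w - hypC z * hypC w := by
  rw [UpperHalfPlane.cosh_dist]
  have hz := z.im_pos.ne'
  have hw := w.im_pos.ne'
  have hd : dist (z : ℂ) (w : ℂ) ^ 2 = (z.re - w.re) ^ 2 + (z.im - w.im) ^ 2 := by
    rw [Complex.dist_eq, Complex.sq_norm, Complex.normSq_apply]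
    simp [UpperHalfPlane.coe_re, UpperHalfPlane.coe_im, sq]
  rw [hd]
  unfold hypA hypB hypC
  field_simp
  ring

lemma hyp_unit (z : ℍ) : hypA z ^ 2 - hypB z ^ 2 - hypC z ^ 2 = 1 := by
  have h := hyp_cosh z z
  rw [dist_self, Real.cosh_zero] at h
  linear_combination -h

lemma hypA_pos (z : ℍ) : 0 < hypA z := by
  unfold hypA
  positivity

lemma alg_mid (a1 b1 c1 a2 b2 c2 a3 b3 c3 c : ℝ)
    (u1 : a1 ^ 2 - b1 ^ 2 - c1 ^ 2 = 1) (u2 : a2 ^ 2 - b2 ^ 2 - c2 ^ 2 = 1)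
    (u3 : a3 ^ 2 - b3 ^ 2 - c3 ^ 2 = 1)
    (e1 : a1 * a3 - b1 * b3 - c1 * c3 = c) (e2 : a3 * a2 - b3 * b2 - c3 * c2 = c)
    (e3 : a1 * a2 - b1 * b2 - c1 * c2 = 2 * c ^ 2 - 1) :
    a1 + a2 = 2 * c * a3 ∧ b1 + b2 = 2 * c * b3 ∧ c1 + c2 = 2 * c * c3 := by
  have hnull : -(a1 + a2 - 2*c*a3) ^ 2 + (b1 + b2 - 2*c*b3) ^ 2 + (c1 + c2 - 2*c*c3) ^ 2 = 0 := by
    linear_combination (-1 : ℝ) * u1 + (-1 : ℝ) * u2 + (-4*c^2) * u3 + (-2 : ℝ) * e3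
      + (4*c) * e1 + (4*c) * e2
  have horth : -(a1 + a2 - 2*c*a3) * a3 + (b1 + b2 - 2*c*b3) * b3 + (c1 + c2 - 2*c*c3) * c3 = 0 := by
    linear_combination (-1 : ℝ) * e1 + (-1 : ℝ) * e2 + (2*c) * u3
  have hkey : (a1 + a2 - 2*c*a3) ^ 2
      + ((b1 + b2 - 2*c*b3) * c3 - (c1 + c2 - 2*c*c3) * b3) ^ 2 = 0 := by
    linear_combination (b3^2 + c3^2) * hnull + (-(a1 + a2 - 2*c*a3)^2) * u3
      + (-((a1 + a2 - 2*c*a3)*a3 + (b1 + b2 - 2*c*b3)*b3 + (c1 + c2 - 2*c*c3)*c3)) * horth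
  have hα : a1 + a2 - 2*c*a3 = 0 := by
    have h : (a1 + a2 - 2*c*a3) ^ 2 = 0 := by
      nlinarith [sq_nonneg ((b1 + b2 - 2*c*b3) * c3 - (c1 + c2 - 2*c*c3) * b3),
        sq_nonneg (a1 + a2 - 2*c*a3)]
    exact (pow_eq_zero_iff two_ne_zero).mp h
  have hsq : (b1 + b2 - 2*c*b3) ^ 2 + (c1 + c2 - 2*c*c3) ^ 2 = 0 := by
    linear_combination hnull + (a1 + a2 - 2*c*a3) * hα
  have hβ : b1 + b2 - 2*c*b3 = 0 := by
    have h : (b1 + b2 - 2*c*b3) ^ 2 = 0 := by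
      nlinarith [sq_nonneg (c1 + c2 - 2*c*c3)]
    exact (pow_eq_zero_iff two_ne_zero).mp h
  have hδ : c1 + c2 - 2*c*c3 = 0 := by
    have h : (c1 + c2 - 2*c*c3) ^ 2 = 0 := by
      nlinarith [sq_nonneg (b1 + b2 - 2*c*b3)]
    exact (pow_eq_zero_iff two_ne_zero).mp h
  refine ⟨by linarith, by linarith, by linarith⟩

lemma median (x x' cx : ℍ) (h1 : dist x cx = dist cx x')
    (h2 : dist cx x' = (1 / 2) * dist x x') (p : ℍ) :
    Real.cosh (dist p x) + Real.cosh (dist p x')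
      = 2 * Real.cosh (dist x cx) * Real.cosh (dist p cx) := by
  have hxx' : dist x x' = 2 * dist x cx := by linarith
  have e3 : Real.cosh (dist x x') = 2 * Real.cosh (dist x cx) ^ 2 - 1 := by
    rw [hxx', Real.cosh_two_mul, Real.cosh_sq]; ring
  have e1 : hypA x * hypA cx - hypB x * hypB cx - hypC x * hypC cx
      = Real.cosh (dist x cx) := (hyp_cosh x cx).symm
  have e2 : hypA cx * hypA x' - hypB cx * hypB x' - hypC cx * hypC x'
      = Real.cosh (dist x cx) := by rw [← hyp_cosh, ← h1]
  have e3' : hypA x * hypA x' - hypB x * hypB x' - hypC x * hypC x'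
      = 2 * Real.cosh (dist x cx) ^ 2 - 1 := by rw [← hyp_cosh, e3]
  obtain ⟨hAe, hBe, hCe⟩ := alg_mid (hypA x) (hypB x) (hypC x) (hypA x') (hypB x') (hypC x')
    (hypA cx) (hypB cx) (hypC cx) (Real.cosh (dist x cx))
    (hyp_unit x) (hyp_unit x') (hyp_unit cx) e1 e2 e3'
  rw [hyp_cosh p x, hyp_cosh p x', hyp_cosh p cx]
  linear_combination hypA p * hAe - hypB p * hBe - hypC p * hCe

/-- In the hyperbolic plane, if `c_x` is the midpoint of `x` and `x'`, `c_y` is the midpoint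
of `y` and `y'`, `dist x' c_y ≤ dist x c_y` and `dist y' c_x ≤ dist y c_x`, then
`dist x' y' ≤ dist x y`. -/
theorem hyperbolic_reflection_pair_nonexpansive
    (x x' y y' cx cy : UpperHalfPlane)
    (hcx1 : dist x cx = dist cx x') (hcx2 : dist cx x' = (1 / 2) * dist x x')
    (hcy1 : dist y cy = dist cy y') (hcy2 : dist cy y' = (1 / 2) * dist y y')
    (h1 : dist x' cy ≤ dist x cy) (h2 : dist y' cx ≤ dist y cx) :
    dist x' y' ≤ dist x y := by
  have hcosh_le : ∀ a b c d : ℍ, dist a b ≤ dist c d →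
      Real.cosh (dist a b) ≤ Real.cosh (dist c d) := by
    intro a b c d h
    rw [Real.cosh_le_cosh, abs_of_nonneg dist_nonneg, abs_of_nonneg dist_nonneg]
    exact h
  have i1 : Real.cosh (dist y' x) + Real.cosh (dist y' x')
      ≤ Real.cosh (dist y x) + Real.cosh (dist y x') := by
    have hle := hcosh_le _ _ _ _ h2
    have hx := Real.cosh_pos (x := dist x cx)
    nlinarith [median x x' cx hcx1 hcx2 y', median x x' cx hcx1 hcx2 y]
  have i2 : Real.cosh (dist x' y) + Real.cosh (dist x' y')
      ≤ Real.cosh (dist x y) + Real.cosh (dist x y') := by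
    have hle := hcosh_le _ _ _ _ h1
    have hy := Real.cosh_pos (x := dist y cy)
    nlinarith [median y y' cy hcy1 hcy2 x', median y y' cy hcy1 hcy2 x]
  have hfin : Real.cosh (dist x' y') ≤ Real.cosh (dist x y) := by
    rw [dist_comm y' x, dist_comm y' x', dist_comm y x, dist_comm y x'] at i1
    linarith
  have h := Real.cosh_le_cosh.mp hfin
  rwa [abs_of_nonneg dist_nonneg, abs_of_nonneg dist_nonneg] at h
end

section
/- Let E = EuclideanSpace ℝ (Fin n) and let A, B be nonempty closed convex subsets of E with A ∩ B ≠ ∅. Let P_A, P_B : E → E be the nearest-point projections onto A and B (P_C z ∈ C and ‖z − P_C z‖ ≤ ‖z − c‖ for all c ∈ C), set R_A = 2P_A − id, R_B = 2P_B − id, and define T : E → E by T z = (z + R_A (R_B z))/2. Given x_0 ∈ E, define x_{m+1} = T x_m. Then the sequence (x_m) converges to some x ∈ E with T x = x (equivalently R_A (R_B x) = x) and P_B x ∈ A ∩ B; moreover, the shadow sequence (P_B x_m) converges to P_B x, which belongs to A ∩ B. -/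
open Filter Topology

open RealInnerProductSpace

lemma AAR_aux_sqle {a b : ℝ} (ha : 0 ≤ a) (hb : 0 ≤ b) (h : a ^ 2 ≤ b ^ 2) : a ≤ b := by
  nlinarith [sq_nonneg (a - b), sq_nonneg (a + b)]

section aux
variable {F : Type*} [NormedAddCommGroup F] [InnerProductSpace ℝ F]

lemma AAR_aux_varineq {C : Set F} (hC : Convex ℝ C) {P : F → F}
    (hmem : ∀ z, P z ∈ C) (hproj : ∀ z, ∀ c ∈ C, ‖z - P z‖ ≤ ‖z - c‖)
    (z : F) : ∀ c ∈ C, ⟪z - P z, c - P z⟫ ≤ 0 := by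
  haveI : Nonempty C := ⟨⟨P z, hmem z⟩⟩
  have h : ‖z - P z‖ = ⨅ w : C, ‖z - (w : F)‖ := by
    refine le_antisymm (le_ciInf fun w => hproj z w w.2) ?_
    have hbdd : BddBelow (Set.range fun w : C => ‖z - (w : F)‖) := by
      refine ⟨0, ?_⟩
      rintro r ⟨w, rfl⟩
      exact norm_nonneg _
    exact ciInf_le hbdd ⟨P z, hmem z⟩
  exact (norm_eq_iInf_iff_real_inner_le_zero hC (hmem z)).mp h

lemma AAR_aux_firm {C : Set F} (hC : Convex ℝ C) {P : F → F}
    (hmem : ∀ z, P z ∈ C) (hproj : ∀ z, ∀ c ∈ C, ‖z - P z‖ ≤ ‖z - c‖)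
    (z w : F) : ‖P z - P w‖ ^ 2 ≤ ⟪z - w, P z - P w⟫ := by
  have h1 := AAR_aux_varineq hC hmem hproj z (P w) (hmem w)
  have h2 := AAR_aux_varineq hC hmem hproj w (P z) (hmem z)
  rw [← real_inner_self_eq_norm_sq]
  simp only [inner_sub_left, inner_sub_right] at h1 h2 ⊢
  linarith [real_inner_comm (P z) (P w)]

lemma AAR_aux_proj_nonexp {C : Set F} (hC : Convex ℝ C) {P : F → F}
    (hmem : ∀ z, P z ∈ C) (hproj : ∀ z, ∀ c ∈ C, ‖z - P z‖ ≤ ‖z - c‖)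
    (z w : F) : ‖P z - P w‖ ≤ ‖z - w‖ := by
  have hf := AAR_aux_firm hC hmem hproj z w
  have hcs := real_inner_le_norm (z - w) (P z - P w)
  nlinarith [norm_nonneg (P z - P w), norm_nonneg (z - w)]

lemma AAR_aux_refl_nonexp {C : Set F} (hC : Convex ℝ C) {P : F → F}
    (hmem : ∀ z, P z ∈ C) (hproj : ∀ z, ∀ c ∈ C, ‖z - P z‖ ≤ ‖z - c‖)
    (z w : F) : ‖((2:ℝ) • P z - z) - ((2:ℝ) • P w - w)‖ ≤ ‖z - w‖ := by
  have hf := AAR_aux_firm hC hmem hproj z w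
  refine AAR_aux_sqle (norm_nonneg _) (norm_nonneg _) ?_
  have e : ((2:ℝ) • P z - z) - ((2:ℝ) • P w - w) = (2:ℝ) • (P z - P w) - (z - w) := by
    module
  rw [e, norm_sub_sq_real, norm_smul, real_inner_smul_left]
  have h2n : ‖(2:ℝ)‖ = 2 := by norm_num
  rw [h2n]
  nlinarith [real_inner_comm (z - w) (P z - P w), norm_nonneg (P z - P w)]

end aux

/-- Convergence of the averaged alternating reflection (AAR) method in Euclidean space:
for nonempty closed convex sets `A`, `B` with `A ∩ B ≠ ∅`, the AAR iterates `x_{m+1} = T x_m`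
with `T z = (z + R_A R_B z)/2` converge to a fixed point `x` of `T`, `P_B x ∈ A ∩ B`, and the
shadow sequence `(P_B x_m)` converges to `P_B x`. -/
theorem AAR_convergence_euclidean {n : ℕ}
    (A B : Set (EuclideanSpace ℝ (Fin n)))
    (hA_ne : A.Nonempty) (hA_cl : IsClosed A) (hA_conv : Convex ℝ A)
    (hB_ne : B.Nonempty) (hB_cl : IsClosed B) (hB_conv : Convex ℝ B)
    (hAB : (A ∩ B).Nonempty)
    (PA PB RA RB T : EuclideanSpace ℝ (Fin n) → EuclideanSpace ℝ (Fin n))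
    (hPA_mem : ∀ z, PA z ∈ A) (hPA_proj : ∀ z, ∀ a ∈ A, ‖z - PA z‖ ≤ ‖z - a‖)
    (hPB_mem : ∀ z, PB z ∈ B) (hPB_proj : ∀ z, ∀ b ∈ B, ‖z - PB z‖ ≤ ‖z - b‖)
    (hRA : ∀ z, RA z = (2 : ℝ) • PA z - z) (hRB : ∀ z, RB z = (2 : ℝ) • PB z - z)
    (hT : ∀ z, T z = (1 / 2 : ℝ) • (z + RA (RB z)))
    (x0 : EuclideanSpace ℝ (Fin n)) (xs : ℕ → EuclideanSpace ℝ (Fin n))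
    (hxs0 : xs 0 = x0) (hxs : ∀ m, xs (m + 1) = T (xs m)) :
    ∃ x : EuclideanSpace ℝ (Fin n),
      Tendsto xs atTop (𝓝 x) ∧ T x = x ∧ RA (RB x) = x ∧ PB x ∈ A ∩ B ∧
        Tendsto (fun m => PB (xs m)) atTop (𝓝 (PB x)) := by
  obtain ⟨y0, hy0A, hy0B⟩ := hAB
  -- projections fix points of the set
  have hPAfix : ∀ z ∈ A, PA z = z := by
    intro z hz
    have h := hPA_proj z z hz
    rw [sub_self, norm_zero] at h
    have := le_antisymm h (norm_nonneg _)
    rw [norm_eq_zero, sub_eq_zero] at this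
    exact this.symm
  have hPBfix : ∀ z ∈ B, PB z = z := by
    intro z hz
    have h := hPB_proj z z hz
    rw [sub_self, norm_zero] at h
    have := le_antisymm h (norm_nonneg _)
    rw [norm_eq_zero, sub_eq_zero] at this
    exact this.symm
  -- y0 is a fixed point of T
  have hRBy0 : RB y0 = y0 := by rw [hRB, hPBfix y0 hy0B]; module
  have hRAy0 : RA y0 = y0 := by rw [hRA, hPAfix y0 hy0A]; module
  have hTy0 : T y0 = y0 := by rw [hT, hRBy0, hRAy0]; module
  -- nonexpansiveness
  have hPA_ne' : ∀ z w, ‖PA z - PA w‖ ≤ ‖z - w‖ :=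
    AAR_aux_proj_nonexp hA_conv hPA_mem hPA_proj
  have hPB_ne' : ∀ z w, ‖PB z - PB w‖ ≤ ‖z - w‖ :=
    AAR_aux_proj_nonexp hB_conv hPB_mem hPB_proj
  have hRA_ne' : ∀ z w, ‖RA z - RA w‖ ≤ ‖z - w‖ := by
    intro z w; rw [hRA z, hRA w]
    exact AAR_aux_refl_nonexp hA_conv hPA_mem hPA_proj z w
  have hRB_ne' : ∀ z w, ‖RB z - RB w‖ ≤ ‖z - w‖ := by
    intro z w; rw [hRB z, hRB w]
    exact AAR_aux_refl_nonexp hB_conv hPB_mem hPB_proj z w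
  have hN_ne : ∀ z w, ‖RA (RB z) - RA (RB w)‖ ≤ ‖z - w‖ :=
    fun z w => (hRA_ne' _ _).trans (hRB_ne' z w)
  -- key firm-nonexpansiveness inequality at fixed points
  have hkey : ∀ y, T y = y → ∀ z,
      ‖T z - y‖ ^ 2 + ‖T z - z‖ ^ 2 ≤ ‖z - y‖ ^ 2 := by
    intro y hy z
    have hNy : RA (RB y) = y := by
      have h1 : (1 / 2 : ℝ) • (y + RA (RB y)) = y := by rw [← hT]; exact hy
      calc RA (RB y) = (2:ℝ) • ((1 / 2 : ℝ) • (y + RA (RB y))) - y := by module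
        _ = y := by rw [h1]; module
    have hvu : ‖RA (RB z) - y‖ ≤ ‖z - y‖ := by
      have := hN_ne z y; rwa [hNy] at this
    have e1 : T z - y = (1 / 2 : ℝ) • ((z - y) + (RA (RB z) - y)) := by
      rw [hT z]; module
    have e2 : T z - z = (1 / 2 : ℝ) • ((RA (RB z) - y) - (z - y)) := by
      rw [hT z]; module
    rw [e1, e2, norm_smul, norm_smul]
    have hpar := parallelogram_law_with_norm ℝ (z - y) (RA (RB z) - y)
    have hns : ‖(RA (RB z) - y) - (z - y)‖ = ‖(z - y) - (RA (RB z) - y)‖ :=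
      norm_sub_rev _ _
    have hhalf : ‖(1 / 2 : ℝ)‖ = 1 / 2 := by norm_num
    rw [hhalf, hns]
    nlinarith [mul_self_le_mul_self (norm_nonneg (RA (RB z) - y)) hvu,
      norm_nonneg (z - y), norm_nonneg (RA (RB z) - y)]
  -- step inequality along the orbit
  have hstep : ∀ m, ‖xs (m + 1) - y0‖ ^ 2 + ‖xs (m + 1) - xs m‖ ^ 2
      ≤ ‖xs m - y0‖ ^ 2 := by
    intro m; rw [hxs m]; exact hkey y0 hTy0 (xs m)
  -- boundedness
  have hbound : ∀ m, ‖xs m - y0‖ ≤ ‖x0 - y0‖ := by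
    intro m
    induction m with
    | zero => rw [hxs0]
    | succ k ih =>
      refine le_trans (AAR_aux_sqle (norm_nonneg _) (norm_nonneg _) ?_) ih
      nlinarith [hstep k, sq_nonneg ‖xs (k + 1) - xs k‖]
  -- asymptotic regularity
  have hD_anti : Antitone fun m => ‖xs m - y0‖ ^ 2 := by
    refine antitone_nat_of_succ_le fun m => ?_
    nlinarith [hstep m, sq_nonneg ‖xs (m + 1) - xs m‖]
  have hD_bdd : BddBelow (Set.range fun m => ‖xs m - y0‖ ^ 2) := by
    refine ⟨0, ?_⟩; rintro r ⟨m, rfl⟩; positivity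
  have hD_lim := tendsto_atTop_ciInf hD_anti hD_bdd
  have hD_lim' : Tendsto (fun m => ‖xs (m + 1) - y0‖ ^ 2) atTop
      (𝓝 (⨅ m, ‖xs m - y0‖ ^ 2)) := hD_lim.comp (tendsto_add_atTop_nat 1)
  have hdiff : Tendsto (fun m => ‖xs m - y0‖ ^ 2 - ‖xs (m + 1) - y0‖ ^ 2) atTop
      (𝓝 0) := by simpa using hD_lim.sub hD_lim'
  have hreg_sq : Tendsto (fun m => ‖xs (m + 1) - xs m‖ ^ 2) atTop (𝓝 0) := by
    refine squeeze_zero (fun m => sq_nonneg _) (fun m => ?_) hdiff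
    nlinarith [hstep m]
  have hreg : Tendsto (fun m => ‖xs (m + 1) - xs m‖) atTop (𝓝 0) := by
    have h := hreg_sq.sqrt
    rw [Real.sqrt_zero] at h
    have he : (fun m => Real.sqrt (‖xs (m + 1) - xs m‖ ^ 2))
        = fun m => ‖xs (m + 1) - xs m‖ :=
      funext fun m => Real.sqrt_sq (norm_nonneg _)
    rwa [he] at h
  -- Bolzano–Weierstrass: convergent subsequence
  have hmem_ball : ∀ m, xs m ∈ Metric.closedBall y0 ‖x0 - y0‖ := by
    intro m; rw [Metric.mem_closedBall, dist_eq_norm]; exact hbound m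
  obtain ⟨x, -, φ, hφ, hφx⟩ :=
    tendsto_subseq_of_bounded Metric.isBounded_closedBall hmem_ball
  -- continuity of the relevant maps
  have hPB_cont : Continuous PB := by
    refine (LipschitzWith.of_dist_le_mul (K := 1) fun z w => ?_).continuous
    rw [dist_eq_norm, dist_eq_norm]
    simpa using hPB_ne' z w
  have hPA_cont : Continuous PA := by
    refine (LipschitzWith.of_dist_le_mul (K := 1) fun z w => ?_).continuous
    rw [dist_eq_norm, dist_eq_norm]
    simpa using hPA_ne' z w
  have hT_cont : Continuous T := by
    have hTe : T = fun z => (1 / 2 : ℝ) •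
        (z + ((2:ℝ) • PA ((2:ℝ) • PB z - z) - ((2:ℝ) • PB z - z))) := by
      funext z; rw [hT z, hRA, hRB]
    rw [hTe]
    have cB : Continuous fun z : EuclideanSpace ℝ (Fin n) => (2:ℝ) • PB z - z :=
      (hPB_cont.const_smul (2:ℝ)).sub continuous_id
    exact ((continuous_id.add
      (((hPA_cont.comp cB).const_smul (2:ℝ)).sub cB)).const_smul (1 / 2 : ℝ))
  -- the subsequential limit is a fixed point
  have h1 : Tendsto (fun k => T (xs (φ k)) - xs (φ k)) atTop (𝓝 (T x - x)) :=
    ((hT_cont.tendsto x).comp hφx).sub hφx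
  have h0 : Tendsto (fun k => T (xs (φ k)) - xs (φ k)) atTop (𝓝 0) := by
    rw [tendsto_zero_iff_norm_tendsto_zero]
    have := hreg.comp hφ.tendsto_atTop
    simpa only [Function.comp_def, ← hxs] using this
  have hfix : T x = x := by
    have := tendsto_nhds_unique h1 h0
    rwa [sub_eq_zero] at this
  -- full convergence via Fejér monotonicity
  have hanti : ∀ m, ‖xs (m + 1) - x‖ ≤ ‖xs m - x‖ := by
    intro m
    have h := hkey x hfix (xs m)
    rw [← hxs m] at h
    refine AAR_aux_sqle (norm_nonneg _) (norm_nonneg _) ?_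
    nlinarith [sq_nonneg ‖xs (m + 1) - xs m‖]
  have hA2 : Antitone fun m => ‖xs m - x‖ := antitone_nat_of_succ_le hanti
  have hA2_bdd : BddBelow (Set.range fun m => ‖xs m - x‖) := by
    refine ⟨0, ?_⟩; rintro r ⟨m, rfl⟩; exact norm_nonneg _
  have hlim := tendsto_atTop_ciInf hA2 hA2_bdd
  have hsub0 : Tendsto (fun k => ‖xs (φ k) - x‖) atTop (𝓝 0) :=
    tendsto_iff_norm_sub_tendsto_zero.mp hφx
  have hinf0 : (⨅ m, ‖xs m - x‖) = 0 :=
    tendsto_nhds_unique (hlim.comp hφ.tendsto_atTop) hsub0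
  have hconv : Tendsto xs atTop (𝓝 x) := by
    rw [tendsto_iff_norm_sub_tendsto_zero]
    rw [hinf0] at hlim
    exact hlim
  -- algebraic consequences of the fixed point equation
  have hNfixx : RA (RB x) = x := by
    have h1 : (1 / 2 : ℝ) • (x + RA (RB x)) = x := by rw [← hT]; exact hfix
    calc RA (RB x) = (2:ℝ) • ((1 / 2 : ℝ) • (x + RA (RB x))) - x := by module
      _ = x := by rw [h1]; module
  have hPABx : PA (RB x) = PB x := by
    have h1 : (2:ℝ) • PA (RB x) - RB x = x := by rw [← hRA]; exact hNfixx
    have h3 : (2:ℝ) • PA (RB x) = x + RB x := sub_eq_iff_eq_add.mp h1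
    have h4 : (2:ℝ) • PA (RB x) = (2:ℝ) • PB x := by rw [h3, hRB x]; module
    exact smul_right_injective _ (two_ne_zero) h4
  have hPBx_mem : PB x ∈ A ∩ B := ⟨hPABx ▸ hPA_mem (RB x), hPB_mem x⟩
  have hshadow : Tendsto (fun m => PB (xs m)) atTop (𝓝 (PB x)) :=
    (hPB_cont.tendsto x).comp hconv
  exact ⟨x, hconv, hfix, hNfixx, hPBx_mem, hshadow⟩
end

section
/- Let A, B ⊆ ℍ be nonempty, closed, geodesically convex subsets of the hyperbolic plane with A ∩ B ≠ ∅. Let P_A, P_B : ℍ → ℍ satisfy: P_A z ∈ A, dist z (P_A z) ≤ dist z a for all a ∈ A, and similarly for P_B and B. Let R_A, R_B : ℍ → ℍ satisfy: P_A z is the midpoint of z and R_A z for every z (dist z (P_A z) = dist (P_A z) (R_A z) = (1/2)·dist z (R_A z)), and similarly for R_B. Let μ : ℍ → ℍ → ℍ be the midpoint map: dist x (μ x y) = dist (μ x y) y = (1/2)·dist x y. Given x_0 ∈ ℍ, define x_{m+1} = μ x_m (R_A (R_B x_m)). Then (x_m) converges to some x ∈ ℍ with R_A (R_B x) = x and P_B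 x ∈ A ∩ B; moreover the shadow sequence (P_B x_m) converges to P_B x ∈ A ∩ B. -/
open Filter Topology Real

noncomputable section
namespace AARaux

local notation "ℍ" => UpperHalfPlane

/-- hyperboloid-model coordinates -/
def X0 (z : ℍ) : ℝ := (z.re ^ 2 + z.im ^ 2 + 1) / (2 * z.im)
def X1 (z : ℍ) : ℝ := z.re / z.im
def X2 (z : ℍ) : ℝ := (z.re ^ 2 + z.im ^ 2 - 1) / (2 * z.im)

/-- Minkowski pairing; equals `cosh (dist z w)`. -/
def inn (z w : ℍ) : ℝ := X0 z * X0 w - X1 z * X1 w - X2 z * X2 w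

lemma im_pos (z : ℍ) : 0 < z.im := z.2
lemma im_ne (z : ℍ) : z.im ≠ 0 := (im_pos z).ne'

lemma inn_self (z : ℍ) : inn z z = 1 := by
  have h := im_ne z
  simp only [inn, X0, X1, X2]
  field_simp
  ring

lemma inn_comm (z w : ℍ) : inn z w = inn w z := by
  simp [inn]; ring

lemma inn_eq_cosh (z w : ℍ) : inn z w = Real.cosh (dist z w) := by
  have hz := im_pos z
  have hw := im_pos w
  have h := UpperHalfPlane.cosh_dist z w
  have hd : dist (z : ℂ) (w : ℂ) ^ 2 = (z.re - w.re) ^ 2 + (z.im - w.im) ^ 2 := by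
    rw [Complex.dist_eq_re_im, sq_sqrt (by positivity)]
    simp [UpperHalfPlane.coe_re, UpperHalfPlane.coe_im]
  rw [h, hd]
  simp only [inn, X0, X1, X2]
  field_simp
  ring

lemma one_le_inn (z w : ℍ) : 1 ≤ inn z w := by
  rw [inn_eq_cosh]; exact Real.one_le_cosh _

lemma inn_pos (z w : ℍ) : 0 < inn z w := lt_of_lt_of_le one_pos (one_le_inn z w)

lemma cosh_dist_eq (z w : ℍ) : Real.cosh (dist z w) = inn z w := (inn_eq_cosh z w).symm

lemma inn_eq_one_iff {z w : ℍ} : inn z w = 1 ↔ z = w := by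
  constructor
  · intro h
    rw [inn_eq_cosh] at h
    have : |dist z w| ≤ |(0:ℝ)| := by
      rw [← Real.cosh_le_cosh, Real.cosh_zero, h]
    have : dist z w = 0 := by
      simpa [abs_of_nonneg dist_nonneg] using this
    exact dist_eq_zero.mp this
  · rintro rfl; exact inn_self z

lemma inn_le_inn_iff {z w u v : ℍ} : inn z w ≤ inn u v ↔ dist z w ≤ dist u v := by
  rw [inn_eq_cosh, inn_eq_cosh, Real.cosh_le_cosh,
    abs_of_nonneg dist_nonneg, abs_of_nonneg dist_nonneg]

/-- orthogonality: a null vector Minkowski-orthogonal to a hyperboloid vector is zero -/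
lemma null_orth {m0 m1 m2 V0 V1 V2 : ℝ} (hm : m0 ^ 2 - m1 ^ 2 - m2 ^ 2 = 1)
    (hV : V0 ^ 2 - V1 ^ 2 - V2 ^ 2 = 0) (ho : V0 * m0 - V1 * m1 - V2 * m2 = 0) :
    V0 = 0 ∧ V1 = 0 ∧ V2 = 0 := by
  have key : V0 ^ 2 + (V1 * m2 - V2 * m1) ^ 2 = 0 := by
    linear_combination (V0*m0 + V1*m1 + V2*m2) * ho - (m0^2 - 1) * hV - (V1^2 + V2^2) * hm
  have h0 : V0 = 0 := by nlinarith [sq_nonneg (V1 * m2 - V2 * m1), sq_nonneg V0]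
  refine ⟨h0, ?_, ?_⟩ <;> nlinarith [sq_nonneg V1, sq_nonneg V2]

/-- the key midpoint relation: if `m` is a metric midpoint of `u v` then
`Φ u + Φ v = 2 ⟨u,m⟩ Φ m` componentwise. -/
lemma midpoint_rel {u v m : ℍ} (h1 : dist u m = dist m v) (h2 : dist m v = (1/2) * dist u v) :
    2 * inn u m * X0 m = X0 u + X0 v ∧
    2 * inn u m * X1 m = X1 u + X1 v ∧
    2 * inn u m * X2 m = X2 u + X2 v := by
  set s := dist m v with hs
  have hum : inn u m = Real.cosh s := by rw [inn_eq_cosh, h1]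
  have hvm : inn m v = Real.cosh s := by rw [inn_eq_cosh]
  have huv : inn u v = 2 * Real.cosh s ^ 2 - 1 := by
    rw [inn_eq_cosh]
    have : dist u v = 2 * s := by rw [h2]; ring
    rw [this, Real.cosh_two_mul, Real.cosh_sq]; ring
  set c := Real.cosh s with hc
  have hmm := inn_self m
  have huu := inn_self u
  have hvv := inn_self v
  have hV : (2*c*X0 m - X0 u - X0 v) ^ 2 - (2*c*X1 m - X1 u - X1 v) ^ 2
      - (2*c*X2 m - X2 u - X2 v) ^ 2 = 0 := by
    have e1 : X0 m * X0 m - X1 m * X1 m - X2 m * X2 m = 1 := by simpa [inn] using hmm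
    have e2 : X0 u * X0 u - X1 u * X1 u - X2 u * X2 u = 1 := by simpa [inn] using huu
    have e3 : X0 v * X0 v - X1 v * X1 v - X2 v * X2 v = 1 := by simpa [inn] using hvv
    have e4 : X0 u * X0 m - X1 u * X1 m - X2 u * X2 m = c := by simpa [inn] using hum
    have e5 : X0 m * X0 v - X1 m * X1 v - X2 m * X2 v = c := by simpa [inn] using hvm
    have e6 : X0 u * X0 v - X1 u * X1 v - X2 u * X2 v = 2*c^2 - 1 := by simpa [inn] using huv
    linear_combination 4*c^2*e1 + e2 + e3 - 4*c*e4 - 4*c*e5 + 2*e6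
  have ho : (2*c*X0 m - X0 u - X0 v) * X0 m - (2*c*X1 m - X1 u - X1 v) * X1 m
      - (2*c*X2 m - X2 u - X2 v) * X2 m = 0 := by
    have e1 : X0 m * X0 m - X1 m * X1 m - X2 m * X2 m = 1 := by simpa [inn] using hmm
    have e4 : X0 u * X0 m - X1 u * X1 m - X2 u * X2 m = c := by simpa [inn] using hum
    have e5 : X0 m * X0 v - X1 m * X1 v - X2 m * X2 v = c := by simpa [inn] using hvm
    linear_combination 2*c*e1 - e4 - e5
  have e1 : X0 m * X0 m - X1 m * X1 m - X2 m * X2 m = 1 := by simpa [inn] using hmm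
  obtain ⟨g0, g1, g2⟩ := null_orth (by linear_combination e1) hV ho
  rw [hum]
  refine ⟨by linarith, by linarith, by linarith⟩


lemma one_le_X0 (z : ℍ) : 1 ≤ X0 z := by
  have h := im_pos z
  rw [X0, le_div_iff₀ (by positivity)]
  nlinarith [sq_nonneg (z.im - 1), sq_nonneg z.re]

/-- median identity: for a midpoint `m` of `u v` and any `q`,
`⟨q,u⟩ + ⟨q,v⟩ = 2 ⟨u,m⟩ ⟨q,m⟩`. -/
lemma median {u v m : ℍ} (h1 : dist u m = dist m v) (h2 : dist m v = (1/2) * dist u v)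
    (q : ℍ) : inn q u + inn q v = 2 * inn u m * inn q m := by
  obtain ⟨e0, e1, e2⟩ := midpoint_rel h1 h2
  set s := inn u m with hs
  simp only [inn]
  linear_combination - X0 q * e0 + X1 q * e1 + X2 q * e2

lemma midpoint_unique {u v m m' : ℍ}
    (h1 : dist u m = dist m v) (h2 : dist m v = (1/2) * dist u v)
    (h1' : dist v m' = dist m' u) (h2' : dist m' u = (1/2) * dist v u) : m = m' := by
  obtain ⟨e0, e1, e2⟩ := midpoint_rel h1 h2
  obtain ⟨f0, f1, f2⟩ := midpoint_rel h1' h2'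
  have hc : inn u m = inn v m' := by
    rw [inn_eq_cosh, inn_eq_cosh, h1, h1', h2, h2', dist_comm u v]
  have hcpos : (0:ℝ) < 2 * inn u m := by
    have := inn_pos u m; linarith
  have g0 : X0 m = X0 m' := by
    apply mul_left_cancel₀ hcpos.ne'
    rw [e0, hc, f0]; ring
  have g1 : X1 m = X1 m' := by
    apply mul_left_cancel₀ hcpos.ne'
    rw [e1, hc, f1]; ring
  have g2 : X2 m = X2 m' := by
    apply mul_left_cancel₀ hcpos.ne'
    rw [e2, hc, f2]; ring
  apply inn_eq_one_iff.mp
  rw [inn, g0, g1, g2]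
  have := inn_self m'
  simpa [inn] using this

/-- constructor from hyperboloid coordinates -/
def ofX (a b c : ℝ) (h : c < a) : ℍ :=
  UpperHalfPlane.mk ⟨b / (a - c), 1 / (a - c)⟩ (by
    have : (0:ℝ) < a - c := sub_pos.mpr h
    simp only [Complex.ofReal_im]
    positivity)

lemma ofX_re (a b c : ℝ) (h : c < a) : (ofX a b c h).re = b / (a - c) := rfl
lemma ofX_im (a b c : ℝ) (h : c < a) : (ofX a b c h).im = 1 / (a - c) := rfl

lemma X_ofX (a b c : ℝ) (h : c < a) (hq : a ^ 2 - b ^ 2 - c ^ 2 = 1) :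
    X0 (ofX a b c h) = a ∧ X1 (ofX a b c h) = b ∧ X2 (ofX a b c h) = c := by
  have hac : (0:ℝ) < a - c := sub_pos.mpr h
  refine ⟨?_, ?_, ?_⟩
  · rw [X0, ofX_re, ofX_im]
    rw [div_eq_iff (by positivity)]
    field_simp
    linear_combination (-1) * hq
  · rw [X1, ofX_re, ofX_im]
    field_simp
  · rw [X2, ofX_re, ofX_im]
    rw [div_eq_iff (by positivity)]
    field_simp
    linear_combination (-1) * hq

/-- sheet lemma: a hyperboloid vector pairing positively with a point satisfies `c < a`. -/
lemma sheet {a b c : ℝ} (hq : a ^ 2 - b ^ 2 - c ^ 2 = 1) (m : ℍ)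
    (hp : 0 < a * X0 m - b * X1 m - c * X2 m) : c < a := by
  have hm : X0 m ^ 2 - X1 m ^ 2 - X2 m ^ 2 = 1 := by
    have := inn_self m; simp only [inn] at this; linear_combination this
  have hm0 : 1 ≤ X0 m := one_le_X0 m
  have ha : 0 < a := by
    by_contra hle
    push_neg at hle
    nlinarith [sq_nonneg (b * X2 m - c * X1 m), sq_nonneg (b * X1 m + c * X2 m),
      mul_nonneg (neg_nonneg.mpr hle) (le_trans zero_le_one hm0)]
  nlinarith [sq_nonneg b]

lemma dist_eq_of_inn {z w : ℍ} {t : ℝ} (ht : 0 ≤ t) (h : inn z w = Real.cosh t) :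
    dist z w = t := by
  rw [inn_eq_cosh] at h
  have h1 : |dist z w| ≤ |t| := Real.cosh_le_cosh.mp h.le
  have h2 : |t| ≤ |dist z w| := Real.cosh_le_cosh.mp h.ge
  have := le_antisymm h1 h2
  rwa [abs_of_nonneg dist_nonneg, abs_of_nonneg ht] at this

/-- hyperbolic Pythagoras inequality: if `P` is a nearest point of the geodesically
convex set `C` to `z`, and `Q ∈ C`, then `cosh d(z,P) · cosh d(P,Q) ≤ cosh d(z,Q)`. -/
lemma pythagoras {C : Set ℍ}
    (hC : ∀ u ∈ C, ∀ v ∈ C, ∀ z : ℍ, dist u z + dist z v = dist u v → z ∈ C)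
    {z P Q : ℍ} (hP : P ∈ C) (hQ : Q ∈ C) (hmin : ∀ c ∈ C, dist z P ≤ dist z c) :
    inn z P * inn P Q ≤ inn z Q := by
  rcases eq_or_ne P Q with rfl | hne
  · rw [inn_self, mul_one]
  set L := dist P Q with hLdef
  have hL : 0 < L := dist_pos.mpr hne
  have hsL : 0 < Real.sinh L := Real.sinh_pos_iff.mpr hL
  set A := inn z P with hA
  set B := (inn z Q - Real.cosh L * A) / Real.sinh L with hB
  have hzQ : inn z Q = A * Real.cosh L + B * Real.sinh L := by
    rw [hB]; field_simp; ring
  have hA1 : 1 ≤ A := one_le_inn z P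
  have hPQ : inn P Q = Real.cosh L := by rw [inn_eq_cosh]
  have hc2 : ∀ x : ℝ, Real.cosh x ^ 2 = Real.sinh x ^ 2 + 1 := Real.cosh_sq
  -- the key variational claim
  have claim : ∀ t : ℝ, 0 < t → t ≤ L → 0 ≤ A * (Real.cosh t - 1) + B * Real.sinh t := by
    intro t ht htL
    set α := Real.sinh (L - t) / Real.sinh L with hα
    set β := Real.sinh t / Real.sinh L with hβ
    have hs2 : Real.sinh (L - t) + Real.sinh t * Real.cosh L
        = Real.sinh L * Real.cosh t := by
      rw [Real.sinh_sub]; ring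
    have hs3 : Real.sinh (L - t) * Real.cosh L + Real.sinh t
        = Real.sinh L * Real.cosh (L - t) := by
      rw [Real.sinh_sub, Real.cosh_sub]
      linear_combination (- Real.sinh t) * hc2 L
    have hαβ : α + β * Real.cosh L = Real.cosh t := by
      rw [hα, hβ]; field_simp; linear_combination hs2
    have hid' : Real.sinh (L - t) ^ 2 + Real.sinh t ^ 2
        + 2 * Real.sinh (L - t) * Real.sinh t * Real.cosh L = Real.sinh L ^ 2 := by
      rw [Real.sinh_sub]
      linear_combination Real.sinh L ^ 2 * hc2 t - Real.sinh t ^ 2 * hc2 L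
    have hαβ2 : α * Real.cosh L + β = Real.cosh (L - t) := by
      rw [hα, hβ]; field_simp; linear_combination hs3
    have hβs : β * Real.sinh L = Real.sinh t := by
      rw [hβ]; field_simp
    have hid : α ^ 2 + β ^ 2 + 2 * α * β * Real.cosh L = 1 := by
      rw [hα, hβ]
      field_simp
      linear_combination hid'
    have e1 : X0 P * X0 P - X1 P * X1 P - X2 P * X2 P = 1 := by
      simpa [inn] using inn_self P
    have e2 : X0 Q * X0 Q - X1 Q * X1 Q - X2 Q * X2 Q = 1 := by
      simpa [inn] using inn_self Q
    have e3 : X0 P * X0 Q - X1 P * X1 Q - X2 P * X2 Q = Real.cosh L := by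
      simpa [inn] using hPQ
    have hquad : (α * X0 P + β * X0 Q) ^ 2 - (α * X1 P + β * X1 Q) ^ 2
        - (α * X2 P + β * X2 Q) ^ 2 = 1 := by
      linear_combination α ^ 2 * e1 + β ^ 2 * e2 + 2 * α * β * e3 + hid
    -- pairing with P is cosh t > 0
    have hpair : (α * X0 P + β * X0 Q) * X0 P - (α * X1 P + β * X1 Q) * X1 P
        - (α * X2 P + β * X2 Q) * X2 P = Real.cosh t := by
      linear_combination α * e1 + β * e3 + hαβ
    have hsheet : (α * X2 P + β * X2 Q) < (α * X0 P + β * X0 Q) := by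
      refine sheet hquad P ?_
      have : (α * X0 P + β * X0 Q) * X0 P - (α * X1 P + β * X1 Q) * X1 P
          - (α * X2 P + β * X2 Q) * X2 P = Real.cosh t := hpair
      rw [this]
      positivity
    set γ := ofX _ _ _ hsheet with hγ
    obtain ⟨g0, g1, g2⟩ := X_ofX _ _ _ hsheet hquad
    -- dist P γ = t
    have hPγ : inn P γ = Real.cosh t := by
      rw [inn, g0, g1, g2]
      linear_combination hpair
    have hdPγ : dist P γ = t := by
      rw [dist_comm]
      exact dist_eq_of_inn ht.le (by rw [inn_comm]; exact hPγ)
    -- dist γ Q = L - t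
    have hγQ : inn γ Q = Real.cosh (L - t) := by
      rw [inn, g0, g1, g2]
      linear_combination α * e3 + β * e2 + hαβ2
    have hdγQ : dist γ Q = L - t := dist_eq_of_inn (by linarith) hγQ
    -- γ ∈ C
    have hγC : γ ∈ C := by
      refine hC P hP Q hQ γ ?_
      rw [hdPγ, hdγQ]; ring
    -- minimality
    have hmin' : inn z P ≤ inn z γ := inn_le_inn_iff.mpr (hmin γ hγC)
    have hAe : X0 z * X0 P - X1 z * X1 P - X2 z * X2 P = A := by
      rw [hA]; simp [inn]
    have hQe : X0 z * X0 Q - X1 z * X1 Q - X2 z * X2 Q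
        = A * Real.cosh L + B * Real.sinh L := by
      have h' := hzQ; simp only [inn] at h'; linarith
    have hzγ : inn z γ = A * Real.cosh t + B * Real.sinh t := by
      rw [inn, g0, g1, g2]
      linear_combination α * hAe + β * hQe + A * hαβ + B * hβs
    rw [hzγ] at hmin'
    rw [hA] at hmin'
    linarith
  -- from the claim, B ≥ 0
  have hB0 : 0 ≤ B := by
    by_contra hBneg
    push_neg at hBneg
    have hApos : 0 < A := lt_of_lt_of_le one_pos hA1
    set s0 := Real.arsinh (-B / (2 * A)) with hs0
    have hs0pos : 0 < s0 := Real.arsinh_pos_iff.mpr (div_pos (by linarith) (by linarith))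
    set t := min L (2 * s0) with htdef
    have htpos : 0 < t := lt_min hL (by positivity)
    have htL : t ≤ L := min_le_left _ _
    have hc := claim t htpos htL
    have ht2 : (2:ℝ) * (t / 2) = t := by ring
    have hcosh : Real.cosh t - 1 = 2 * Real.sinh (t / 2) ^ 2 := by
      have h' := Real.cosh_two_mul (t / 2)
      rw [ht2] at h'
      rw [h', hc2]
      ring
    have hsinh : Real.sinh t = 2 * Real.sinh (t / 2) * Real.cosh (t / 2) := by
      have h' := Real.sinh_two_mul (t / 2)
      rw [ht2] at h'
      rw [h']
    have hshp : 0 < Real.sinh (t / 2) := Real.sinh_pos_iff.mpr (by linarith)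
    have hfac : 0 ≤ A * Real.sinh (t / 2) + B * Real.cosh (t / 2) := by
      rw [hcosh, hsinh] at hc
      nlinarith [hc, hshp]
    have hle1 : Real.sinh (t / 2) ≤ -B / (2 * A) := by
      have h5 : t / 2 ≤ s0 := by
        have : t ≤ 2 * s0 := min_le_right _ _
        linarith
      calc Real.sinh (t / 2) ≤ Real.sinh s0 := Real.sinh_le_sinh.mpr h5
        _ = -B / (2 * A) := Real.sinh_arsinh _
    have hch1 : 1 ≤ Real.cosh (t / 2) := Real.one_le_cosh _
    have h3 : A * Real.sinh (t / 2) ≤ -B / 2 := by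
      calc A * Real.sinh (t / 2) ≤ A * (-B / (2 * A)) :=
            mul_le_mul_of_nonneg_left hle1 hApos.le
        _ = -B / 2 := by field_simp
    have h4 : B * Real.cosh (t / 2) ≤ B := by nlinarith [hch1]
    linarith
  rw [hPQ, hzQ]
  nlinarith [mul_nonneg hB0 hsL.le]

/-- reflections across geodesically convex sets in the hyperbolic plane are nonexpansive -/
lemma reflection_nonexpansive {C : Set ℍ}
    (hC : ∀ u ∈ C, ∀ v ∈ C, ∀ z : ℍ, dist u z + dist z v = dist u v → z ∈ C)
    (P R : ℍ → ℍ) (hmem : ∀ z, P z ∈ C) (hproj : ∀ z, ∀ c ∈ C, dist z (P z) ≤ dist z c)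
    (h1 : ∀ z, dist z (P z) = dist (P z) (R z))
    (h2 : ∀ z, dist (P z) (R z) = (1 / 2) * dist z (R z)) :
    ∀ z w, dist (R z) (R w) ≤ dist z w := by
  intro z w
  obtain ⟨e0, e1, e2⟩ := midpoint_rel (h1 z) (h2 z)
  obtain ⟨f0, f1, f2⟩ := midpoint_rel (h1 w) (h2 w)
  set s := inn z (P z) with hs
  set t := inn w (P w) with ht
  have key : inn (R z) (R w) = 4 * s * t * inn (P z) (P w) - 2 * s * inn (P z) w
      - 2 * t * inn z (P w) + inn z w := by
    simp only [inn]
    linear_combination (- X0 (R w)) * e0 - (2*s*X0 (P z) - X0 z) * f0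
      + X1 (R w) * e1 + (2*s*X1 (P z) - X1 z) * f1
      + X2 (R w) * e2 + (2*s*X2 (P z) - X2 z) * f2
  have p1 : s * inn (P z) (P w) ≤ inn z (P w) :=
    pythagoras hC (hmem z) (hmem w) (hproj z)
  have p2 : t * inn (P w) (P z) ≤ inn w (P z) :=
    pythagoras hC (hmem w) (hmem z) (hproj w)
  have hs1 : 1 ≤ s := one_le_inn _ _
  have ht1 : 1 ≤ t := one_le_inn _ _
  have hcomm1 : inn (P z) w = inn w (P z) := inn_comm _ _
  have hcomm2 : inn (P w) (P z) = inn (P z) (P w) := inn_comm _ _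
  have hfin : inn (R z) (R w) ≤ inn z w := by
    have q1 : 2 * t * (s * inn (P z) (P w)) ≤ 2 * t * inn z (P w) :=
      mul_le_mul_of_nonneg_left p1 (by linarith)
    have q2 : 2 * s * (t * inn (P w) (P z)) ≤ 2 * s * inn w (P z) :=
      mul_le_mul_of_nonneg_left p2 (by linarith)
    rw [hcomm2] at q2
    rw [key, hcomm1]
    nlinarith [q1, q2]
  exact inn_le_inn_iff.mp hfin

lemma sinh_nonneg' {x : ℝ} (hx : 0 ≤ x) : 0 ≤ Real.sinh x := by
  rw [← Real.sinh_zero]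
  exact Real.sinh_le_sinh.mpr hx

lemma dist_log_eq {z w : ℍ} :
    dist z w = Real.log (inn z w + Real.sqrt (inn z w ^ 2 - 1)) := by
  rw [inn_eq_cosh]
  have hd : (0:ℝ) ≤ dist z w := dist_nonneg
  have hsq : Real.sqrt (Real.cosh (dist z w) ^ 2 - 1) = Real.sinh (dist z w) := by
    rw [← Real.sinh_sq]
    exact Real.sqrt_sq (sinh_nonneg' hd)
  rw [hsq, Real.cosh_add_sinh, Real.log_exp]

/-- if the `inn` pairings tend to 1, distances tend to 0 -/
lemma tendsto_dist_zero {u v : ℕ → ℍ}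
    (h : Tendsto (fun m => inn (u m) (v m)) atTop (𝓝 1)) :
    Tendsto (fun m => dist (u m) (v m)) atTop (𝓝 0) := by
  have hfun : (fun m => dist (u m) (v m))
      = fun m => Real.log (inn (u m) (v m) + Real.sqrt (inn (u m) (v m) ^ 2 - 1)) :=
    funext fun m => dist_log_eq
  rw [hfun]
  have h1 : Tendsto (fun m => inn (u m) (v m) ^ 2 - 1) atTop (𝓝 0) := by
    have := (h.mul h).sub (tendsto_const_nhds (x := (1:ℝ)))
    simpa [sq] using this
  have h2 : Tendsto (fun m => Real.sqrt (inn (u m) (v m) ^ 2 - 1)) atTop (𝓝 0) := by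
    have := (Real.continuous_sqrt.tendsto 0).comp h1
    simpa [Function.comp_def] using this
  have h3 : Tendsto (fun m => inn (u m) (v m) + Real.sqrt (inn (u m) (v m) ^ 2 - 1))
      atTop (𝓝 1) := by
    have := h.add h2
    simpa using this
  have h4 := ((Real.continuousAt_log (by norm_num : (1:ℝ) ≠ 0)).tendsto).comp h3
  simpa [Function.comp_def] using h4

end AARaux

open AARaux

/-- Convergence of the averaged alternating reflection (AAR) method in the hyperbolic plane
(modeled by the upper half-plane with its hyperbolic metric): for nonempty closed
geodesically convex sets `A`, `B` with `A ∩ B ≠ ∅`, the AAR iterates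
`x_{m+1} = midpoint of x_m and R_A R_B x_m` converge to a fixed point `x` of `R_A R_B`,
`P_B x ∈ A ∩ B`, and the shadow sequence `(P_B x_m)` converges to `P_B x`. -/
theorem AAR_convergence_hyperbolic
    (A B : Set UpperHalfPlane)
    (hA_ne : A.Nonempty) (hA_cl : IsClosed A)
    (hA_conv : ∀ u ∈ A, ∀ v ∈ A, ∀ z : UpperHalfPlane,
      dist u z + dist z v = dist u v → z ∈ A)
    (hB_ne : B.Nonempty) (hB_cl : IsClosed B)
    (hB_conv : ∀ u ∈ B, ∀ v ∈ B, ∀ z : UpperHalfPlane,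
      dist u z + dist z v = dist u v → z ∈ B)
    (hAB : (A ∩ B).Nonempty)
    (PA PB RA RB : UpperHalfPlane → UpperHalfPlane)
    (hPA_mem : ∀ z, PA z ∈ A) (hPA_proj : ∀ z, ∀ a ∈ A, dist z (PA z) ≤ dist z a)
    (hPB_mem : ∀ z, PB z ∈ B) (hPB_proj : ∀ z, ∀ b ∈ B, dist z (PB z) ≤ dist z b)
    (hRA1 : ∀ z, dist z (PA z) = dist (PA z) (RA z))
    (hRA2 : ∀ z, dist (PA z) (RA z) = (1 / 2) * dist z (RA z))
    (hRB1 : ∀ z, dist z (PB z) = dist (PB z) (RB z))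
    (hRB2 : ∀ z, dist (PB z) (RB z) = (1 / 2) * dist z (RB z))
    (μ : UpperHalfPlane → UpperHalfPlane → UpperHalfPlane)
    (hμ1 : ∀ u v, dist u (μ u v) = dist (μ u v) v)
    (hμ2 : ∀ u v, dist (μ u v) v = (1 / 2) * dist u v)
    (x0 : UpperHalfPlane) (xs : ℕ → UpperHalfPlane)
    (hxs0 : xs 0 = x0) (hxs : ∀ m, xs (m + 1) = μ (xs m) (RA (RB (xs m)))) :
    ∃ x : UpperHalfPlane,
      Tendsto xs atTop (𝓝 x) ∧ RA (RB x) = x ∧ PB x ∈ A ∩ B ∧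
        Tendsto (fun m => PB (xs m)) atTop (𝓝 (PB x)) := by
  classical
  obtain ⟨p, hpA, hpB⟩ := hAB
  -- p is fixed by everything
  have hPBp : PB p = p := by
    have h0 : dist p (PB p) ≤ 0 := by simpa using hPB_proj p p hpB
    exact (dist_eq_zero.mp (le_antisymm h0 dist_nonneg)).symm
  have hRBp : RB p = p := by
    have h1 := hRB1 p
    rw [hPBp] at h1
    have h0 : dist p (RB p) = 0 := by simpa using h1.symm
    exact (dist_eq_zero.mp h0).symm
  have hPAp : PA p = p := by
    have h0 : dist p (PA p) ≤ 0 := by simpa using hPA_proj p p hpA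
    exact (dist_eq_zero.mp (le_antisymm h0 dist_nonneg)).symm
  have hRAp : RA p = p := by
    have h1 := hRA1 p
    rw [hPAp] at h1
    have h0 : dist p (RA p) = 0 := by simpa using h1.symm
    exact (dist_eq_zero.mp h0).symm
  -- nonexpansiveness
  have hRAne := reflection_nonexpansive hA_conv PA RA hPA_mem hPA_proj hRA1 hRA2
  have hRBne := reflection_nonexpansive hB_conv PB RB hPB_mem hPB_proj hRB1 hRB2
  have hSne : ∀ u v, dist (RA (RB u)) (RA (RB v)) ≤ dist u v :=
    fun u v => le_trans (hRAne _ _) (hRBne u v)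
  have hSp : RA (RB p) = p := by rw [hRBp, hRAp]
  -- midpoint facts for the iterates
  have hmid1 : ∀ m, dist (xs m) (xs (m + 1)) = dist (xs (m + 1)) (RA (RB (xs m))) := by
    intro m
    have h1 := hμ1 (xs m) (RA (RB (xs m)))
    rwa [← hxs m] at h1
  have hmid2 : ∀ m, dist (xs (m + 1)) (RA (RB (xs m)))
      = (1 / 2) * dist (xs m) (RA (RB (xs m))) := by
    intro m
    have h2 := hμ2 (xs m) (RA (RB (xs m)))
    rwa [← hxs m] at h2
  -- Fejér-type step
  have fejer : ∀ q : UpperHalfPlane, RA (RB q) = q → ∀ m,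
      inn q (xs (m + 1)) * inn (xs m) (xs (m + 1)) ≤ inn q (xs m) ∧
      inn q (xs (m + 1)) ≤ inn q (xs m) := by
    intro q hq m
    have hmed := median (hmid1 m) (hmid2 m) q
    have hle : inn q (RA (RB (xs m))) ≤ inn q (xs m) := by
      apply inn_le_inn_iff.mpr
      calc dist q (RA (RB (xs m))) = dist (RA (RB q)) (RA (RB (xs m))) := by rw [hq]
        _ ≤ dist q (xs m) := hSne _ _
    have h1' : 1 ≤ inn (xs m) (xs (m + 1)) := one_le_inn _ _
    have h2' : 0 < inn q (xs (m + 1)) := inn_pos _ _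
    constructor
    · nlinarith [hmed, hle]
    · nlinarith [hmed, hle, h1', h2']
  -- the monotone quantity
  set a : ℕ → ℝ := fun m => inn p (xs m) with ha_def
  have ha_anti : Antitone a := antitone_nat_of_succ_le (fun m => (fejer p hSp m).2)
  have ha_bdd : BddBelow (Set.range a) := ⟨1, by rintro _ ⟨m, rfl⟩; exact one_le_inn _ _⟩
  have ha_tend : Tendsto a atTop (𝓝 (⨅ m, a m)) := tendsto_atTop_ciInf ha_anti ha_bdd
  set l := (⨅ m, a m : ℝ) with hl_def
  have hl1 : 1 ≤ l := le_ciInf (fun m => one_le_inn _ _)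
  have hl0 : l ≠ 0 := by linarith
  -- the successive pairings tend to 1
  have ha_succ : Tendsto (fun m => a (m + 1)) atTop (𝓝 l) :=
    ha_tend.comp (tendsto_add_atTop_nat 1)
  have hratio : Tendsto (fun m => a m / a (m + 1)) atTop (𝓝 1) := by
    have := ha_tend.div ha_succ hl0
    simpa [div_self hl0, Pi.div_def] using this
  have hh_le : ∀ m, inn (xs m) (xs (m + 1)) ≤ a m / a (m + 1) := by
    intro m
    have hpos : 0 < a (m + 1) := inn_pos _ _
    rw [le_div_iff₀ hpos]
    have := (fejer p hSp m).1
    nlinarith [this]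
  have hhto : Tendsto (fun m => inn (xs m) (xs (m + 1))) atTop (𝓝 1) :=
    tendsto_of_tendsto_of_tendsto_of_le_of_le tendsto_const_nhds hratio
      (fun m => one_le_inn _ _) hh_le
  have hdist_succ : Tendsto (fun m => dist (xs m) (xs (m + 1))) atTop (𝓝 0) :=
    tendsto_dist_zero hhto
  -- asymptotic regularity
  have hwd : ∀ m, dist (xs m) (RA (RB (xs m))) = 2 * dist (xs m) (xs (m + 1)) := by
    intro m
    have h1 := hmid1 m
    have h2 := hmid2 m
    linarith
  have hreg : Tendsto (fun m => dist (xs m) (RA (RB (xs m)))) atTop (𝓝 0) := by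
    have := hdist_succ.const_mul 2
    simp only [mul_zero] at this
    simpa [hwd] using this
  -- boundedness, cluster point
  have hbd : ∀ m, xs m ∈ Metric.closedBall p (dist p (xs 0)) := by
    intro m
    rw [Metric.mem_closedBall, dist_comm]
    exact inn_le_inn_iff.mp (ha_anti (Nat.zero_le m))
  obtain ⟨x, hx_in, φ, hφ, hxφ⟩ :=
    (isCompact_closedBall p (dist p (xs 0))).tendsto_subseq hbd
  have hsub0 : Tendsto (fun k => dist x (xs (φ k))) atTop (𝓝 0) := by
    have := (tendsto_iff_dist_tendsto_zero).mp hxφ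
    simpa [Function.comp, dist_comm] using this
  -- the cluster point is a fixed point
  have hfix : RA (RB x) = x := by
    have hd : ∀ k, dist x (RA (RB x)) ≤
        2 * dist x (xs (φ k)) + dist (xs (φ k)) (RA (RB (xs (φ k)))) := by
      intro k
      have t1 : dist x (RA (RB x)) ≤ dist x (xs (φ k)) + dist (xs (φ k)) (RA (RB x)) :=
        dist_triangle _ _ _
      have t2 : dist (xs (φ k)) (RA (RB x)) ≤
          dist (xs (φ k)) (RA (RB (xs (φ k)))) + dist (RA (RB (xs (φ k)))) (RA (RB x)) :=
        dist_triangle _ _ _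
      have t3 : dist (RA (RB (xs (φ k)))) (RA (RB x)) ≤ dist (xs (φ k)) x := hSne _ _
      have t4 : dist (xs (φ k)) x = dist x (xs (φ k)) := dist_comm _ _
      linarith
    have hwto : Tendsto (fun k => dist (xs (φ k)) (RA (RB (xs (φ k))))) atTop (𝓝 0) := by
      have := hreg.comp hφ.tendsto_atTop
      simpa [Function.comp_def] using this
    have hlim : Tendsto (fun k => 2 * dist x (xs (φ k))
        + dist (xs (φ k)) (RA (RB (xs (φ k))))) atTop (𝓝 0) := by
      have := (hsub0.const_mul 2).add hwto
      simpa using this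
    have h0 : dist x (RA (RB x)) ≤ 0 := ge_of_tendsto hlim (Filter.Eventually.of_forall hd)
    exact (dist_eq_zero.mp (le_antisymm h0 dist_nonneg)).symm
  -- full convergence to x
  have hinn_anti : Antitone (fun m => inn x (xs m)) :=
    antitone_nat_of_succ_le (fun k => (fejer x hfix k).2)
  have hd_anti : Antitone (fun m => dist x (xs m)) := by
    intro m n hmn
    exact inn_le_inn_iff.mp (hinn_anti hmn)
  have hto0 : Tendsto (fun m => dist x (xs m)) atTop (𝓝 0) := by
    have hbdd : BddBelow (Set.range fun m => dist x (xs m)) :=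
      ⟨0, by rintro _ ⟨m, rfl⟩; exact dist_nonneg⟩
    have h := tendsto_atTop_ciInf hd_anti hbdd
    have hsub := h.comp hφ.tendsto_atTop
    have h0 : (⨅ m, dist x (xs m)) = 0 := by
      refine tendsto_nhds_unique ?_ hsub0
      simpa [Function.comp_def] using hsub
    rwa [h0] at h
  have hxs_to : Tendsto xs atTop (𝓝 x) := by
    rw [tendsto_iff_dist_tendsto_zero]
    simpa [dist_comm] using hto0
  -- PB x ∈ A ∩ B
  have hPBAB : PB x ∈ A ∩ B := by
    rcases eq_or_ne (RB x) x with hv | hv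
    · have hPBx : PB x = x := by
        have h2 := hRB2 x
        rw [hv] at h2
        simp only [dist_self, mul_zero] at h2
        exact dist_eq_zero.mp (by simpa using h2)
      have hRAx : RA x = x := by rw [hv] at hfix; exact hfix
      have hPAx : PA x = x := by
        have h2 := hRA2 x
        rw [hRAx] at h2
        simp only [dist_self, mul_zero] at h2
        exact dist_eq_zero.mp (by simpa using h2)
      constructor
      · rw [hPBx, ← hPAx]; exact hPA_mem x
      · exact hPB_mem x
    · have h1' : dist (RB x) (PA (RB x)) = dist (PA (RB x)) x := by
        have := hRA1 (RB x)
        rwa [hfix] at this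
      have h2' : dist (PA (RB x)) x = (1 / 2) * dist (RB x) x := by
        have := hRA2 (RB x)
        rwa [hfix] at this
      have hmu : PB x = PA (RB x) :=
        midpoint_unique (hRB1 x) (hRB2 x) h1' h2'
      exact ⟨by rw [hmu]; exact hPA_mem _, hPB_mem x⟩
  -- shadow sequence
  have hshadow : Tendsto (fun m => PB (xs m)) atTop (𝓝 (PB x)) := by
    set D := dist x (PB x) with hD
    have hDnn : 0 ≤ D := dist_nonneg
    have hupper : ∀ m, inn (PB (xs m)) (PB x) ≤
        inn (xs m) (PB x) / Real.cosh (max 0 (D - dist x (xs m))) := by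
      intro m
      have hpy : inn (xs m) (PB (xs m)) * inn (PB (xs m)) (PB x) ≤ inn (xs m) (PB x) :=
        pythagoras hB_conv (hPB_mem (xs m)) (hPB_mem x)
          (fun c hc => hPB_proj (xs m) c hc)
      have hgle : Real.cosh (max 0 (D - dist x (xs m))) ≤ inn (xs m) (PB (xs m)) := by
        rw [inn_eq_cosh]
        rw [Real.cosh_le_cosh]
        have hb1 : D ≤ dist x (PB (xs m)) := hPB_proj x _ (hPB_mem (xs m))
        have hb2 : dist x (PB (xs m)) ≤ dist x (xs m) + dist (xs m) (PB (xs m)) :=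
          dist_triangle _ _ _
        rw [abs_of_nonneg (le_max_left _ _), abs_of_nonneg dist_nonneg]
        refine max_le dist_nonneg (by linarith)
      have hcpos : 0 < Real.cosh (max 0 (D - dist x (xs m))) :=
        lt_of_lt_of_le one_pos (Real.one_le_cosh _)
      rw [le_div_iff₀ hcpos]
      calc inn (PB (xs m)) (PB x) * Real.cosh (max 0 (D - dist x (xs m)))
          ≤ inn (PB (xs m)) (PB x) * inn (xs m) (PB (xs m)) := by
            apply mul_le_mul_of_nonneg_left hgle (inn_pos _ _).le
        _ ≤ inn (xs m) (PB x) := by nlinarith [hpy]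
    have hnum : Tendsto (fun m => inn (xs m) (PB x)) atTop (𝓝 (Real.cosh D)) := by
      have hdto : Tendsto (fun m => dist (xs m) (PB x)) atTop (𝓝 D) := by
        have := hxs_to.dist (tendsto_const_nhds (x := PB x))
        simpa [hD] using this
      have := (Real.continuous_cosh.tendsto D).comp hdto
      simp only [Function.comp_def] at this
      have hfun : (fun m => inn (xs m) (PB x))
          = fun m => Real.cosh (dist (xs m) (PB x)) := funext fun m => inn_eq_cosh _ _
      rw [hfun]
      exact this
    have hden : Tendsto (fun m => Real.cosh (max 0 (D - dist x (xs m)))) atTop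
        (𝓝 (Real.cosh D)) := by
      have h1 : Tendsto (fun m => max 0 (D - dist x (xs m))) atTop (𝓝 D) := by
        have h2 : Tendsto (fun m => D - dist x (xs m)) atTop (𝓝 D) := by
          have := (tendsto_const_nhds (x := D)).sub hto0
          simpa using this
        have h3 := (tendsto_const_nhds (x := (0:ℝ))).max h2
        rwa [max_eq_right hDnn] at h3
      have := (Real.continuous_cosh.tendsto D).comp h1
      simpa [Function.comp_def] using this
    have hcD : Real.cosh D ≠ 0 := by
      have := Real.one_le_cosh D; linarith
    have hratio2 : Tendsto (fun m => inn (xs m) (PB x)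
        / Real.cosh (max 0 (D - dist x (xs m)))) atTop (𝓝 1) := by
      have := hnum.div hden hcD
      simpa [div_self hcD, Pi.div_def] using this
    have hinnto : Tendsto (fun m => inn (PB (xs m)) (PB x)) atTop (𝓝 1) :=
      tendsto_of_tendsto_of_tendsto_of_le_of_le tendsto_const_nhds hratio2
        (fun m => one_le_inn _ _) hupper
    have := tendsto_dist_zero (u := fun m => PB (xs m)) (v := fun _ => PB x) hinnto
    rw [tendsto_iff_dist_tendsto_zero]
    exact this
  exact ⟨x, hxs_to, hfix, hPBAB, hshadow⟩
end
end

section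
/- Let E = EuclideanSpace ℝ (Fin n) and let A, B be nonempty closed convex subsets of E with A ∩ B ≠ ∅, with nearest-point projections P_A, P_B and reflections R_A = 2P_A − id, R_B = 2P_B − id. Let c ∈ (0, 1/2] and (λ_m) ⊆ [c, 1 − c], and for x_0 ∈ E define the Krasnoselski–Mann iteration x_{m+1} = (1 − λ_m)·x_m + λ_m·R_A (R_B x_m). Then ‖x_m − R_A (R_B x_m)‖ → 0 and (x_m) converges to some x ∈ E with R_A (R_B x) = x and P_B x ∈ A ∩ B. -/
open Filter Topology
open scoped RealInnerProductSpace

section KMAux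

variable {E : Type*} [NormedAddCommGroup E] [InnerProductSpace ℝ E]

lemma km_aux_norm_sq (t : ℝ) (u v : E) :
    ‖(1 - t) • u + t • v‖ ^ 2
      = (1 - t) * ‖u‖ ^ 2 + t * ‖v‖ ^ 2 - t * (1 - t) * ‖u - v‖ ^ 2 := by
  simp only [← real_inner_self_eq_norm_sq, inner_add_left, inner_add_right,
    inner_sub_left, inner_sub_right, real_inner_smul_left, real_inner_smul_right,
    real_inner_comm u v]
  ring

lemma km_aux_two_smul_norm_sq (u w : E) :
    ‖(2 : ℝ) • u - w‖ ^ 2 = 4 * ‖u‖ ^ 2 - 4 * ⟪w, u⟫ + ‖w‖ ^ 2 := by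
  simp only [← real_inner_self_eq_norm_sq, inner_sub_left, inner_sub_right,
    real_inner_smul_left, real_inner_smul_right, real_inner_comm u w]
  ring

lemma km_aux_proj_inner {K : Set E} (hK : Convex ℝ K) (P : E → E)
    (hmem : ∀ z, P z ∈ K) (hproj : ∀ z, ∀ a ∈ K, ‖z - P z‖ ≤ ‖z - a‖) :
    ∀ z, ∀ w ∈ K, ⟪z - P z, w - P z⟫ ≤ 0 := by
  intro z
  haveI : Nonempty K := ⟨⟨P z, hmem z⟩⟩
  have h : ‖z - P z‖ = ⨅ w : K, ‖z - w‖ := by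
    apply le_antisymm
    · exact le_ciInf fun w => hproj z w w.2
    · exact ciInf_le ⟨0, by rintro _ ⟨w, rfl⟩; positivity⟩ (⟨P z, hmem z⟩ : K)
  exact (norm_eq_iInf_iff_real_inner_le_zero hK (hmem z)).1 h

lemma km_aux_refl_nonexp {K : Set E} (hK : Convex ℝ K) (P : E → E)
    (hmem : ∀ z, P z ∈ K) (hproj : ∀ z, ∀ a ∈ K, ‖z - P z‖ ≤ ‖z - a‖)
    (x y : E) : ‖((2 : ℝ) • P x - x) - ((2 : ℝ) • P y - y)‖ ≤ ‖x - y‖ := by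
  have h1 := km_aux_proj_inner hK P hmem hproj x (P y) (hmem y)
  have h2 := km_aux_proj_inner hK P hmem hproj y (P x) (hmem x)
  have firm : ‖P x - P y‖ ^ 2 ≤ ⟪x - y, P x - P y⟫ := by
    simp only [← real_inner_self_eq_norm_sq, inner_sub_left, inner_sub_right] at h1 h2 ⊢
    linarith [real_inner_comm (P x) (P y)]
  have e : ((2 : ℝ) • P x - x) - ((2 : ℝ) • P y - y)
      = (2 : ℝ) • (P x - P y) - (x - y) := by module
  have hsq : ‖((2 : ℝ) • P x - x) - ((2 : ℝ) • P y - y)‖ ^ 2 ≤ ‖x - y‖ ^ 2 := by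
    rw [e, km_aux_two_smul_norm_sq]
    linarith
  nlinarith [norm_nonneg (((2 : ℝ) • P x - x) - ((2 : ℝ) • P y - y)), norm_nonneg (x - y)]

end KMAux

/-- Convergence of the Krasnoselski–Mann iteration for `R_A R_B` in Euclidean space:
for nonempty closed convex sets `A`, `B` with `A ∩ B ≠ ∅` and coefficients
`λ_m ∈ [c, 1-c]` with `0 < c ≤ 1/2`, the iterates
`x_{m+1} = (1 - λ_m) x_m + λ_m R_A R_B x_m` satisfy `‖x_m - R_A R_B x_m‖ → 0` and
converge to a fixed point `x` of `R_A R_B` with `P_B x ∈ A ∩ B`. -/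
theorem KM_convergence_euclidean {n : ℕ}
    (A B : Set (EuclideanSpace ℝ (Fin n)))
    (hA_ne : A.Nonempty) (hA_cl : IsClosed A) (hA_conv : Convex ℝ A)
    (hB_ne : B.Nonempty) (hB_cl : IsClosed B) (hB_conv : Convex ℝ B)
    (hAB : (A ∩ B).Nonempty)
    (PA PB RA RB : EuclideanSpace ℝ (Fin n) → EuclideanSpace ℝ (Fin n))
    (hPA_mem : ∀ z, PA z ∈ A) (hPA_proj : ∀ z, ∀ a ∈ A, ‖z - PA z‖ ≤ ‖z - a‖)
    (hPB_mem : ∀ z, PB z ∈ B) (hPB_proj : ∀ z, ∀ b ∈ B, ‖z - PB z‖ ≤ ‖z - b‖)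
    (hRA : ∀ z, RA z = (2 : ℝ) • PA z - z) (hRB : ∀ z, RB z = (2 : ℝ) • PB z - z)
    (c : ℝ) (hc : c ∈ Set.Ioc (0 : ℝ) (1 / 2))
    (lam : ℕ → ℝ) (hlam : ∀ m, lam m ∈ Set.Icc c (1 - c))
    (x0 : EuclideanSpace ℝ (Fin n)) (xs : ℕ → EuclideanSpace ℝ (Fin n))
    (hxs0 : xs 0 = x0)
    (hxs : ∀ m, xs (m + 1) = (1 - lam m) • xs m + lam m • RA (RB (xs m))) :
    Tendsto (fun m => ‖xs m - RA (RB (xs m))‖) atTop (𝓝 0) ∧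
      ∃ x : EuclideanSpace ℝ (Fin n),
        Tendsto xs atTop (𝓝 x) ∧ RA (RB x) = x ∧ PB x ∈ A ∩ B := by
  obtain ⟨hc0, hc2⟩ := hc
  -- nonexpansiveness
  have hnA : ∀ x y, ‖RA x - RA y‖ ≤ ‖x - y‖ := fun x y => by
    rw [hRA x, hRA y]; exact km_aux_refl_nonexp hA_conv PA hPA_mem hPA_proj x y
  have hnB : ∀ x y, ‖RB x - RB y‖ ≤ ‖x - y‖ := fun x y => by
    rw [hRB x, hRB y]; exact km_aux_refl_nonexp hB_conv PB hPB_mem hPB_proj x y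
  have hT : ∀ x y, ‖RA (RB x) - RA (RB y)‖ ≤ ‖x - y‖ := fun x y =>
    (hnA _ _).trans (hnB x y)
  -- fixed point from A ∩ B
  obtain ⟨p, hpA, hpB⟩ := hAB
  have hPBp : PB p = p := by
    have h := hPB_proj p p hpB
    rw [sub_self, norm_zero] at h
    have h2 := norm_le_zero_iff.mp h
    rw [sub_eq_zero] at h2
    exact h2.symm
  have hPAp : PA p = p := by
    have h := hPA_proj p p hpA
    rw [sub_self, norm_zero] at h
    have h2 := norm_le_zero_iff.mp h
    rw [sub_eq_zero] at h2
    exact h2.symm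
  have hRBp : RB p = p := by rw [hRB, hPBp]; module
  have hTp : RA (RB p) = p := by rw [hRBp, hRA, hPAp]; module
  -- Fejér monotonicity w.r.t. any fixed point
  have hfej : ∀ q, RA (RB q) = q → ∀ m, ‖xs (m + 1) - q‖ ≤ ‖xs m - q‖ := by
    intro q hq m
    obtain ⟨hl1, hl2⟩ := hlam m
    have e : xs (m + 1) - q
        = (1 - lam m) • (xs m - q) + lam m • (RA (RB (xs m)) - q) := by
      rw [hxs m]; module
    rw [e]
    have hTq : ‖RA (RB (xs m)) - q‖ ≤ ‖xs m - q‖ := by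
      have := hT (xs m) q; rwa [hq] at this
    calc ‖(1 - lam m) • (xs m - q) + lam m • (RA (RB (xs m)) - q)‖
        ≤ ‖(1 - lam m) • (xs m - q)‖ + ‖lam m • (RA (RB (xs m)) - q)‖ := norm_add_le _ _
      _ = (1 - lam m) * ‖xs m - q‖ + lam m * ‖RA (RB (xs m)) - q‖ := by
          rw [norm_smul, norm_smul, Real.norm_of_nonneg (by linarith),
            Real.norm_of_nonneg (by linarith)]
      _ ≤ (1 - lam m) * ‖xs m - q‖ + lam m * ‖xs m - q‖ := by
          have : 0 ≤ lam m := by linarith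
          nlinarith
      _ = ‖xs m - q‖ := by ring
  -- key quantitative inequality
  have hkey : ∀ m, ‖xs (m + 1) - p‖ ^ 2
      ≤ ‖xs m - p‖ ^ 2 - c * (1 - c) * ‖xs m - RA (RB (xs m))‖ ^ 2 := by
    intro m
    obtain ⟨hl1, hl2⟩ := hlam m
    have e : xs (m + 1) - p
        = (1 - lam m) • (xs m - p) + lam m • (RA (RB (xs m)) - p) := by
      rw [hxs m]; module
    rw [e, km_aux_norm_sq]
    have e2 : (xs m - p) - (RA (RB (xs m)) - p) = xs m - RA (RB (xs m)) := by module
    rw [e2]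
    have h1 : ‖RA (RB (xs m)) - p‖ ≤ ‖xs m - p‖ := by
      have := hT (xs m) p; rwa [hTp] at this
    have h3 : ‖RA (RB (xs m)) - p‖ ^ 2 ≤ ‖xs m - p‖ ^ 2 := by
      nlinarith [norm_nonneg (RA (RB (xs m)) - p), norm_nonneg (xs m - p)]
    have h2 : c * (1 - c) ≤ lam m * (1 - lam m) := by nlinarith
    have h4 : lam m * ‖RA (RB (xs m)) - p‖ ^ 2 ≤ lam m * ‖xs m - p‖ ^ 2 :=
      mul_le_mul_of_nonneg_left h3 (by linarith)
    have h5 : c * (1 - c) * ‖xs m - RA (RB (xs m))‖ ^ 2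
        ≤ lam m * (1 - lam m) * ‖xs m - RA (RB (xs m))‖ ^ 2 :=
      mul_le_mul_of_nonneg_right h2 (sq_nonneg _)
    linarith
  -- monotone convergence of ‖xs m - p‖²
  have ha_anti : Antitone fun m => ‖xs m - p‖ := antitone_nat_of_succ_le (hfej p hTp)
  have ha2_anti : Antitone fun m => ‖xs m - p‖ ^ 2 := fun i j h =>
    pow_le_pow_left₀ (norm_nonneg _) (ha_anti h) 2
  have haconv : Tendsto (fun m => ‖xs m - p‖ ^ 2) atTop (𝓝 (⨅ m, ‖xs m - p‖ ^ 2)) :=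
    tendsto_atTop_ciInf ha2_anti ⟨0, by rintro _ ⟨m, rfl⟩; positivity⟩
  have hdiff : Tendsto (fun m => ‖xs m - p‖ ^ 2 - ‖xs (m + 1) - p‖ ^ 2) atTop (𝓝 0) := by
    have h2 : Tendsto (fun m => ‖xs (m + 1) - p‖ ^ 2) atTop
        (𝓝 (⨅ m, ‖xs m - p‖ ^ 2)) := haconv.comp (tendsto_add_atTop_nat 1)
    simpa using haconv.sub h2
  have hcc : 0 < c * (1 - c) := by nlinarith
  have hr2 : Tendsto (fun m => ‖xs m - RA (RB (xs m))‖ ^ 2) atTop (𝓝 0) := by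
    apply squeeze_zero (fun m => by positivity)
      (g := fun m => (‖xs m - p‖ ^ 2 - ‖xs (m + 1) - p‖ ^ 2) / (c * (1 - c)))
    · intro m
      rw [le_div_iff₀ hcc]
      have := hkey m
      linarith
    · simpa using hdiff.div_const (c * (1 - c))
  have hrt : Tendsto (fun m => ‖xs m - RA (RB (xs m))‖) atTop (𝓝 0) := by
    have h := (Real.continuous_sqrt.tendsto 0).comp hr2
    rw [Real.sqrt_zero] at h
    exact h.congr fun m => Real.sqrt_sq (norm_nonneg _)
  -- extract a convergent subsequence
  have hball : ∀ m, xs m ∈ Metric.closedBall p ‖x0 - p‖ := by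
    intro m
    rw [Metric.mem_closedBall, dist_eq_norm]
    have h := ha_anti (Nat.zero_le m)
    simpa [hxs0] using h
  obtain ⟨x, -, φ, hφ, hxφ⟩ :=
    tendsto_subseq_of_bounded Metric.isBounded_closedBall hball
  have hTcont : Continuous fun z => RA (RB z) := by
    apply LipschitzWith.continuous (K := 1)
    apply LipschitzWith.of_dist_le_mul
    intro a b
    simpa [dist_eq_norm] using hT a b
  have hTx : RA (RB x) = x := by
    have h1 : Tendsto (fun k => xs (φ k) - RA (RB (xs (φ k)))) atTop
        (𝓝 (x - RA (RB x))) := hxφ.sub ((hTcont.tendsto x).comp hxφ)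
    have h2 : Tendsto (fun k => ‖xs (φ k) - RA (RB (xs (φ k)))‖) atTop (𝓝 0) :=
      hrt.comp hφ.tendsto_atTop
    have h3 := tendsto_nhds_unique h1.norm h2
    have h4 : x - RA (RB x) = 0 := norm_eq_zero.mp h3
    rw [sub_eq_zero] at h4
    exact h4.symm
  -- full convergence to x
  have hb_anti : Antitone fun m => ‖xs m - x‖ := antitone_nat_of_succ_le (hfej x hTx)
  have hbL : Tendsto (fun m => ‖xs m - x‖) atTop (𝓝 (⨅ m, ‖xs m - x‖)) :=
    tendsto_atTop_ciInf hb_anti ⟨0, by rintro _ ⟨m, rfl⟩; positivity⟩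
  have hsub : Tendsto (fun k => ‖xs (φ k) - x‖) atTop (𝓝 0) := by
    have := tendsto_iff_norm_sub_tendsto_zero.mp hxφ
    exact this
  have hsub' : Tendsto (fun k => ‖xs (φ k) - x‖) atTop (𝓝 (⨅ m, ‖xs m - x‖)) :=
    hbL.comp hφ.tendsto_atTop
  have hL0 : (⨅ m, ‖xs m - x‖) = 0 := tendsto_nhds_unique hsub' hsub
  have hxconv : Tendsto xs atTop (𝓝 x) := by
    rw [tendsto_iff_norm_sub_tendsto_zero]
    rwa [hL0] at hbL
  -- P_B x ∈ A ∩ B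
  have hPAB : PA (RB x) = PB x := by
    have h := hTx
    rw [hRA] at h
    rw [sub_eq_iff_eq_add] at h
    have e : x + RB x = (2 : ℝ) • PB x := by rw [hRB]; module
    rw [e] at h
    exact smul_right_injective (EuclideanSpace ℝ (Fin n)) (two_ne_zero) h
  have hPBxA : PB x ∈ A := by
    have := hPA_mem (RB x)
    rwa [hPAB] at this
  exact ⟨hrt, x, hxconv, hTx, hPBxA, hPB_mem x⟩
end

section
/- Let a, b, y, y′ be points of the hyperbolic plane ℍ such that b is the midpoint of y and y′ (dist y b = dist b y′ = (1/2)·dist y y′). Suppose that for every point p on the geodesic segment from b to y (i.e., every p with dist b p + dist p y = dist b y) one has dist a b ≤ dist a p. Then dist a y′ ≤ dist a y. -/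
open Real UpperHalfPlane

noncomputable def hv1 (z : ℍ) : ℝ := z.re / z.im
noncomputable def hv2 (z : ℍ) : ℝ := (z.re ^ 2 + z.im ^ 2 - 1) / (2 * z.im)
noncomputable def hv3 (z : ℍ) : ℝ := (z.re ^ 2 + z.im ^ 2 + 1) / (2 * z.im)

lemma hpair (z w : ℍ) :
    hv1 z * hv1 w + hv2 z * hv2 w - hv3 z * hv3 w = -cosh (dist z w) := by
  rw [UpperHalfPlane.cosh_dist]
  have hd : dist (z : ℂ) (w : ℂ) ^ 2 = (z.re - w.re) ^ 2 + (z.im - w.im) ^ 2 := by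
    rw [Complex.dist_eq_re_im, Real.sq_sqrt (by positivity)]
    simp [UpperHalfPlane.coe_re, UpperHalfPlane.coe_im]
  rw [hd]
  have hz := z.im_pos.ne'
  have hw := w.im_pos.ne'
  unfold hv1 hv2 hv3
  field_simp
  ring

lemma hself (z : ℍ) : hv1 z ^ 2 + hv2 z ^ 2 - hv3 z ^ 2 = -1 := by
  have := hpair z z
  simpa [sq] using this


lemma cosh_inj_nonneg {x y : ℝ} (hx : 0 ≤ x) (hy : 0 ≤ y) (h : cosh x = cosh y) : x = y := by
  have h1 : |x| ≤ |y| := Real.cosh_le_cosh.mp h.le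
  have h2 : |y| ≤ |x| := Real.cosh_le_cosh.mp h.ge
  rw [abs_of_nonneg hx, abs_of_nonneg hy] at h1 h2
  exact le_antisymm h1 h2

lemma hmidpoint (z w : ℍ) :
    ∃ m : ℍ, dist z m = dist z w / 2 ∧ dist m w = dist z w / 2 := by
  set K := cosh (dist z w) with hK
  have hK1 : 1 ≤ K := Real.one_le_cosh _
  set c := Real.sqrt (2 + 2 * K) with hc
  have hcsq : c ^ 2 = 2 + 2 * K := Real.sq_sqrt (by linarith)
  have hcpos : 0 < c := Real.sqrt_pos.mpr (by linarith)
  set V1 := hv1 z + hv1 w with hV1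
  set V2 := hv2 z + hv2 w with hV2
  set V3 := hv3 z + hv3 w with hV3
  have hV : V1 ^ 2 + V2 ^ 2 - V3 ^ 2 = -c ^ 2 := by
    rw [hV1, hV2, hV3]
    linear_combination hself z + hself w + 2 * hpair z w + hcsq
  have hD : V3 - V2 = 1 / z.im + 1 / w.im := by
    rw [hV2, hV3]
    unfold hv2 hv3
    have hz := z.im_pos.ne'
    have hw := w.im_pos.ne'
    field_simp
    ring
  have hDpos : 0 < V3 - V2 := by
    rw [hD]; positivity
  set m : ℍ := UpperHalfPlane.mk ⟨V1 / (V3 - V2), c / (V3 - V2)⟩ (by positivity) with hm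
  have hmre : m.re = V1 / (V3 - V2) := rfl
  have hmim : m.im = c / (V3 - V2) := rfl
  have hm1 : hv1 m = V1 / c := by
    unfold hv1
    rw [hmre, hmim]
    field_simp
  have hm2 : hv2 m = V2 / c := by
    unfold hv2
    rw [hmre, hmim]
    rw [div_eq_div_iff (by positivity) hcpos.ne']
    field_simp
    linear_combination hV
  have hm3 : hv3 m = V3 / c := by
    unfold hv3
    rw [hmre, hmim]
    rw [div_eq_div_iff (by positivity) hcpos.ne']
    field_simp
    linear_combination hV
  have hhalf : cosh (dist z w / 2) = (1 + K) / c := by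
    have hsq : cosh (dist z w / 2) ^ 2 = ((1 + K) / c) ^ 2 := by
      have h2 : cosh (2 * (dist z w / 2)) = cosh (dist z w / 2) ^ 2 + sinh (dist z w / 2) ^ 2 :=
        Real.cosh_two_mul _
      rw [mul_div_cancel₀ _ (two_ne_zero' ℝ)] at h2
      have h3 : sinh (dist z w / 2) ^ 2 = cosh (dist z w / 2) ^ 2 - 1 := by
        have := Real.cosh_sq (dist z w / 2); linarith
      rw [h3, ← hK] at h2
      rw [div_pow, hcsq, eq_div_iff (by positivity)]
      linear_combination (-(1 + K)) * h2
    have hpos1 : 0 < cosh (dist z w / 2) := Real.cosh_pos _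
    have hpos2 : 0 < (1 + K) / c := by positivity
    have hfac : (cosh (dist z w / 2) - (1 + K) / c) * (cosh (dist z w / 2) + (1 + K) / c) = 0 := by
      linear_combination hsq
    rcases mul_eq_zero.mp hfac with h | h
    · linarith
    · linarith
  have haux1 : hv1 z * V1 + hv2 z * V2 - hv3 z * V3 = -(1 + K) := by
    rw [hV1, hV2, hV3]
    linear_combination hself z + hpair z w
  have haux2 : V1 * hv1 w + V2 * hv2 w - V3 * hv3 w = -(1 + K) := by
    rw [hV1, hV2, hV3]
    linear_combination hself w + hpair z w
  have hzm : cosh (dist z m) = (1 + K) / c := by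
    have hp := hpair z m
    rw [hm1, hm2, hm3, ← mul_div_assoc, ← mul_div_assoc, ← mul_div_assoc, ← add_div, ← sub_div,
      haux1, neg_div] at hp
    linarith
  have hmw : cosh (dist m w) = (1 + K) / c := by
    have hp := hpair m w
    rw [hm1, hm2, hm3, div_mul_eq_mul_div, div_mul_eq_mul_div, div_mul_eq_mul_div, ← add_div,
      ← sub_div, haux2, neg_div] at hp
    linarith
  refine ⟨m, ?_, ?_⟩
  · exact cosh_inj_nonneg dist_nonneg (by positivity) (hhalf ▸ hzm)
  · exact cosh_inj_nonneg dist_nonneg (by positivity) (hhalf ▸ hmw)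

attribute [irreducible] hv1 hv2 hv3

set_option maxHeartbeats 1000000 in
/-- Hyperbolic Stewart identity: if `q` lies between `p` and `r`, then for any `a`,
`cosh d(a,q) · sinh d(p,r) = cosh d(a,p) · sinh d(q,r) + cosh d(a,r) · sinh d(p,q)`. -/
lemma hstewart (p q r a : ℍ) (h : dist p q + dist q r = dist p r) :
    cosh (dist a q) * sinh (dist p r)
      = cosh (dist a p) * sinh (dist q r) + cosh (dist a r) * sinh (dist p q) := by
  rcases eq_or_lt_of_le (dist_nonneg : (0:ℝ) ≤ dist p q) with h1 | h1
  · have hpq : p = q := dist_eq_zero.mp h1.symm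
    subst hpq; simp
  rcases eq_or_lt_of_le (dist_nonneg : (0:ℝ) ≤ dist q r) with h2 | h2
  · have hqr : q = r := dist_eq_zero.mp h2.symm
    subst hqr; simp
  -- main case
  set d1 := dist p q with hd1
  set d2 := dist q r with hd2
  have hpr : dist p r = d1 + d2 := h.symm
  have hapc := hpair a p
  have haqc := hpair a q
  have harc := hpair a r
  have hpqc := hpair p q
  have hqrc := hpair q r
  have hprc := hpair p r
  have hppc := hself p
  have hqqc := hself q
  have hrrc := hself r
  rw [hpr, Real.cosh_add] at hprc
  set c1 := cosh d1
  set s1 := sinh d1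
  set c2 := cosh d2
  set s2 := sinh d2
  have hc1 : c1 ^ 2 = s1 ^ 2 + 1 := Real.cosh_sq d1
  have hc2 : c2 ^ 2 = s2 ^ 2 + 1 := Real.cosh_sq d2
  have hs1 : 0 < s1 := Real.sinh_pos_iff.mpr h1
  have hs2 : 0 < s2 := Real.sinh_pos_iff.mpr h2
  have hSe : sinh (d1 + d2) = s1 * c2 + c1 * s2 := Real.sinh_add d1 d2
  rw [hpr, hSe]
  set S := s1 * c2 + c1 * s2 with hS
  -- the vector W = s2 • P + s1 • R - S • Q is Minkowski-null and orthogonal to Q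
  set W1 := s2 * hv1 p + s1 * hv1 r - S * hv1 q with hW1
  set W2 := s2 * hv2 p + s1 * hv2 r - S * hv2 q with hW2
  set W3 := s2 * hv3 p + s1 * hv3 r - S * hv3 q with hW3
  have hnull : W1 ^ 2 + W2 ^ 2 - W3 ^ 2 = 0 := by
    rw [hW1, hW2, hW3, hS]
    linear_combination s2^2*hppc + s1^2*hrrc + (s1*c2+c1*s2)^2*hqqc + 2*s1*s2*hprc
      - 2*s2*(s1*c2+c1*s2)*hpqc - 2*s1*(s1*c2+c1*s2)*hqrc + s2^2*hc1 + s1^2*hc2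
  have horth : W1 * hv1 q + W2 * hv2 q - W3 * hv3 q = 0 := by
    rw [hW1, hW2, hW3, hS]
    linear_combination s2*hpqc + s1*hqrc - (s1*c2+c1*s2)*hqqc
  have h' : W1 * hv1 q + W2 * hv2 q = W3 * hv3 q := by linarith
  have h2' : (W1 * hv1 q + W2 * hv2 q) ^ 2 = W3 ^ 2 * hv3 q ^ 2 := by rw [h']; ring
  have hid : W3 ^ 2 + (W1 * hv2 q - W2 * hv1 q) ^ 2 = 0 := by
    linear_combination (hv1 q ^ 2 + hv2 q ^ 2) * hnull + W3 ^ 2 * hqqc - h2'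
  have hW3z : W3 = 0 := by
    have h3 : W3 ^ 2 = 0 :=
      le_antisymm (by linarith [sq_nonneg (W1 * hv2 q - W2 * hv1 q)]) (sq_nonneg W3)
    exact pow_eq_zero_iff two_ne_zero |>.mp h3
  have hW3sq : W3 ^ 2 = 0 := by rw [hW3z]; ring
  have hW1z : W1 = 0 := by
    have h3 : W1 ^ 2 = 0 := le_antisymm (by linarith [sq_nonneg W2]) (sq_nonneg W1)
    exact pow_eq_zero_iff two_ne_zero |>.mp h3
  have hW2z : W2 = 0 := by
    have h3 : W2 ^ 2 = 0 := le_antisymm (by linarith [sq_nonneg W1]) (sq_nonneg W2)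
    exact pow_eq_zero_iff two_ne_zero |>.mp h3
  have key : hv1 a * W1 + hv2 a * W2 - hv3 a * W3 = 0 := by
    rw [hW1z, hW2z, hW3z]; ring
  rw [hW1, hW2, hW3] at key
  linear_combination key + S*haqc - s2*hapc - s1*harc

/-- In the hyperbolic plane, let `b` be the midpoint of `y` and `y'`. If for every point `p`
on the geodesic segment from `b` to `y` one has `dist a b ≤ dist a p`, then
`dist a y' ≤ dist a y`. -/
theorem hyperbolic_appendix_case_i
    (a b y y' : UpperHalfPlane)
    (hb1 : dist y b = dist b y') (hb2 : dist b y' = (1 / 2) * dist y y')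
    (hmin : ∀ p : UpperHalfPlane, dist b p + dist p y = dist b y → dist a b ≤ dist a p) :
    dist a y' ≤ dist a y := by
  have hsum : dist y b + dist b y' = dist y y' := by rw [hb1, hb2]; ring
  set s := dist b y with hs
  have hyb : dist y b = s := dist_comm y b
  have hby' : dist b y' = s := by rw [← hb1, hyb]
  rcases eq_or_lt_of_le (dist_nonneg : (0:ℝ) ≤ s) with hs0 | hs0
  · -- degenerate case: b = y = y'
    have h1 : b = y := dist_eq_zero.mp hs0.symm
    have h2 : b = y' := dist_eq_zero.mp (by rw [hby']; exact hs0.symm)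
    rw [← h1, ← h2]
  -- median identity
  have hyy' : dist y y' = 2 * s := by rw [← hsum, hyb, hby']; ring
  have hmed : 2 * cosh (dist a b) * cosh s = cosh (dist a y) + cosh (dist a y') := by
    have hst := hstewart y b y' a hsum
    rw [hyy', Real.sinh_two_mul, hby', hyb] at hst
    have hsinh : 0 < sinh s := Real.sinh_pos_iff.mpr hs0
    have h' : (2 * cosh (dist a b) * cosh s) * sinh s
        = (cosh (dist a y) + cosh (dist a y')) * sinh s := by linarith [hst]
    exact mul_right_cancel₀ hsinh.ne' h'
  -- points on the segment at dyadic distances from b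
  have hseq : ∀ n : ℕ, ∃ p : ℍ, dist b p = s / 2 ^ n ∧ dist p y = s - s / 2 ^ n := by
    intro n
    induction n with
    | zero => exact ⟨y, by simpa using hs.symm, by simp⟩
    | succ n ih =>
      obtain ⟨p, hp1, hp2⟩ := ih
      obtain ⟨m, hm1, hm2⟩ := hmidpoint b p
      have e : dist b p / 2 = s / 2 ^ (n + 1) := by rw [hp1]; ring
      refine ⟨m, by rw [hm1, e], ?_⟩
      have hle : dist m y ≤ s - s / 2 ^ (n + 1) := by
        calc dist m y ≤ dist m p + dist p y := dist_triangle m p y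
        _ = s - s / 2 ^ (n + 1) := by rw [hm2, e, hp2]; ring
      have hge : s - s / 2 ^ (n + 1) ≤ dist m y := by
        have := dist_triangle b m y
        rw [← hs] at this
        rw [hm1, e] at this
        linarith
      linarith
  -- key inequality at scale u = s / 2 ^ n
  have hkey : ∀ n : ℕ, cosh (dist a b) * cosh (s - s / 2 ^ n / 2)
      ≤ cosh (dist a y) * cosh (s / 2 ^ n / 2) := by
    intro n
    obtain ⟨p, hp1, hp2⟩ := hseq n
    set u := s / 2 ^ n with hu
    have hupos : 0 < u := by positivity
    have hbet : dist b p + dist p y = dist b y := by rw [hp1, hp2, ← hs]; ring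
    have hminp : cosh (dist a b) ≤ cosh (dist a p) := by
      rw [Real.cosh_le_cosh, abs_of_nonneg dist_nonneg, abs_of_nonneg dist_nonneg]
      exact hmin p hbet
    have hst := hstewart b p y a hbet
    rw [hp1, hp2, ← hs] at hst
    have e1 : sinh s = sinh (s - u / 2) * cosh (u / 2) + cosh (s - u / 2) * sinh (u / 2) := by
      rw [show s = (s - u / 2) + u / 2 by ring, Real.sinh_add]; ring_nf
    have e2 : sinh (s - u) = sinh (s - u / 2) * cosh (u / 2)
        - cosh (s - u / 2) * sinh (u / 2) := by
      rw [show s - u = (s - u / 2) - u / 2 by ring, Real.sinh_sub]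
    have e3 : sinh u = 2 * sinh (u / 2) * cosh (u / 2) := by
      rw [← Real.sinh_two_mul]; ring_nf
    have hineq : cosh (dist a b) * sinh s ≤ cosh (dist a b) * sinh (s - u)
        + cosh (dist a y) * sinh u := by
      have hsinh : 0 < sinh s := Real.sinh_pos_iff.mpr hs0
      nlinarith [hst, hminp, hsinh]
    rw [e1, e2, e3] at hineq
    have hσ : 0 < sinh (u / 2) := Real.sinh_pos_iff.mpr (by positivity)
    have h2 : cosh (dist a b) * cosh (s - u / 2) * (2 * sinh (u / 2))
        ≤ cosh (dist a y) * cosh (u / 2) * (2 * sinh (u / 2)) := by nlinarith [hineq]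
    exact le_of_mul_le_mul_right h2 (by positivity)
  -- pass to the limit n → ∞
  have hulim : Filter.Tendsto (fun n : ℕ => s / 2 ^ n) Filter.atTop (nhds 0) := by
    have : (fun n : ℕ => s / 2 ^ n) = fun n : ℕ => s * (1 / 2 : ℝ) ^ n := by
      funext n; rw [div_pow, one_pow, mul_one_div]
    rw [this]
    simpa using (tendsto_pow_atTop_nhds_zero_of_lt_one (by norm_num) (by norm_num)
      (r := (1/2 : ℝ))).const_mul s
  have hlim1 : Filter.Tendsto (fun n : ℕ => cosh (dist a b) * cosh (s - s / 2 ^ n / 2))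
      Filter.atTop (nhds (cosh (dist a b) * cosh s)) := by
    have : Filter.Tendsto (fun n : ℕ => s - s / 2 ^ n / 2) Filter.atTop (nhds s) := by
      simpa using (tendsto_const_nhds (x := s) (f := Filter.atTop (α := ℕ))).sub
        (hulim.div_const 2)
    exact ((Real.continuous_cosh.tendsto s).comp this).const_mul _
  have hlim2 : Filter.Tendsto (fun n : ℕ => cosh (dist a y) * cosh (s / 2 ^ n / 2))
      Filter.atTop (nhds (cosh (dist a y))) := by
    have : Filter.Tendsto (fun n : ℕ => s / 2 ^ n / 2) Filter.atTop (nhds 0) :=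
      by simpa using hulim.div_const 2
    have h := ((Real.continuous_cosh.tendsto 0).comp this).const_mul (cosh (dist a y))
    simpa using h
  have hfinal : cosh (dist a b) * cosh s ≤ cosh (dist a y) :=
    le_of_tendsto_of_tendsto' hlim1 hlim2 hkey
  have : cosh (dist a y') ≤ cosh (dist a y) := by linarith [hmed, hfinal]
  have habs := Real.cosh_le_cosh.mp this
  rwa [abs_of_nonneg dist_nonneg, abs_of_nonneg dist_nonneg] at habs
end

section
/- Let x, x′, y, y′, a, b be points of the hyperbolic plane ℍ such that a is the midpoint of x and x′ (dist x a = dist a x′ = (1/2)·dist x x′), b is the midpoint of y and y′, and dist x a = dist y b. Suppose that for every λ ∈ [0,1] and all points x_λ, y_λ ∈ ℍ with dist x x_λ = λ·dist x a, dist x_λ a = (1 − λ)·dist x a, dist y y_λ = λ·dist y b, and dist y_λ b = (1 − λ)·dist y b, one has dist a b ≤ dist x_λ y_λ. Then dist x′ y′ ≤ dist x y. -/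
open Real UpperHalfPlane Filter Set

noncomputable section

namespace HypAux

/-- first hyperboloid coordinate -/
def tc (z : ℍ) : ℝ := (z.re ^ 2 + z.im ^ 2 + 1) / (2 * z.im)
/-- second hyperboloid coordinate -/
def sc (z : ℍ) : ℝ := (z.re ^ 2 + z.im ^ 2 - 1) / (2 * z.im)
/-- third hyperboloid coordinate -/
def rc (z : ℍ) : ℝ := z.re / z.im

/-- Minkowski pairing of the hyperboloid coordinates. -/
def Q (z w : ℍ) : ℝ := tc z * tc w - sc z * sc w - rc z * rc w

lemma Q_self (z : ℍ) : Q z z = 1 := by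
  have h := z.im_pos
  unfold Q tc sc rc
  field_simp
  ring

lemma tc_pos (z : ℍ) : 0 < tc z := by
  have h := z.im_pos
  unfold tc
  positivity

lemma Q_comm (z w : ℍ) : Q z w = Q w z := by unfold Q; ring

lemma cosh_dist_eq_Q (z w : ℍ) : Real.cosh (dist z w) = Q z w := by
  have hz := z.im_pos
  have hw := w.im_pos
  rw [UpperHalfPlane.cosh_dist]
  have hd : dist (z : ℂ) (w : ℂ) ^ 2 = (z.re - w.re) ^ 2 + (z.im - w.im) ^ 2 := by
    rw [Complex.dist_eq_re_im, Real.sq_sqrt (by positivity)]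
    simp [UpperHalfPlane.coe_re, UpperHalfPlane.coe_im]
  rw [hd]
  unfold Q tc sc rc
  field_simp
  ring

lemma exists_point (T S R : ℝ) (hN : T ^ 2 - S ^ 2 - R ^ 2 = 1) (hT : 0 < T) :
    ∃ z : ℍ, tc z = T ∧ sc z = S ∧ rc z = R := by
  have hTS : 0 < T - S := by nlinarith [sq_nonneg R, sq_nonneg (T + S)]
  have hpos : (0:ℝ) < 1 / (T - S) := by positivity
  refine ⟨UpperHalfPlane.mk ⟨R / (T - S), 1 / (T - S)⟩ hpos, ?_, ?_, ?_⟩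
  · unfold tc
    show ((R / (T - S)) ^ 2 + (1 / (T - S)) ^ 2 + 1) / (2 * (1 / (T - S))) = T
    rw [div_eq_iff (by positivity)]
    field_simp
    linear_combination (-1 : ℝ) * hN
  · unfold sc
    show ((R / (T - S)) ^ 2 + (1 / (T - S)) ^ 2 - 1) / (2 * (1 / (T - S))) = S
    rw [div_eq_iff (by positivity)]
    field_simp
    linear_combination (-1 : ℝ) * hN
  · unfold rc
    show (R / (T - S)) / (1 / (T - S)) = R
    field_simp

lemma cosh_inj_nn {p q : ℝ} (hp : 0 ≤ p) (hq : 0 ≤ q) (h : Real.cosh p = Real.cosh q) :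
    p = q := by
  have h1 : |p| ≤ |q| := Real.cosh_le_cosh.mp h.le
  have h2 : |q| ≤ |p| := Real.cosh_le_cosh.mp h.ge
  rw [abs_of_nonneg hp, abs_of_nonneg hq] at h1 h2
  linarith

set_option maxHeartbeats 1000000 in
/-- Construction of the point at parameter `lam` on the geodesic from `x` to `a`. -/
lemma exists_geo (x a : ℍ) (lam : ℝ) (h0 : 0 ≤ lam) (h1 : lam ≤ 1)
    (hd : 0 < dist x a) :
    ∃ xl : ℍ,
      dist x xl = lam * dist x a ∧ dist xl a = (1 - lam) * dist x a ∧
      ∀ p : ℍ, Q xl p = (Real.sinh ((1 - lam) * dist x a) * Q x p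
        + Real.sinh (lam * dist x a) * Q a p) / Real.sinh (dist x a) := by
  set d := dist x a with hdd
  set sp := Real.sinh ((1 - lam) * d) with hsp
  set sq := Real.sinh (lam * d) with hsq
  set cp := Real.cosh ((1 - lam) * d) with hcp
  set cq := Real.cosh (lam * d) with hcq
  have hsd : Real.sinh d = sp * cq + cp * sq := by
    rw [hsp, hsq, hcp, hcq, ← Real.sinh_add]
    ring_nf
  have hcd : Real.cosh d = cp * cq + sp * sq := by
    rw [hsp, hsq, hcp, hcq, ← Real.cosh_add]
    ring_nf
  have hcp2 : cp ^ 2 = 1 + sp ^ 2 := by rw [hcp, hsp, Real.cosh_sq']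
  have hcq2 : cq ^ 2 = 1 + sq ^ 2 := by rw [hcq, hsq, Real.cosh_sq']
  have hsp0 : 0 ≤ sp := Real.sinh_nonneg_iff.mpr (by nlinarith)
  have hsq0 : 0 ≤ sq := Real.sinh_nonneg_iff.mpr (by positivity)
  have hsd0 : 0 < Real.sinh d := Real.sinh_pos_iff.mpr hd
  have hQxa : Q x a = Real.cosh d := (cosh_dist_eq_Q x a).symm
  -- the candidate coordinates
  set T := (sp * tc x + sq * tc a) / Real.sinh d with hT
  set S := (sp * sc x + sq * sc a) / Real.sinh d with hS
  set R := (sp * rc x + sq * rc a) / Real.sinh d with hR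
  have hQxx := Q_self x
  have hQaa := Q_self a
  have hnorm : T ^ 2 - S ^ 2 - R ^ 2 = 1 := by
    have expand : T ^ 2 - S ^ 2 - R ^ 2
        = (sp ^ 2 * Q x x + 2 * sp * sq * Q x a + sq ^ 2 * Q a a) / Real.sinh d ^ 2 := by
      rw [hT, hS, hR]; unfold Q; field_simp [ne_of_gt hsd0]; ring
    rw [expand, hQxx, hQaa, hQxa, hcd,
      div_eq_one_iff_eq (pow_ne_zero 2 (ne_of_gt hsd0)), hsd]
    linear_combination (-(sp ^ 2)) * hcq2 + (-(sq ^ 2)) * hcp2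
  have hTpos : 0 < T := by
    have htx := tc_pos x
    have hta := tc_pos a
    have hor : 0 < sp ∨ 0 < sq := by
      by_contra hcon
      push_neg at hcon
      have h1 : sp = 0 := le_antisymm hcon.1 hsp0
      have h2 : sq = 0 := le_antisymm hcon.2 hsq0
      rw [h1, h2] at hsd
      simp at hsd
      linarith
    have hnum : 0 < sp * tc x + sq * tc a := by
      rcases hor with h | h
      · nlinarith [mul_pos h htx, mul_nonneg hsq0 hta.le]
      · nlinarith [mul_pos h hta, mul_nonneg hsp0 htx.le]
    rw [hT]; positivity
  obtain ⟨xl, hxt, hxs, hxr⟩ := exists_point T S R hnorm hTpos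
  have hQform : ∀ p : ℍ, Q xl p = (sp * Q x p + sq * Q a p) / Real.sinh d := by
    intro p
    unfold Q
    rw [hxt, hxs, hxr, hT, hS, hR]
    field_simp [ne_of_gt hsd0]
    ring
  refine ⟨xl, ?_, ?_, ?_⟩
  · -- dist x xl = lam * d
    have hc : Real.cosh (dist x xl) = Real.cosh (lam * d) := by
      rw [cosh_dist_eq_Q, Q_comm, hQform x, hQxx, Q_comm a x, hQxa, ← hcq,
        div_eq_iff (ne_of_gt hsd0), hcd, hsd]
      linear_combination (-sp) * hcq2
    exact cosh_inj_nn dist_nonneg (by positivity) hc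
  · -- dist xl a = (1-lam) * d
    have hc : Real.cosh (dist xl a) = Real.cosh ((1 - lam) * d) := by
      rw [cosh_dist_eq_Q, hQform a, hQxa, hQaa, ← hcp,
        div_eq_iff (ne_of_gt hsd0), hcd, hsd]
      linear_combination (-sq) * hcp2
    exact cosh_inj_nn dist_nonneg (by nlinarith) hc
  · exact hQform

/-- Limit argument: from the family of inequalities indexed by `l ∈ [0,1)`,
deduce the boundary inequality. -/
lemma limit_lemma (d u w E : ℝ) (hd : 0 < d)
    (h : ∀ l : ℝ, 0 ≤ l → l < 1 →
      E * (Real.sinh ((1 - l) * d) * Real.cosh (l * d) ^ 2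
        + 2 * Real.cosh ((1 - l) * d) * Real.sinh (l * d) * Real.cosh (l * d)
        + Real.sinh ((1 - l) * d) * Real.sinh (l * d) ^ 2)
        ≤ Real.sinh ((1 - l) * d) * u + Real.sinh (l * d) * w) :
    2 * E * Real.cosh d ≤ w := by
  set G : ℝ → ℝ := fun l => Real.sinh ((1 - l) * d) * u + Real.sinh (l * d) * w
      - E * (Real.sinh ((1 - l) * d) * Real.cosh (l * d) ^ 2
        + 2 * Real.cosh ((1 - l) * d) * Real.sinh (l * d) * Real.cosh (l * d)
        + Real.sinh ((1 - l) * d) * Real.sinh (l * d) ^ 2) with hG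
  have hcont : Continuous G := by
    rw [hG]; fun_prop
  have htend : Tendsto G (nhdsWithin 1 (Set.Iio 1)) (nhds (G 1)) :=
    (hcont.tendsto 1).mono_left nhdsWithin_le_nhds
  have hev : ∀ᶠ l in nhdsWithin (1 : ℝ) (Set.Iio 1), 0 ≤ G l := by
    have h2 : Set.Ioi (0 : ℝ) ∈ nhdsWithin (1 : ℝ) (Set.Iio 1) :=
      mem_nhdsWithin_of_mem_nhds (Ioi_mem_nhds one_pos)
    filter_upwards [self_mem_nhdsWithin, h2] with l hl1 hl2
    have := h l (le_of_lt hl2) hl1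
    rw [hG]
    simp only
    linarith
  haveI : (nhdsWithin (1:ℝ) (Set.Iio 1)).NeBot := nhdsLT_neBot 1
  have hG1 : 0 ≤ G 1 := ge_of_tendsto htend hev
  have hcompute : G 1 = Real.sinh d * w - E * (2 * Real.cosh d * Real.sinh d) := by
    rw [hG]
    simp only
    have e1 : (1 - (1:ℝ)) * d = 0 := by ring
    rw [e1, one_mul, Real.sinh_zero, Real.cosh_zero]
    ring
  rw [hcompute] at hG1
  have hsd : 0 < Real.sinh d := Real.sinh_pos_iff.mpr hd
  nlinarith [hG1, hsd]

set_option maxHeartbeats 1000000 in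
/-- If `a` is the metric midpoint of `z` and `w`, then in hyperboloid
coordinates `w = 2 cosh(dist z a) • a - z`. -/
lemma double_coords (z a w : ℍ) (h1 : dist z a = dist a w) (h2 : dist z w = 2 * dist z a) :
    tc w = 2 * Real.cosh (dist z a) * tc a - tc z ∧
    sc w = 2 * Real.cosh (dist z a) * sc a - sc z ∧
    rc w = 2 * Real.cosh (dist z a) * rc a - rc z := by
  set D := Real.cosh (dist z a) with hD
  have hQza : Q z a = D := (cosh_dist_eq_Q z a).symm
  have hQaw : Q a w = D := by rw [← cosh_dist_eq_Q, ← h1]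
  have hQzw : Q z w = 2 * D ^ 2 - 1 := by
    rw [← cosh_dist_eq_Q, h2, Real.cosh_two_mul, Real.sinh_sq, hD]
    ring
  set WT := tc w - 2 * D * tc a + tc z with hWT
  set WS := sc w - 2 * D * sc a + sc z with hWS
  set WR := rc w - 2 * D * rc a + rc z with hWR
  have hQzz := Q_self z
  have hQaa := Q_self a
  have hQww := Q_self w
  have hWW : WT ^ 2 - WS ^ 2 - WR ^ 2 = 0 := by
    have expand : WT ^ 2 - WS ^ 2 - WR ^ 2
        = Q w w + 4 * D ^ 2 * Q a a + Q z z - 4 * D * Q a w + 2 * Q z w - 4 * D * Q z a := by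
      rw [hWT, hWS, hWR]; unfold Q; ring
    rw [expand, hQww, hQaa, hQzz, hQaw, hQzw, hQza]; ring
  have hWA : WT * tc a = WS * sc a + WR * rc a := by
    have expand : WT * tc a - WS * sc a - WR * rc a
        = Q a w - 2 * D * Q a a + Q z a := by
      rw [hWT, hWS, hWR]; unfold Q; ring
    have : WT * tc a - WS * sc a - WR * rc a = 0 := by
      rw [expand, hQaw, hQaa, hQza]; ring
    linarith
  have hA : tc a ^ 2 - sc a ^ 2 - rc a ^ 2 = 1 := by
    have h := Q_self a; unfold Q at h; linarith
  have hsq : (WT * tc a) ^ 2 = (WS * sc a + WR * rc a) ^ 2 := by rw [hWA]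
  have hzero : WS ^ 2 + WR ^ 2 + (WS * rc a - WR * sc a) ^ 2 = 0 := by
    linear_combination hsq - WT ^ 2 * hA - (1 + sc a ^ 2 + rc a ^ 2) * hWW
  have hWS0 : WS = 0 := by
    have h1 : WS ^ 2 ≤ 0 := by nlinarith [sq_nonneg WR, sq_nonneg (WS * rc a - WR * sc a)]
    exact pow_eq_zero_iff two_ne_zero |>.mp (le_antisymm h1 (sq_nonneg WS))
  have hWR0 : WR = 0 := by
    have h1 : WR ^ 2 ≤ 0 := by nlinarith [sq_nonneg WS, sq_nonneg (WS * rc a - WR * sc a)]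
    exact pow_eq_zero_iff two_ne_zero |>.mp (le_antisymm h1 (sq_nonneg WR))
  have hWT0 : WT = 0 := by
    have h : WT ^ 2 = 0 := by rw [hWS0, hWR0] at hWW; linarith
    exact pow_eq_zero_iff (two_ne_zero) |>.mp h
  refine ⟨by rw [hWT] at hWT0; linarith, by rw [hWS] at hWS0; linarith,
    by rw [hWR] at hWR0; linarith⟩

end HypAux

open HypAux

set_option maxHeartbeats 1000000 in
/-- Case (ii) of the Appendix Proposition in the hyperbolic plane: if `a` is the midpoint of
`x` and `x'`, `b` is the midpoint of `y` and `y'`, `dist x a = dist y b`, and the distance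
`dist a b` is minimal among distances between corresponding convex combinations
`(1-λ)x + λa` and `(1-λ)y + λb`, then `dist x' y' ≤ dist x y`. -/
theorem hyperbolic_appendix_case_ii
    (x x' y y' a b : UpperHalfPlane)
    (ha1 : dist x a = dist a x') (ha2 : dist a x' = (1 / 2) * dist x x')
    (hb1 : dist y b = dist b y') (hb2 : dist b y' = (1 / 2) * dist y y')
    (heq : dist x a = dist y b)
    (hmin : ∀ lam ∈ Set.Icc (0 : ℝ) 1, ∀ xl yl : UpperHalfPlane,
      dist x xl = lam * dist x a → dist xl a = (1 - lam) * dist x a →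
      dist y yl = lam * dist y b → dist yl b = (1 - lam) * dist y b →
      dist a b ≤ dist xl yl) :
    dist x' y' ≤ dist x y := by
  rcases eq_or_lt_of_le (dist_nonneg : (0:ℝ) ≤ dist x a) with hd0 | hd
  · -- degenerate case : x = a = x', y = b = y'
    have hxa : x = a := dist_eq_zero.mp hd0.symm
    have hax' : a = x' := dist_eq_zero.mp (by rw [← ha1, ← hd0])
    have hyb : y = b := dist_eq_zero.mp (by rw [← heq, ← hd0])
    have hby' : b = y' := dist_eq_zero.mp (by rw [← hb1, ← heq, ← hd0])
    rw [← hax', ← hxa, ← hby', ← hyb]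
  · have hdyb_pos : 0 < dist y b := by rw [← heq]; exact hd
    have hsd : 0 < Real.sinh (dist x a) := Real.sinh_pos_iff.mpr hd
    -- key inequality
    have key1 : 2 * Q a b * Real.cosh (dist x a) ≤ Q x b + Q a y := by
      apply limit_lemma (dist x a) (Q x y) (Q x b + Q a y) (Q a b) hd
      intro l hl0 hl1
      obtain ⟨xl, hx1, hx2, hxQ⟩ := exists_geo x a l hl0 hl1.le hd
      obtain ⟨yl, hy1, hy2, hyQ⟩ := exists_geo y b l hl0 hl1.le hdyb_pos
      simp only [← heq] at hyQ
      have hmm := hmin l ⟨hl0, hl1.le⟩ xl yl hx1 hx2 hy1 hy2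
      have hcosh : Real.cosh (dist a b) ≤ Real.cosh (dist xl yl) := by
        apply Real.cosh_le_cosh.mpr
        rw [abs_of_nonneg dist_nonneg, abs_of_nonneg dist_nonneg]
        exact hmm
      rw [cosh_dist_eq_Q a b, cosh_dist_eq_Q xl yl] at hcosh
      set sp := Real.sinh ((1 - l) * dist x a) with hsp
      set sq := Real.sinh (l * dist x a) with hsq
      set cp := Real.cosh ((1 - l) * dist x a) with hcp
      set cq := Real.cosh (l * dist x a) with hcq
      have hQxlyl : Q xl yl = (sp ^ 2 * Q x y + sp * sq * (Q x b + Q a y)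
          + sq ^ 2 * Q a b) / Real.sinh (dist x a) ^ 2 := by
        rw [hxQ yl, Q_comm x yl, Q_comm a yl, hyQ x, hyQ a,
          Q_comm y x, Q_comm b x, Q_comm y a, Q_comm b a]
        field_simp [ne_of_gt hsd]
        ring
      rw [hQxlyl] at hcosh
      have hineq : Q a b * Real.sinh (dist x a) ^ 2
          ≤ sp ^ 2 * Q x y + sp * sq * (Q x b + Q a y) + sq ^ 2 * Q a b := by
        rw [le_div_iff₀ (by positivity)] at hcosh
        linarith
      have hsdadd : Real.sinh (dist x a) = sp * cq + cp * sq := by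
        rw [hsp, hsq, hcp, hcq, ← Real.sinh_add]; ring_nf
      have hcp2 : cp ^ 2 = 1 + sp ^ 2 := by rw [hcp, hsp, Real.cosh_sq']
      have hsp_pos : 0 < sp := Real.sinh_pos_iff.mpr (by nlinarith)
      have hmul : 0 ≤ sp * (sp * Q x y + sq * (Q x b + Q a y)
          - Q a b * (sp * cq ^ 2 + 2 * cp * sq * cq + sp * sq ^ 2)) := by
        have hexp : sp * (sp * Q x y + sq * (Q x b + Q a y)
            - Q a b * (sp * cq ^ 2 + 2 * cp * sq * cq + sp * sq ^ 2))
            = (sp ^ 2 * Q x y + sp * sq * (Q x b + Q a y) + sq ^ 2 * Q a b)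
              - Q a b * Real.sinh (dist x a) ^ 2 := by
          rw [hsdadd]
          linear_combination (Q a b * sq ^ 2) * hcp2
        rw [hexp]
        linarith
      by_contra hcon
      push_neg at hcon
      nlinarith [hmul, mul_pos hsp_pos (sub_pos.mpr hcon)]
    -- antipodal point coordinates
    have hxx' : dist x x' = 2 * dist x a := by rw [ha1]; linarith
    have hyy' : dist y y' = 2 * dist y b := by rw [hb1]; linarith
    obtain ⟨hxt, hxs, hxr⟩ := double_coords x a x' ha1 hxx'
    obtain ⟨hyt, hys, hyr⟩ := double_coords y b y' hb1 hyy'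
    rw [← heq] at hyt hys hyr
    -- final computation
    have hfinal : Real.cosh (dist x' y')
        = 4 * Real.cosh (dist x a) ^ 2 * Q a b
          - 2 * Real.cosh (dist x a) * (Q x b + Q a y) + Q x y := by
      rw [cosh_dist_eq_Q]
      unfold Q
      rw [hxt, hxs, hxr, hyt, hys, hyr]
      ring
    have hD1 : (1:ℝ) ≤ Real.cosh (dist x a) := Real.one_le_cosh (dist x a)
    have hle : Real.cosh (dist x' y') ≤ Real.cosh (dist x y) := by
      rw [hfinal, cosh_dist_eq_Q x y]
      nlinarith [key1, hD1, mul_nonneg (by linarith : (0:ℝ) ≤ 2 * Real.cosh (dist x a))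
        (sub_nonneg.mpr key1)]
    have h := Real.cosh_le_cosh.mp hle
    rw [abs_of_nonneg dist_nonneg, abs_of_nonneg dist_nonneg] at h
    exact h
end
end

section
/- Let x, x′, y, y′, a, b be points of the hyperbolic plane ℍ such that a is the midpoint of x and x′ (dist x a = dist a x′ = (1/2)·dist x x′), b is the midpoint of y and y′, and dist x a < dist y b. Suppose that for every λ ∈ [0,1] and all points x_λ, y_λ ∈ ℍ with dist x x_λ = λ·dist x a, dist x_λ a = (1 − λ)·dist x a, dist y y_λ = λ·dist y b, and dist y_λ b = (1 − λ)·dist y b, one has dist a b ≤ dist x_λ y_λ. Assume additionally that cosh(dist b y)·cosh(dist b a) ≥ cosh(dist y a) or cosh(dist a x)·cosh(dist a b) ≤ cosh(dist x b) (i.e., the angle γ at b between [b,y] and [b,a] satisfies γ ≤ π/2, or the angle γ′ at a between [a,x] and [a,b] satisfies γ′ ≥ π/2). Then dist x′ y′ ≤ dist x y. -/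
open UpperHalfPlane Real Set

namespace HypAppx

noncomputable section


lemma sinh_le_mul_cosh {t : ℝ} (ht : 0 ≤ t) : Real.sinh t ≤ t * Real.cosh t := by
  have hmono : MonotoneOn (fun t : ℝ => t * Real.cosh t - Real.sinh t) (Ici (0:ℝ)) := by
    apply monotoneOn_of_deriv_nonneg (convex_Ici 0)
    · fun_prop
    · fun_prop
    · intro s hs
      rw [interior_Ici] at hs
      have hd : HasDerivAt (fun t : ℝ => t * Real.cosh t - Real.sinh t)
          (1 * Real.cosh s + s * Real.sinh s - Real.cosh s) s :=
        ((hasDerivAt_id s).mul (Real.hasDerivAt_cosh s)).sub (Real.hasDerivAt_sinh s)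
      rw [hd.deriv]
      have : 0 ≤ s * Real.sinh s := mul_nonneg hs.le (Real.sinh_nonneg_iff.mpr hs.le)
      linarith
  have := hmono (self_mem_Ici) (mem_Ici.mpr ht) ht
  simp only [Real.sinh_zero, Real.cosh_zero, mul_one, zero_mul, sub_zero, zero_sub] at this
  linarith

lemma mul_sinh_mono {u v : ℝ} (hu : 0 ≤ u) (huv : u ≤ v) :
    v * Real.sinh u ≤ u * Real.sinh v := by
  have hmono : MonotoneOn (fun v : ℝ => u * Real.sinh v - v * Real.sinh u) (Ici u) := by
    apply monotoneOn_of_deriv_nonneg (convex_Ici u)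
    · fun_prop
    · fun_prop
    · intro s hs
      rw [interior_Ici] at hs
      have hd : HasDerivAt (fun v : ℝ => u * Real.sinh v - v * Real.sinh u)
          (u * Real.cosh s - 1 * Real.sinh u) s :=
        ((Real.hasDerivAt_sinh s).const_mul u).sub ((hasDerivAt_id s).mul_const (Real.sinh u))
      rw [hd.deriv]
      have h1 : Real.cosh u ≤ Real.cosh s := by
        rw [Real.cosh_le_cosh, abs_of_nonneg hu, abs_of_nonneg (hu.trans hs.le)]
        exact hs.le
      have h2 : Real.sinh u ≤ u * Real.cosh u := sinh_le_mul_cosh hu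
      have h3 : u * Real.cosh u ≤ u * Real.cosh s := by
        exact mul_le_mul_of_nonneg_left h1 hu
      linarith
  have := hmono (self_mem_Ici) (mem_Ici.mpr huv) huv
  simp only at this
  nlinarith

lemma key_compare {p q : ℝ} (hp : 0 ≤ p) (hpq : p ≤ q) :
    p * Real.cosh p * Real.sinh q ≤ q * Real.sinh p * Real.cosh q := by
  have h := mul_sinh_mono (u := q - p) (v := q + p) (by linarith) (by linarith)
  have e1 : Real.sinh (q - p) = Real.sinh q * Real.cosh p - Real.cosh q * Real.sinh p :=
    Real.sinh_sub q p
  have e2 : Real.sinh (q + p) = Real.sinh q * Real.cosh p + Real.cosh q * Real.sinh p :=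
    Real.sinh_add q p
  rw [e1, e2] at h
  nlinarith [h]

lemma deriv_nonneg_of_min {f : ℝ → ℝ} {f' : ℝ}
    (hd : HasDerivAt f f' 0) (hmin : ∀ s ∈ Icc (0:ℝ) 1, f 0 ≤ f s) : 0 ≤ f' := by
  have h := hasDerivAt_iff_tendsto_slope.mp hd
  have h2 : Filter.Tendsto (slope f 0) (nhdsWithin 0 (Ioi 0)) (nhds f') :=
    h.mono_left (nhdsWithin_mono 0 (fun y hy => ne_of_gt hy))
  refine ge_of_tendsto h2 ?_
  filter_upwards [Ioc_mem_nhdsGT_of_mem (Set.left_mem_Ico.mpr zero_lt_one)] with s hs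
  rw [slope_def_field]
  have hf := hmin s ⟨hs.1.le, hs.2⟩
  have : (0:ℝ) < s - 0 := by simpa using hs.1
  apply div_nonneg <;> simp <;> linarith [hf]



def Lf (z w : ℍ) (s : ℝ) : ℝ :=
  w.im * Real.sinh (s * dist z w) /
    (w.im * Real.sinh (s * dist z w) + z.im * Real.sinh ((1 - s) * dist z w))

def grE (z w : ℍ) (s : ℝ) : ℝ := w.re + Lf z w s * (z.re - w.re)

def giE (z w : ℍ) (s : ℝ) : ℝ :=
  w.im * Real.cosh (s * dist z w) +
    Lf z w s * (z.im * Real.cosh ((1 - s) * dist z w) - w.im * Real.cosh (s * dist z w))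

lemma geo_exists (z w : ℍ) {s : ℝ} (h0 : 0 ≤ s) (h1 : s ≤ 1) :
    ∃ m : ℍ, m.re = grE z w s ∧ m.im = giE z w s ∧
      dist w m = s * dist z w ∧ dist m z = (1 - s) * dist z w := by
  set D := dist z w with hD
  rcases eq_or_lt_of_le (dist_nonneg : 0 ≤ D) with hD0 | hD0
  · -- degenerate case : z = w
    have hzw : z = w := dist_eq_zero.mp hD0.symm
    refine ⟨w, ?_, ?_, ?_, ?_⟩
    · simp [grE, Lf, ← hD0]
    · simp [giE, Lf, ← hD0]
    · rw [show D = 0 from hD0.symm, mul_zero, dist_self]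
    · rw [show D = 0 from hD0.symm, mul_zero, hzw, dist_self]
  · -- main case
    have hzim := z.im_pos
    have hwim := w.im_pos
    set RW := w.im * Real.sinh (s * D) with hRW
    set RZ := z.im * Real.sinh ((1 - s) * D) with hRZ
    have hsD : 0 ≤ s * D := mul_nonneg h0 hD0.le
    have hsD' : 0 ≤ (1 - s) * D := mul_nonneg (by linarith) hD0.le
    have hRW0 : 0 ≤ RW := mul_nonneg hwim.le (Real.sinh_nonneg_iff.mpr hsD)
    have hRZ0 : 0 ≤ RZ := mul_nonneg hzim.le (Real.sinh_nonneg_iff.mpr hsD')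
    have hsum : 0 < RW + RZ := by
      rcases eq_or_lt_of_le hsD with h | h
      · have : (1 - s) * D = D := by nlinarith
        have : 0 < RZ := mul_pos hzim (Real.sinh_pos_iff.mpr (by rw [this]; exact hD0))
        linarith
      · have : 0 < RW := mul_pos hwim (Real.sinh_pos_iff.mpr h)
        linarith
    -- centers
    set cW : ℍ := w.center (s * D) with hcW
    set cZ : ℍ := z.center ((1 - s) * D) with hcZ
    -- distance between centers
    have hcosh_add : Real.cosh (s * D) * Real.cosh ((1 - s) * D)
        + Real.sinh (s * D) * Real.sinh ((1 - s) * D) = Real.cosh D := by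
      rw [← Real.cosh_add]; ring_nf
    have hcd : Real.cosh D = ((z.re - w.re)^2 + z.im^2 + w.im^2) / (2 * z.im * w.im) :=
      cosh_dist' z w
    have hccsq : dist (cW : ℂ) (cZ : ℂ) ^ 2 = (RW + RZ) ^ 2 := by
      rw [Complex.dist_eq_re_im, Real.sq_sqrt (by positivity)]
      simp only [hcW, hcZ, coe_re, coe_im, center_re, center_im]
      have e1 := Real.cosh_sq_sub_sinh_sq (s * D)
      have e2 := Real.cosh_sq_sub_sinh_sq ((1 - s) * D)
      have hcd' : (z.re - w.re)^2 + z.im^2 + w.im^2 = 2 * z.im * w.im * Real.cosh D := by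
        rw [hcd]; field_simp
      rw [hRW, hRZ]
      linear_combination w.im^2 * e1 + z.im^2 * e2 - 2 * w.im * z.im * hcosh_add + hcd'
    have hcc : dist (cW : ℂ) (cZ : ℂ) = RW + RZ := by
      rw [← Real.sqrt_sq (dist_nonneg), hccsq, Real.sqrt_sq hsum.le]
    -- the geodesic point as a complex number
    set lam := RW / (RW + RZ) with hlam
    set mC : ℂ := (cW : ℂ) + lam • ((cZ : ℂ) - (cW : ℂ)) with hmC
    have hlam0 : 0 ≤ lam := div_nonneg hRW0 hsum.le
    have hlam1 : lam ≤ 1 := (div_le_one hsum).mpr (by linarith)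
    have hm1 : dist mC (cW : ℂ) = RW := by
      rw [dist_eq_norm, hmC]
      have : (cW : ℂ) + lam • ((cZ : ℂ) - (cW : ℂ)) - (cW : ℂ) = lam • ((cZ : ℂ) - (cW : ℂ)) := by
        ring_nf
      rw [this, norm_smul, Real.norm_eq_abs, abs_of_nonneg hlam0, ← dist_eq_norm, dist_comm,
        hcc, hlam, div_mul_cancel₀ _ hsum.ne']
    have hm2 : dist mC (cZ : ℂ) = RZ := by
      rw [dist_eq_norm, hmC]
      have : (cW : ℂ) + lam • ((cZ : ℂ) - (cW : ℂ)) - (cZ : ℂ)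
          = (1 - lam) • ((cW : ℂ) - (cZ : ℂ)) := by
        rw [Complex.real_smul, Complex.real_smul]
        push_cast
        ring
      rw [this, norm_smul, Real.norm_eq_abs, abs_of_nonneg (by linarith), ← dist_eq_norm,
        hcc, hlam]
      field_simp
      ring
    have him : 0 < mC.im := im_pos_of_dist_center_le (le_of_eq hm1)
    refine ⟨mk mC him, ?_, ?_, ?_, ?_⟩
    · simp only [mk_re, hmC, Complex.add_re, Complex.smul_re, Complex.sub_re, hcW, hcZ,
        coe_re, center_re]
      simp [grE, Lf, hlam, hRW, hRZ, hD]
    · simp only [mk_im, hmC, Complex.add_im, Complex.smul_im, Complex.sub_im, hcW, hcZ,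
        coe_im, center_im]
      simp [giE, Lf, hlam, hRW, hRZ, hD]
    · have := (dist_eq_iff_dist_coe_center_eq (z := mk mC him) (w := w) (r := s * D)).mpr
      rw [dist_comm]
      exact this (by rwa [coe_mk])
    · exact (dist_eq_iff_dist_coe_center_eq (z := mk mC him) (w := z) (r := (1 - s) * D)).mpr
        (by rwa [coe_mk])



lemma dist_eq_of_cosh_eq {a b : ℍ} {r : ℝ} (hr : 0 ≤ r)
    (h : Real.cosh (dist a b) = Real.cosh r) : dist a b = r := by
  have h1 := Real.cosh_le_cosh.mp h.le
  have h2 := Real.cosh_le_cosh.mp h.ge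
  rw [abs_of_nonneg dist_nonneg, abs_of_nonneg hr] at h1 h2
  linarith

def reflRe (a x : ℍ) : ℝ := a.re + a.im ^ 2 * (a.re - x.re) / ((x.re - a.re) ^ 2 + x.im ^ 2)

def reflIm (a x : ℍ) : ℝ := a.im ^ 2 * x.im / ((x.re - a.re) ^ 2 + x.im ^ 2)

lemma reflIm_pos (a x : ℍ) : 0 < reflIm a x := by
  have hx := x.im_pos
  have ha := a.im_pos
  have hN : 0 < (x.re - a.re) ^ 2 + x.im ^ 2 := by positivity
  unfold reflIm; positivity

def refl' (a x : ℍ) : ℍ := mk ⟨reflRe a x, reflIm a x⟩ (reflIm_pos a x)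

lemma refl'_re (a x : ℍ) : (refl' a x).re = reflRe a x := rfl
lemma refl'_im (a x : ℍ) : (refl' a x).im = reflIm a x := rfl

lemma cosh_dist_refl' (a x : ℍ) :
    Real.cosh (dist a (refl' a x)) = Real.cosh (dist a x) := by
  have hx := x.im_pos
  have ha := a.im_pos
  have hN : 0 < (x.re - a.re) ^ 2 + x.im ^ 2 := by positivity
  rw [cosh_dist', cosh_dist', refl'_re, refl'_im, reflRe, reflIm]
  field_simp
  ring

lemma cosh_dist_self_refl' (a x : ℍ) :
    Real.cosh (dist x (refl' a x)) = 2 * Real.cosh (dist x a) ^ 2 - 1 := by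
  have hx := x.im_pos
  have ha := a.im_pos
  have hN : 0 < (x.re - a.re) ^ 2 + x.im ^ 2 := by positivity
  rw [cosh_dist', cosh_dist', refl'_re, refl'_im, reflRe, reflIm]
  field_simp
  ring

lemma dist_refl' (a x : ℍ) : dist a (refl' a x) = dist a x :=
  dist_eq_of_cosh_eq dist_nonneg (cosh_dist_refl' a x)

lemma dist_self_refl' (a x : ℍ) : dist x (refl' a x) = 2 * dist x a := by
  apply dist_eq_of_cosh_eq (by positivity)
  rw [cosh_dist_self_refl' a x, Real.cosh_two_mul, Real.sinh_sq]
  ring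

lemma complex_dist_sq {z w : ℂ} {r : ℝ} (h : dist z w = r) :
    (z.re - w.re) ^ 2 + (z.im - w.im) ^ 2 = r ^ 2 := by
  rw [← h, Complex.dist_eq_re_im, Real.sq_sqrt (by positivity)]

lemma circle_tangent_unique {a1 a2 x1 x2 u1 u2 v1 v2 RA RX : ℝ}
    (hA : (u1 - a1) ^ 2 + (u2 - a2) ^ 2 = RA ^ 2)
    (hX : (u1 - x1) ^ 2 + (u2 - x2) ^ 2 = RX ^ 2)
    (hA' : (v1 - a1) ^ 2 + (v2 - a2) ^ 2 = RA ^ 2)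
    (hX' : (v1 - x1) ^ 2 + (v2 - x2) ^ 2 = RX ^ 2)
    (hC : (x1 - a1) ^ 2 + (x2 - a2) ^ 2 = (RX - RA) ^ 2) (hD : 0 < RX - RA) :
    u1 = v1 ∧ u2 = v2 := by
  have hDne : RX - RA ≠ 0 := hD.ne'
  have key : ∀ w1 w2 : ℝ, (w1 - x1) ^ 2 + (w2 - x2) ^ 2 = RX ^ 2 →
      (w1 - a1) ^ 2 + (w2 - a2) ^ 2 = RA ^ 2 →
      (RX - RA) * w1 = (RX - RA) * x1 + RX * (a1 - x1) ∧
        (RX - RA) * w2 = (RX - RA) * x2 + RX * (a2 - x2) := by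
    intro w1 w2 hXw hAw
    have hz : ((RX - RA) * w1 - ((RX - RA) * x1 + RX * (a1 - x1))) ^ 2
        + ((RX - RA) * w2 - ((RX - RA) * x2 + RX * (a2 - x2))) ^ 2 = 0 := by
      linear_combination ((RX - RA) * ((RX - RA) - RX)) * hXw
        + ((RX - RA) * RX) * hAw + (RX * (RX - (RX - RA))) * hC
    have q1 : ((RX - RA) * w1 - ((RX - RA) * x1 + RX * (a1 - x1))) ^ 2 = 0 := by
      linarith [sq_nonneg ((RX - RA) * w1 - ((RX - RA) * x1 + RX * (a1 - x1))),
        sq_nonneg ((RX - RA) * w2 - ((RX - RA) * x2 + RX * (a2 - x2)))]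
    have q2 : ((RX - RA) * w2 - ((RX - RA) * x2 + RX * (a2 - x2))) ^ 2 = 0 := by
      linarith [sq_nonneg ((RX - RA) * w1 - ((RX - RA) * x1 + RX * (a1 - x1))),
        sq_nonneg ((RX - RA) * w2 - ((RX - RA) * x2 + RX * (a2 - x2)))]
    constructor
    · linarith [sub_eq_zero.mp (sq_eq_zero_iff.mp q1)]
    · linarith [sub_eq_zero.mp (sq_eq_zero_iff.mp q2)]
  obtain ⟨e1, e2⟩ := key u1 u2 hX hA
  obtain ⟨f1, f2⟩ := key v1 v2 hX' hA'
  exact ⟨mul_left_cancel₀ hDne (e1.trans f1.symm), mul_left_cancel₀ hDne (e2.trans f2.symm)⟩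

lemma eq_refl' (a x x' : ℍ) (h1 : dist a x' = dist x a) (h2 : dist x x' = 2 * dist x a) :
    x' = refl' a x := by
  set p := dist x a with hp
  rcases eq_or_lt_of_le (dist_nonneg : 0 ≤ p) with hp0 | hp0
  · -- p = 0 : x = a and x' = x
    have hxa : x = a := dist_eq_zero.mp hp0.symm
    have hx'x : x' = x := by
      have : dist x x' = 0 := by rw [h2, show p = 0 from hp0.symm, mul_zero]
      rw [dist_comm] at this
      exact dist_eq_zero.mp this
    rw [hx'x, hxa]
    apply UpperHalfPlane.ext
    apply Complex.ext
    · show a.re = reflRe a a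
      rw [reflRe]
      have : (a.re - a.re) ^ 2 + a.im ^ 2 = a.im ^ 2 := by ring
      rw [this]
      field_simp
      ring
    · show a.im = reflIm a a
      rw [reflIm]
      have : (a.re - a.re) ^ 2 + a.im ^ 2 = a.im ^ 2 := by ring
      rw [this]
      field_simp
  · -- p > 0
    have hx := x.im_pos
    have ha := a.im_pos
    have hsp : 0 < Real.sinh p := Real.sinh_pos_iff.mpr hp0
    have h2p : dist x x' = 2 * p := h2
    -- circle equations for x'
    have cA : ((x' : ℂ).re - (a.center p : ℂ).re) ^ 2 + ((x' : ℂ).im - (a.center p : ℂ).im) ^ 2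
        = (a.im * Real.sinh p) ^ 2 :=
      complex_dist_sq (dist_eq_iff_dist_coe_center_eq.mp
        (show dist x' a = p by rw [dist_comm]; exact h1))
    have cX : ((x' : ℂ).re - (x.center (2 * p) : ℂ).re) ^ 2
        + ((x' : ℂ).im - (x.center (2 * p) : ℂ).im) ^ 2
        = (x.im * Real.sinh (2 * p)) ^ 2 := by
      have h2x : dist x' x = 2 * p := by rw [dist_comm]; exact h2p
      exact complex_dist_sq (dist_eq_iff_dist_coe_center_eq.mp h2x)
    -- circle equations for refl' a x
    have rA : (((refl' a x) : ℂ).re - (a.center p : ℂ).re) ^ 2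
        + (((refl' a x) : ℂ).im - (a.center p : ℂ).im) ^ 2 = (a.im * Real.sinh p) ^ 2 := by
      have hd : dist (refl' a x) a = p := by rw [dist_comm, dist_refl', dist_comm]
      exact complex_dist_sq (dist_eq_iff_dist_coe_center_eq.mp hd)
    have rX : (((refl' a x) : ℂ).re - (x.center (2 * p) : ℂ).re) ^ 2
        + (((refl' a x) : ℂ).im - (x.center (2 * p) : ℂ).im) ^ 2
        = (x.im * Real.sinh (2 * p)) ^ 2 := by
      have hd : dist (refl' a x) x = 2 * p := by rw [dist_comm, dist_self_refl']
      exact complex_dist_sq (dist_eq_iff_dist_coe_center_eq.mp hd)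
    -- tangency of the two circles
    have hcp : Real.cosh p = ((x.re - a.re) ^ 2 + x.im ^ 2 + a.im ^ 2) / (2 * x.im * a.im) :=
      cosh_dist' x a
    have hcd' : (x.re - a.re) ^ 2 + x.im ^ 2 + a.im ^ 2 = 2 * x.im * a.im * Real.cosh p := by
      rw [hcp]; field_simp
    have hC : ((x.center (2 * p) : ℂ).re - (a.center p : ℂ).re) ^ 2
        + ((x.center (2 * p) : ℂ).im - (a.center p : ℂ).im) ^ 2
        = (x.im * Real.sinh (2 * p) - a.im * Real.sinh p) ^ 2 := by
      simp only [coe_re, coe_im, center_re, center_im]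
      rw [Real.sinh_two_mul, Real.cosh_two_mul]
      have e1 := Real.cosh_sq_sub_sinh_sq p
      linear_combination (x.im ^ 2 * (Real.cosh p ^ 2 - Real.sinh p ^ 2 + 1) + a.im ^ 2
        - 2 * x.im * a.im * Real.cosh p) * e1 + hcd'
    have hD : 0 < x.im * Real.sinh (2 * p) - a.im * Real.sinh p := by
      rw [Real.sinh_two_mul]
      have h2xc : 2 * x.im * Real.cosh p - a.im = ((x.re - a.re) ^ 2 + x.im ^ 2) / a.im := by
        rw [eq_div_iff ha.ne']
        linear_combination -hcd'
      have : x.im * (2 * Real.sinh p * Real.cosh p) - a.im * Real.sinh p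
          = Real.sinh p * (2 * x.im * Real.cosh p - a.im) := by ring
      rw [this, h2xc]
      have hN : 0 < (x.re - a.re) ^ 2 + x.im ^ 2 := by positivity
      positivity
    obtain ⟨e1, e2⟩ := circle_tangent_unique cA cX rA rX hC hD
    apply UpperHalfPlane.ext
    apply Complex.ext
    · exact e1
    · exact e2

set_option maxHeartbeats 1000000 in
lemma refl_three (a x w : ℍ) :
    Real.cosh (dist (refl' a x) w) + Real.cosh (dist x w)
      = 2 * Real.cosh (dist x a) * Real.cosh (dist a w) := by
  have hx := x.im_pos; have ha := a.im_pos; have hw := w.im_pos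
  have hNx : 0 < (x.re - a.re) ^ 2 + x.im ^ 2 := by positivity
  rw [cosh_dist', cosh_dist', cosh_dist', cosh_dist', refl'_re, refl'_im, reflRe, reflIm]
  field_simp
  ring

lemma cosh_dist_refl'_refl' (x a y b : ℍ) :
    Real.cosh (dist (refl' a x) (refl' b y)) = Real.cosh (dist x y)
      + 2 * Real.cosh (dist y b) * (Real.cosh (dist x a) * Real.cosh (dist a b) - Real.cosh (dist x b))
      + 2 * Real.cosh (dist x a) * (Real.cosh (dist y b) * Real.cosh (dist a b) - Real.cosh (dist y a)) := by
  have e1 : Real.cosh (dist (refl' a x) (refl' b y)) + Real.cosh (dist x (refl' b y))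
      = 2 * Real.cosh (dist x a) * Real.cosh (dist a (refl' b y)) := by
    have := refl_three a x (refl' b y)
    linarith [this]
  have e2 : Real.cosh (dist (refl' b y) x) + Real.cosh (dist y x)
      = 2 * Real.cosh (dist y b) * Real.cosh (dist b x) := refl_three b y x
  have e3 : Real.cosh (dist (refl' b y) a) + Real.cosh (dist y a)
      = 2 * Real.cosh (dist y b) * Real.cosh (dist b a) := refl_three b y a
  rw [show dist x (refl' b y) = dist (refl' b y) x from dist_comm _ _,
    show dist a (refl' b y) = dist (refl' b y) a from dist_comm _ _] at e1
  rw [show dist y x = dist x y from dist_comm _ _,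
    show dist b x = dist x b from dist_comm _ _] at e2
  rw [show dist b a = dist a b from dist_comm _ _] at e3
  linear_combination e1 - e2 + 2 * Real.cosh (dist x a) * e3

lemma hasDerivAt_Lf (x a : ℍ) (hp : 0 < dist x a) :
    HasDerivAt (Lf x a) (a.im * dist x a / (x.im * Real.sinh (dist x a))) 0 := by
  set p := dist x a with hpd
  have hx := x.im_pos; have ha := a.im_pos
  have hsp : 0 < Real.sinh p := Real.sinh_pos_iff.mpr hp
  have h1 : HasDerivAt (fun s : ℝ => s * p) p 0 := hasDerivAt_mul_const p
  have hn : HasDerivAt (fun s : ℝ => a.im * Real.sinh (s * p))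
      (a.im * (Real.cosh (0 * p) * p)) 0 := (h1.sinh).const_mul a.im
  have h2 : HasDerivAt (fun s : ℝ => (1 - s) * p) ((0 - 1) * p) 0 :=
    ((hasDerivAt_const (0:ℝ) (1:ℝ)).sub (hasDerivAt_id 0)).mul_const p
  have hm : HasDerivAt (fun s : ℝ => x.im * Real.sinh ((1 - s) * p))
      (x.im * (Real.cosh ((1 - 0) * p) * ((0 - 1) * p))) 0 := (h2.sinh).const_mul x.im
  have hden := hn.add hm
  have hdne : (fun s : ℝ => a.im * Real.sinh (s * p) + x.im * Real.sinh ((1 - s) * p)) 0 ≠ 0 := by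
    simp only [zero_mul, Real.sinh_zero, mul_zero, zero_add, sub_zero, one_mul]
    positivity
  have hL := hn.div hden hdne
  have : Lf x a = fun s => a.im * Real.sinh (s * p) /
      (a.im * Real.sinh (s * p) + x.im * Real.sinh ((1 - s) * p)) := rfl
  rw [this]
  refine hL.congr_deriv ?_
  simp only [Pi.add_apply, zero_mul, Real.sinh_zero, mul_zero, zero_add, sub_zero, one_mul, Real.cosh_zero,
    mul_one]
  field_simp

lemma geo_deriv_re (x a : ℍ) :
    HasDerivAt (grE x a)
      (a.im * dist x a * (x.re - a.re) / (x.im * Real.sinh (dist x a))) 0 := by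
  rcases eq_or_lt_of_le (dist_nonneg : 0 ≤ dist x a) with hp0 | hp0
  · have hfun : grE x a = fun _ => a.re := by
      funext s
      simp [grE, Lf, ← hp0]
    rw [hfun, ← hp0]
    simpa using hasDerivAt_const (0:ℝ) a.re
  · have := (hasDerivAt_Lf x a hp0).mul_const (x.re - a.re) |>.const_add a.re
    refine this.congr_deriv ?_
    ring

lemma Lf_zero (z w : ℍ) : Lf z w 0 = 0 := by simp [Lf]

lemma geo_deriv_im (x a : ℍ) :
    HasDerivAt (giE x a)
      (a.im * dist x a * (x.im * Real.cosh (dist x a) - a.im) / (x.im * Real.sinh (dist x a))) 0 := by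
  rcases eq_or_lt_of_le (dist_nonneg : 0 ≤ dist x a) with hp0 | hp0
  · have hfun : giE x a = fun _ => a.im := by
      funext s
      simp [giE, Lf, ← hp0]
    rw [hfun, ← hp0]
    simpa using hasDerivAt_const (0:ℝ) a.im
  · set p := dist x a with hpd
    have h1 : HasDerivAt (fun s : ℝ => s * p) p 0 := hasDerivAt_mul_const p
    have h2 : HasDerivAt (fun s : ℝ => (1 - s) * p) ((0 - 1) * p) 0 :=
      ((hasDerivAt_const (0:ℝ) (1:ℝ)).sub (hasDerivAt_id 0)).mul_const p
    have hc1 : HasDerivAt (fun s : ℝ => a.im * Real.cosh (s * p))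
        (a.im * (Real.sinh (0 * p) * p)) 0 := (h1.cosh).const_mul a.im
    have hbr : HasDerivAt
        (fun s : ℝ => x.im * Real.cosh ((1 - s) * p) - a.im * Real.cosh (s * p))
        (x.im * (Real.sinh ((1 - 0) * p) * ((0 - 1) * p)) - a.im * (Real.sinh (0 * p) * p)) 0 :=
      ((h2.cosh).const_mul x.im).sub ((h1.cosh).const_mul a.im)
    have hprod := ((hasDerivAt_Lf x a hp0).mul hbr).const_add (a.im * Real.cosh (0 * p))
    have hgi : giE x a = fun s => a.im * Real.cosh (s * p) +
        Lf x a s * (x.im * Real.cosh ((1 - s) * p) - a.im * Real.cosh (s * p)) := rfl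
    have hx := x.im_pos; have ha := a.im_pos
    have hsp : 0 < Real.sinh p := Real.sinh_pos_iff.mpr hp0
    have hsum : HasDerivAt (giE x a)
        (a.im * (Real.sinh (0 * p) * p) +
          (a.im * p / (x.im * Real.sinh p) *
              ((fun s : ℝ => x.im * Real.cosh ((1 - s) * p) - a.im * Real.cosh (s * p)) 0) +
            Lf x a 0 *
              (x.im * (Real.sinh ((1 - 0) * p) * ((0 - 1) * p)) -
                a.im * (Real.sinh (0 * p) * p)))) 0 := by
      rw [hgi]
      exact hc1.add ((hasDerivAt_Lf x a hp0).mul hbr)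
    convert hsum using 1
    simp only [zero_mul, Real.sinh_zero, mul_zero, zero_add, sub_zero, one_mul, Real.cosh_zero,
      mul_one, Lf_zero]
    field_simp
    ring


lemma dist_le_of_cosh_le {a b c d : ℍ} (h : Real.cosh (dist a b) ≤ Real.cosh (dist c d)) :
    dist a b ≤ dist c d := by
  have := Real.cosh_le_cosh.mp h
  rwa [abs_of_nonneg dist_nonneg, abs_of_nonneg dist_nonneg] at this

lemma grE_zero (z w : ℍ) : grE z w 0 = w.re := by simp [grE, Lf_zero]

lemma giE_zero (z w : ℍ) : giE z w 0 = w.im := by simp [giE, Lf_zero]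

end

end HypAppx

open HypAppx UpperHalfPlane Set

set_option maxHeartbeats 2000000

/-- Case (iii) of the Appendix Proposition in the hyperbolic plane: if `a` is the midpoint of
`x` and `x'`, `b` is the midpoint of `y` and `y'`, `dist x a < dist y b`, the distance
`dist a b` is minimal among distances between corresponding convex combinations
`(1-λ)x + λa` and `(1-λ)y + λb`, and moreover the angle `γ` at `b` between `[b,y]` and `[b,a]`
satisfies `γ ≤ π/2`, or the angle `γ'` at `a` between `[a,x]` and `[a,b]` satisfies
`γ' ≥ π/2` (both expressed via the hyperbolic law of cosines), then
`dist x' y' ≤ dist x y`. -/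
theorem hyperbolic_appendix_case_iii
    (x x' y y' a b : UpperHalfPlane)
    (ha1 : dist x a = dist a x') (ha2 : dist a x' = (1 / 2) * dist x x')
    (hb1 : dist y b = dist b y') (hb2 : dist b y' = (1 / 2) * dist y y')
    (hlt : dist x a < dist y b)
    (hmin : ∀ lam ∈ Set.Icc (0 : ℝ) 1, ∀ xl yl : UpperHalfPlane,
      dist x xl = lam * dist x a → dist xl a = (1 - lam) * dist x a →
      dist y yl = lam * dist y b → dist yl b = (1 - lam) * dist y b →
      dist a b ≤ dist xl yl)
    (hangle : Real.cosh (dist b y) * Real.cosh (dist b a) ≥ Real.cosh (dist y a) ∨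
      Real.cosh (dist a x) * Real.cosh (dist a b) ≤ Real.cosh (dist x b)) :
    dist x' y' ≤ dist x y := by
  have h2a : dist x x' = 2 * dist x a := by rw [ha1]; linarith
  have h2b : dist y y' = 2 * dist y b := by rw [hb1]; linarith
  have hx' : x' = refl' a x := eq_refl' a x x' ha1.symm h2a
  have hy' : y' = refl' b y := eq_refl' b y y' hb1.symm h2b
  set p := dist x a with hpdef
  set q := dist y b with hqdef
  have hp0 : 0 ≤ p := dist_nonneg
  have hq0 : 0 < q := lt_of_le_of_lt hp0 hlt
  set cp := Real.cosh p with hcp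
  set cq := Real.cosh q with hcq
  set cd := Real.cosh (dist a b) with hcd
  set Kx := cp * cd - Real.cosh (dist x b) with hKx
  set Ky := cq * cd - Real.cosh (dist y a) with hKy
  -- translate the angle hypothesis
  have hangle' : 0 ≤ Ky ∨ Kx ≤ 0 := by
    rcases hangle with h | h
    · left
      rw [dist_comm b y, dist_comm b a] at h
      rw [hKy, hcq, hcd]; linarith
    · right
      rw [dist_comm a x] at h
      rw [hKx, hcp, hcd]; linarith
  -- the comparison function along the geodesics
  set E : ℝ → ℝ := fun s =>
    ((grE x a s - grE y b s) ^ 2 + giE x a s ^ 2 + giE y b s ^ 2) /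
      (2 * giE x a s * giE y b s) with hE
  have hE0 : E 0 = Real.cosh (dist a b) := by
    rw [hE]
    simp only [grE_zero, giE_zero]
    rw [cosh_dist' a b]
  -- minimality of E at 0
  have hEmin : ∀ s ∈ Icc (0:ℝ) 1, E 0 ≤ E s := by
    intro s hs
    obtain ⟨xl, hxre, hxim, hxd1, hxd2⟩ := geo_exists x a hs.1 hs.2
    obtain ⟨yl, hyre, hyim, hyd1, hyd2⟩ := geo_exists y b hs.1 hs.2
    have hlam : (1 - s) ∈ Icc (0:ℝ) 1 := ⟨by linarith [hs.2], by linarith [hs.1]⟩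
    have hd := hmin (1 - s) hlam xl yl
      (by rw [dist_comm]; exact hxd2)
      (by rw [dist_comm] at hxd1; rw [hxd1]; ring)
      (by rw [dist_comm]; exact hyd2)
      (by rw [dist_comm] at hyd1; rw [hyd1]; ring)
    have hcosh : Real.cosh (dist a b) ≤ Real.cosh (dist xl yl) := by
      rw [Real.cosh_le_cosh, abs_of_nonneg dist_nonneg, abs_of_nonneg dist_nonneg]
      exact hd
    rw [hE0]
    rw [hE]
    calc Real.cosh (dist a b) ≤ Real.cosh (dist xl yl) := hcosh
    _ = _ := by rw [cosh_dist' xl yl, hxre, hxim, hyre, hyim]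
  -- derivative of E at 0
  have hx_ : (0:ℝ) < x.im := x.im_pos
  have hy_ : (0:ℝ) < y.im := y.im_pos
  have ha_ : (0:ℝ) < a.im := a.im_pos
  have hb_ : (0:ℝ) < b.im := b.im_pos
  have hsq : 0 < Real.sinh q := Real.sinh_pos_iff.mpr hq0
  have hNder := (((geo_deriv_re x a).sub (geo_deriv_re y b)).pow 2).add
    ((geo_deriv_im x a).pow 2) |>.add ((geo_deriv_im y b).pow 2)
  have hDder := ((geo_deriv_im x a).const_mul 2).mul (geo_deriv_im y b)
  have hDne : (fun s => 2 * giE x a s * giE y b s) 0 ≠ 0 := by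
    simp only [giE_zero]
    positivity
  have hfinal : (0:ℝ) ≤ -(p * Kx / Real.sinh p + q * Ky / Real.sinh q) := by
    refine le_of_le_of_eq (deriv_nonneg_of_min (hNder.div hDder hDne) hEmin) ?_
    simp only [Pi.sub_apply, Pi.add_apply, Pi.mul_apply, Pi.pow_apply, grE_zero, giE_zero]
    norm_num
    rw [hKx, hKy, hcp, hcq, hcd, hpdef, hqdef]
    rcases eq_or_lt_of_le (dist_nonneg : 0 ≤ dist x a) with hpz | hppos
    · obtain rfl : x = a := dist_eq_zero.mp hpz.symm
      have hsq' : Real.sinh (dist y b) ≠ 0 := by rw [← hqdef]; exact hsq.ne'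
      simp only [dist_self, Real.sinh_zero, Real.cosh_zero, mul_zero, zero_mul, zero_div,
        div_zero, sub_zero, zero_add, zero_sub, neg_zero, add_zero, mul_one, sub_self]
      rw [cosh_dist' y b, cosh_dist' x b, cosh_dist' y x]
      field_simp
      ring
    · have hsp' : Real.sinh (dist x a) ≠ 0 := (Real.sinh_pos_iff.mpr hppos).ne'
      have hsq' : Real.sinh (dist y b) ≠ 0 := by rw [← hqdef]; exact hsq.ne'
      rw [cosh_dist' x a, cosh_dist' y b, cosh_dist' a b, cosh_dist' x b, cosh_dist' y a]
      field_simp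
      ring
  have hS : p * Kx / Real.sinh p + q * Ky / Real.sinh q ≤ 0 := by linarith
  -- deduce cq * Kx + cp * Ky ≤ 0
  have hcppos : (0:ℝ) < cp := by rw [hcp]; exact Real.cosh_pos p
  have hcqpos : (0:ℝ) < cq := by rw [hcq]; exact Real.cosh_pos q
  have hsum : cq * Kx + cp * Ky ≤ 0 := by
    rcases eq_or_lt_of_le hp0 with hpz | hppos
    · -- p = 0 : x = a
      have hKx0 : Kx = 0 := by
        have hxa : x = a := dist_eq_zero.mp hpz.symm
        rw [hKx, hcp, ← hpz, Real.cosh_zero, hxa, ← hcd]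
        ring
      have hS2 : q * Ky / Real.sinh q ≤ 0 := by
        rw [← hpz] at hS
        simpa using hS
      have hKy0 : Ky ≤ 0 := by
        by_contra hc
        push_neg at hc
        have := div_pos (mul_pos hq0 hc) hsq
        linarith
      rw [hKx0]
      nlinarith
    · have hsp : 0 < Real.sinh p := Real.sinh_pos_iff.mpr hppos
      have hS' : p * Kx * Real.sinh q + q * Ky * Real.sinh p ≤ 0 := by
        have hmul := mul_le_mul_of_nonneg_right hS (le_of_lt (mul_pos hsp hsq))
        have hid : (p * Kx / Real.sinh p + q * Ky / Real.sinh q) *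
            (Real.sinh p * Real.sinh q) = p * Kx * Real.sinh q + q * Ky * Real.sinh p := by
          field_simp
        rw [hid] at hmul
        linarith
      have hKxneg : Kx ≤ 0 := by
        rcases hangle' with hKy | h
        · by_contra hc
          push_neg at hc
          nlinarith [hS', mul_pos (mul_pos hppos hc) hsq,
            mul_nonneg (mul_nonneg hq0.le hKy) hsp.le]
        · exact h
      have hM5 := key_compare hp0 hlt.le
      have h2 : Kx * (q * Real.sinh p * cq - p * cp * Real.sinh q) ≤ 0 :=
        mul_nonpos_of_nonpos_of_nonneg hKxneg (by rw [hcp, hcq]; linarith [hM5])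
      have h1 : cp * (p * Kx * Real.sinh q + q * Ky * Real.sinh p) ≤ 0 :=
        mul_nonpos_of_nonneg_of_nonpos hcppos.le hS'
      have h3 : q * Real.sinh p * (cq * Kx + cp * Ky) =
          cp * (p * Kx * Real.sinh q + q * Ky * Real.sinh p) +
            Kx * (q * Real.sinh p * cq - p * cp * Real.sinh q) := by ring
      by_contra hc
      push_neg at hc
      nlinarith [mul_pos (mul_pos hq0 hsp) hc, h1, h2, h3]
  -- conclude
  rw [hx', hy']
  apply dist_le_of_cosh_le
  rw [cosh_dist_refl'_refl' x a y b]
  rw [hKx, hKy, hcp, hcq, hcd, hpdef, hqdef] at hsum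
  linarith
end

section
/- Let H be a real Hilbert space and x, x′, y, y′ ∈ H. Set a = (x + x′)/2 and b = (y + y′)/2. If ‖a − b‖ ≤ ‖((1 − λ)·x + λ·a) − ((1 − λ)·y + λ·b)‖ for every λ ∈ [0,1], then ‖x′ − y′‖ ≤ ‖x − y‖. -/
open scoped RealInnerProductSpace


/-- In a real Hilbert space, if `a = (x + x')/2`, `b = (y + y')/2`, and
`‖a - b‖ ≤ ‖((1-λ)x + λa) - ((1-λ)y + λb)‖` for every `λ ∈ [0,1]`, then
`‖x' - y'‖ ≤ ‖x - y‖`. -/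
theorem hilbert_midpoint_min_implies_reflection_nonexpansive
    {H : Type*} [NormedAddCommGroup H] [InnerProductSpace ℝ H]
    (x x' y y' : H) (a b : H)
    (ha : a = (1 / 2 : ℝ) • (x + x')) (hb : b = (1 / 2 : ℝ) • (y + y'))
    (hmin : ∀ lam ∈ Set.Icc (0 : ℝ) 1,
      ‖a - b‖ ≤ ‖((1 - lam) • x + lam • a) - ((1 - lam) • y + lam • b)‖) :
    ‖x' - y'‖ ≤ ‖x - y‖ := by
  set u := x - y with hu
  set v := a - b with hv
  set w := u - v with hw
  -- the hypothesis in terms of v, w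
  have hmin' : ∀ t ∈ Set.Icc (0 : ℝ) 1, ‖v‖ ≤ ‖v + t • w‖ := by
    intro t ht
    have h := hmin (1 - t) ⟨by linarith [ht.2], by linarith [ht.1]⟩
    have hrw : ((1 - (1 - t)) • x + (1 - t) • a) - ((1 - (1 - t)) • y + (1 - t) • b)
        = v + t • w := by
      rw [hw, hu, hv]
      module
    rwa [hrw] at h
  -- key inequality: ⟪v, w⟫ ≥ 0
  have key : 0 ≤ ⟪v, w⟫ := by
    by_contra h
    push_neg at h
    have hwne : (0:ℝ) < ‖w‖^2 := by
      rcases eq_or_ne w 0 with h0 | h0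
      · simp [h0] at h
      · exact pow_pos (norm_pos_iff.mpr h0) 2
    set t := min 1 (-⟪v, w⟫ / ‖w‖^2) with ht
    have ht0 : 0 < t := lt_min one_pos (div_pos (by linarith) hwne)
    have ht1 : t ≤ 1 := min_le_left _ _
    have htw : t * ‖w‖^2 ≤ -⟪v, w⟫ := by
      have := min_le_right 1 (-⟪v, w⟫ / ‖w‖^2)
      calc t * ‖w‖^2 ≤ (-⟪v, w⟫ / ‖w‖^2) * ‖w‖^2 := by
            apply mul_le_mul_of_nonneg_right this (le_of_lt hwne)
        _ = -⟪v, w⟫ := div_mul_cancel₀ _ (ne_of_gt hwne)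
    have hle := hmin' t ⟨le_of_lt ht0, ht1⟩
    have hsq : ‖v‖^2 ≤ ‖v + t • w‖^2 := by
      apply pow_le_pow_left₀ (norm_nonneg _) hle
    rw [norm_add_sq_real, norm_smul, real_inner_smul_right, Real.norm_eq_abs,
      abs_of_pos ht0] at hsq
    nlinarith [hsq, ht0, htw, h]
  -- conclude
  have hxy : x' - y' = (2:ℝ) • v - u := by
    rw [hv, hu, ha, hb]; module
  have hsq : ‖x' - y'‖^2 ≤ ‖x - y‖^2 := by
    rw [hxy]
    rw [norm_sub_sq_real, norm_smul, real_inner_smul_left]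
    have hvw : ⟪v, w⟫ = ⟪v, u⟫ - ‖v‖^2 := by
      rw [hw, inner_sub_right, real_inner_self_eq_norm_sq]
    have hcomm : ⟪v, u⟫ = ⟪u, v⟫ := real_inner_comm _ _
    have hnu : ‖u‖ = ‖x - y‖ := by rw [hu]
    have h2 : ‖(2:ℝ)‖ = 2 := by norm_num
    rw [h2, ← hnu]
    nlinarith [key, hvw, hcomm, norm_nonneg v]
  nlinarith [hsq, norm_nonneg (x' - y'), norm_nonneg (x - y)]
end

section
/- Let n ∈ ℕ and let x, x′, p, q be unit vectors in EuclideanSpace ℝ (Fin (n+1)), with spherical distance d(u,v) = arccos ⟪u,v⟫. Suppose p is the midpoint of x and x′, i.e., d(x,p) = d(p,x′) = (1/2)·d(x,x′), with d(x,p) < π/2 and d(p,q) < π/2, and suppose cos(d(q,x)) ≤ cos(d(p,x))·cos(d(p,q)) (by the spherical law of cosines, the angle at p between the segments [p,x] and [p,q] is at least π/2). Then d(q,x′) ≤ d(q,x). -/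
open Real

/-- On the unit sphere, if `p` is the midpoint of `x` and `x'`, with `d(x,p) < π/2` and
`d(p,q) < π/2`, and the angle at `p` between the segments `[p,x]` and `[p,q]` is at least
`π/2` (expressed via the spherical law of cosines as
`cos d(q,x) ≤ cos d(p,x) * cos d(p,q)`), then `d(q,x') ≤ d(q,x)`. -/
theorem spherical_reflection_decreases_dist {n : ℕ}
    (x x' p q : EuclideanSpace ℝ (Fin (n + 1)))
    (hx : ‖x‖ = 1) (hx' : ‖x'‖ = 1) (hp : ‖p‖ = 1) (hq : ‖q‖ = 1)
    (hmid1 : sphericalDist x p = sphericalDist p x')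
    (hmid2 : sphericalDist p x' = (1 / 2) * sphericalDist x x')
    (hxp : sphericalDist x p < π / 2) (hpq : sphericalDist p q < π / 2)
    (hangle : Real.cos (sphericalDist q x) ≤
      Real.cos (sphericalDist p x) * Real.cos (sphericalDist p q)) :
    sphericalDist q x' ≤ sphericalDist q x := by
  have hb : ∀ u v : EuclideanSpace ℝ (Fin (n + 1)), ‖u‖ = 1 → ‖v‖ = 1 →
      -1 ≤ (inner ℝ u v : ℝ) ∧ (inner ℝ u v : ℝ) ≤ 1 := by
    intro u v hu hv
    have h := abs_real_inner_le_norm u v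
    rw [hu, hv, mul_one] at h
    exact abs_le.mp h
  obtain ⟨h1, h2⟩ := hb x p hx hp
  obtain ⟨h3, h4⟩ := hb p x' hp hx'
  obtain ⟨h5, h6⟩ := hb x x' hx hx'
  obtain ⟨h7, h8⟩ := hb q x hq hx
  obtain ⟨h9, h10⟩ := hb q x' hq hx'
  obtain ⟨h13, h14⟩ := hb p x hp hx
  obtain ⟨h11, h12⟩ := hb p q hp hq
  unfold sphericalDist at hmid1 hmid2 hangle ⊢
  set c : ℝ := inner ℝ x p with hc
  -- midpoint conditions in terms of inner products
  have e1 : (inner ℝ p x' : ℝ) = c := by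
    have := congrArg Real.cos hmid1
    rw [Real.cos_arccos h1 h2, Real.cos_arccos h3 h4] at this
    exact this.symm
  have e2 : (inner ℝ x x' : ℝ) = 2 * c ^ 2 - 1 := by
    have h2' : 2 * Real.arccos ((inner ℝ p x' : ℝ)) = Real.arccos ((inner ℝ x x' : ℝ)) := by
      rw [hmid2]; ring
    have := congrArg Real.cos h2'
    rw [Real.cos_two_mul, Real.cos_arccos h3 h4, Real.cos_arccos h5 h6, e1] at this
    linarith
  -- x' is the reflection of x through p
  have hx'eq : x' = (2 * c) • p - x := by
    have hinner : (inner ℝ x' ((2 * c) • p - x) : ℝ) = 1 := by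
      rw [inner_sub_right, real_inner_smul_right, real_inner_comm p x',
        real_inner_comm x x', e1]
      nlinarith [e2]
    have hwnorm : ‖(2 * c) • p - x‖ ^ 2 = 1 := by
      rw [norm_sub_sq_real, norm_smul, real_inner_smul_left, hp, hx]
      simp only [Real.norm_eq_abs, mul_one]
      rw [real_inner_comm x p, ← hc]
      rw [sq_abs]
      ring
    have hdiff : ‖x' - ((2 * c) • p - x)‖ ^ 2 = 0 := by
      rw [norm_sub_sq_real, hinner, hx', hwnorm]
      ring
    have := pow_eq_zero_iff (n := 2) (by norm_num) |>.mp hdiff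
    rw [norm_eq_zero, sub_eq_zero] at this
    exact this
  -- key inner product identity
  have eq : (inner ℝ q x' : ℝ) = 2 * c * (inner ℝ q p : ℝ) - (inner ℝ q x : ℝ) := by
    rw [hx'eq, inner_sub_right, real_inner_smul_right]
  -- angle hypothesis
  have hang : (inner ℝ q x : ℝ) ≤ c * (inner ℝ p q : ℝ) := by
    rw [Real.cos_arccos h7 h8, Real.cos_arccos h13 h14, Real.cos_arccos h11 h12] at hangle
    rw [real_inner_comm x p, ← hc] at hangle
    exact hangle
  have hle : (inner ℝ q x : ℝ) ≤ (inner ℝ q x' : ℝ) := by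
    rw [eq, real_inner_comm p q]
    linarith
  rw [Real.arccos_eq_pi_div_two_sub_arcsin, Real.arccos_eq_pi_div_two_sub_arcsin]
  have := Real.monotone_arcsin hle
  linarith
end
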